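/- arXiv:1903.00581 — 7 statements merged into one kernel-verified Lean document; each statement's English description precedes it below -/
import Mathlib

section
/- Let e be an edge of a cycle graph with positive edge weights and total edge weight C such that c(e) > C − c(e). Then the weighted shortest-path distance between the two endpoints of e equals C − c(e); in particular, no minimum-weight walk between the endpoints of e traverses e. -/
/-- A cycle graph: a finite connected simple graph with at least 3 vertices in
which every vertex has degree 2. -/
def IsCycleGraph {V : Type*} [Fintype V] (G : SimpleGraph V) [DecidableRel G.Adj] : Prop :=
  G.Connected ∧ 3 ≤ Fintype.card V ∧ ∀ v : V, G.degree v = 2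

/-- The cost of a walk: the sum of the weights of the edges it traverses,
counted with multiplicity. -/
def walkCost {V : Type*} {G : SimpleGraph V} (c : Sym2 V → ℝ) {u v : V}
    (p : G.Walk u v) : ℝ :=
  (p.edges.map c).sum

set_option linter.unusedSectionVars false

open SimpleGraph

section Aux
variable {V : Type*} [Fintype V] [DecidableEq V] (G : SimpleGraph V) [DecidableRel G.Adj]

/-- the other neighbor of `v` besides `u` -/
noncomputable def otherNbr (v u : V) : V :=
  if h : ((G.neighborFinset v).erase u).Nonempty then h.choose else u

lemma otherNbr_spec {v u : V} (hdeg : G.degree v = 2) (h : G.Adj v u) :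
    G.Adj v (otherNbr G v u) ∧ otherNbr G v u ≠ u ∧
      ∀ w, G.Adj v w → w = u ∨ w = otherNbr G v u := by
  have hu : u ∈ G.neighborFinset v := by simpa using h
  have hcard : ((G.neighborFinset v).erase u).card = 1 := by
    rw [Finset.card_erase_of_mem hu]
    rw [G.card_neighborFinset_eq_degree, hdeg]
  have hne : ((G.neighborFinset v).erase u).Nonempty := by
    rw [← Finset.card_pos, hcard]; omega
  have hmem := hne.choose_spec
  rw [otherNbr, dif_pos hne]
  refine ⟨?_, ?_, ?_⟩
  · have := Finset.mem_of_mem_erase hmem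
    simpa using this
  · exact Finset.ne_of_mem_erase hmem
  · intro w hw
    by_cases hwu : w = u
    · exact Or.inl hwu
    · right
      have hw' : w ∈ (G.neighborFinset v).erase u :=
        Finset.mem_erase.2 ⟨hwu, by simpa using hw⟩
      have := Finset.card_le_one.1 (le_of_eq hcard)
      exact this w hw' _ hmem

/-- the bi-infinite walk sequence started at (b, a) -/
noncomputable def cseq (b a : V) : ℕ → V × V
  | 0 => (b, a)
  | n + 1 => ((cseq b a n).2, otherNbr G (cseq b a n).2 (cseq b a n).1)

noncomputable def cf (b a : V) (n : ℕ) : V := (cseq G b a n).1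

lemma cf_zero (b a : V) : cf G b a 0 = b := rfl
lemma cf_one (b a : V) : cf G b a 1 = a := rfl
lemma cf_rec (b a : V) (n : ℕ) :
    cf G b a (n + 2) = otherNbr G (cf G b a (n + 1)) (cf G b a n) := rfl

/-- walk along cf from index k, n steps -/
noncomputable def cwalk (b a : V) (hadj : ∀ n, G.Adj (cf G b a n) (cf G b a (n+1))) :
    (n k : ℕ) → G.Walk (cf G b a k) (cf G b a (k + n))
  | 0, _ => SimpleGraph.Walk.nil
  | n + 1, k => (cwalk b a hadj n k).concat (hadj (k + n))

lemma cwalk_edges (b a : V) (hadj : ∀ n, G.Adj (cf G b a n) (cf G b a (n+1))) (n k : ℕ) :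
    (cwalk G b a hadj n k).edges
      = (List.range n).map (fun i => s(cf G b a (k + i), cf G b a (k + i + 1))) := by
  induction n with
  | zero => rfl
  | succ n ih =>
      rw [cwalk, SimpleGraph.Walk.edges_concat, ih, List.range_succ, List.map_append,
        List.concat_eq_append]
      rfl

/-- crossing lemma -/
lemma cross_lemma {S : Set V} : ∀ {u v : V} (q : G.Walk u v), u ∈ S → v ∉ S →
    ∃ x y, x ∈ S ∧ y ∉ S ∧ s(x, y) ∈ q.edges := by
  intro u v q
  induction q with
  | nil => intro h h'; exact absurd h h'
  | @cons u w v h q ih =>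
      intro hu hv
      by_cases hw : w ∈ S
      · obtain ⟨x, y, hx, hy, hmem⟩ := ih hw hv
        exact ⟨x, y, hx, hy, by simp [SimpleGraph.Walk.edges_cons, hmem]⟩
      · exact ⟨u, w, hu, hw, by simp [SimpleGraph.Walk.edges_cons]⟩

lemma listsum_ge (c : Sym2 V → ℝ) : ∀ l : List (Sym2 V), (∀ x ∈ l, 0 ≤ c x) →
    ∑ x ∈ l.toFinset, c x ≤ (l.map c).sum := by
  intro l
  induction l with
  | nil => simp
  | cons a l ih =>
      intro hnn
      have hnn' : ∀ x ∈ l, 0 ≤ c x := fun x hx => hnn x (List.mem_cons_of_mem _ hx)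
      rw [List.toFinset_cons, List.map_cons, List.sum_cons]
      by_cases ha : a ∈ l.toFinset
      · rw [Finset.insert_eq_self.2 ha]
        have := ih hnn'
        have h0 : 0 ≤ c a := hnn a List.mem_cons_self
        linarith
      · rw [Finset.sum_insert ha]
        have := ih hnn'
        linarith

end Aux

/-- If an edge `e = s(a, b)` of a cycle graph with total weight `C` satisfies
`c e > C - c e`, then the weighted distance between its endpoints equals
`C - c e`, and no minimum-weight walk between its endpoints traverses `e`. -/
theorem stmt_6 {V : Type*} [Fintype V] [DecidableEq V] (G : SimpleGraph V)
    [DecidableRel G.Adj] (hcyc : IsCycleGraph G)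
    (c : Sym2 V → ℝ) (hc : ∀ e ∈ G.edgeSet, 0 < c e)
    (C : ℝ) (hC : C = ∑ e ∈ G.edgeFinset, c e)
    (a b : V) (hab : s(a, b) ∈ G.edgeSet)
    (hheavy : c s(a, b) > C - c s(a, b)) :
    sInf {x : ℝ | ∃ p : G.Walk a b, walkCost c p = x} = C - c s(a, b) ∧
      ∀ p : G.Walk a b, walkCost c p = C - c s(a, b) → s(a, b) ∉ p.edges := by
  obtain ⟨hconn, hcard3, hdeg⟩ := hcyc
  have habAdj : G.Adj a b := hab
  set f : ℕ → V := cf G b a with hf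
  have hf0 : f 0 = b := rfl
  have hf1 : f 1 = a := rfl
  -- basic invariants
  have hadj : ∀ n, G.Adj (f n) (f (n + 1)) := by
    intro n
    induction n using Nat.strong_induction_on with
    | _ n ih =>
      match n with
      | 0 => exact habAdj.symm
      | 1 =>
        have h0 := ih 0 (by omega)
        rw [hf, cf_rec]
        exact (otherNbr_spec G (hdeg _) h0.symm).1
      | (m + 2) =>
        have h0 := ih (m + 1) (by omega)
        rw [hf, cf_rec]
        exact (otherNbr_spec G (hdeg _) h0.symm).1
  have hspec : ∀ n, G.Adj (f (n+1)) (f (n+2)) ∧ f (n+2) ≠ f n ∧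
      ∀ w, G.Adj (f (n+1)) w → w = f n ∨ w = f (n+2) := by
    intro n
    have := otherNbr_spec G (hdeg (f (n+1))) (hadj n).symm
    rw [← cf_rec] at this
    exact ⟨this.1, this.2.1, fun w hw => (this.2.2 w hw).imp id (by rw [cf_rec]; exact id)⟩
  have hne2 : ∀ n, f (n + 2) ≠ f n := fun n => (hspec n).2.1
  have huniq : ∀ n w, G.Adj (f (n+1)) w → w = f n ∨ w = f (n+2) := fun n => (hspec n).2.2
  -- backward determinism
  have hback : ∀ m, otherNbr G (f (m+1)) (f (m+2)) = f m := by
    intro m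
    have h := otherNbr_spec G (hdeg (f (m+1))) (hspec m).1
    rcases h.2.2 (f m) (hadj m).symm with h' | h'
    · exact absurd h'.symm (hne2 m)
    · exact h'.symm
  have hfwd : ∀ n m, f n = f m → f (n+1) = f (m+1) → f (n+2) = f (m+2) := by
    intro n m h1 h2
    have e1 : f (n+2) = otherNbr G (f (n+1)) (f n) := cf_rec G b a n
    have e2 : f (m+2) = otherNbr G (f (m+1)) (f m) := cf_rec G b a m
    rw [e1, e2, h1, h2]
  classical
  -- propagation of a repeated consecutive pair to a global period
  have hprop : ∀ i d, f i = f (i + d) → f (i+1) = f (i + d + 1) → ∀ n, f (n + d) = f n := by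
    intro i d h0 h1
    have A : ∀ t, f (i + t) = f (i + t + d) ∧ f (i + t + 1) = f (i + t + 1 + d) := by
      intro t
      induction t with
      | zero =>
          refine ⟨by simpa using h0, ?_⟩
          have e : i + 0 + 1 + d = i + d + 1 := by omega
          rw [e]
          simpa using h1
      | succ t ih =>
          have e1 : i + (t+1) + d = i + t + 1 + d := by omega
          refine ⟨by rw [e1]; exact ih.2, ?_⟩
          have h2 := hfwd (i + t) (i + t + d) ih.1 (by
            have e : i + t + d + 1 = i + t + 1 + d := by omega
            rw [e]; exact ih.2)
          have e3 : i + t + 2 + d = i + t + d + 2 := by omega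
          show f (i + t + 2) = f (i + t + 2 + d)
          rw [e3]; exact h2
    have B : ∀ s, f (i - s) = f ((i - s) + d) ∧ f ((i - s) + 1) = f ((i - s) + 1 + d) := by
      intro s
      induction s with
      | zero => simpa using A 0
      | succ s ih =>
          by_cases hs : s < i
          · have e0 : i - s = (i - (s+1)) + 1 := by omega
            rw [e0] at ih
            set m := i - (s + 1) with hm
            have hb1 := hback m
            have hb2 := hback (m + d)
            have h2 : f (m + 2) = f (m + d + 2) := by
              have e : m + 1 + 1 + d = m + d + 2 := by omega
              have := ih.2; rw [e] at this; exact this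
            have h1' : f (m + 1) = f (m + d + 1) := by
              have e : m + 1 + d = m + d + 1 := by omega
              have := ih.1; rw [e] at this; exact this
            have : f m = f (m + d) := by
              rw [← hb1, ← hb2, h1', h2]
            refine ⟨this, ?_⟩
            have e : m + 1 + d = m + d + 1 := by omega
            rw [e]; exact h1'
          · have e : i - (s+1) = i - s := by omega
            rw [e]; exact ih
    intro n
    rcases le_or_gt i n with h | h
    · have := (A (n - i)).1
      have e : i + (n - i) = n := by omega
      rw [e] at this; exact this.symm
    · have := (B (i - n)).1
      have e : i - (i - n) = n := by omega
      rw [e] at this; exact this.symm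
  -- existence of a period
  have hper : ∃ d, 0 < d ∧ ∀ n, f (n + d) = f n := by
    obtain ⟨x, y, hxy, hfeq⟩ :=
      Finite.exists_ne_map_eq_of_infinite (fun n : ℕ => (f n, f (n+1)))
    have h0 : f x = f y := congrArg Prod.fst hfeq
    have h1 : f (x+1) = f (y+1) := congrArg Prod.snd hfeq
    rcases Ne.lt_or_gt hxy with h | h
    · refine ⟨y - x, by omega, hprop x (y - x) ?_ ?_⟩
      · have e : x + (y - x) = y := by omega
        rw [e]; exact h0
      · have e : x + (y - x) + 1 = y + 1 := by omega
        rw [e]; exact h1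
    · refine ⟨x - y, by omega, hprop y (x - y) ?_ ?_⟩
      · have e : y + (x - y) = x := by omega
        rw [e]; exact h0.symm
      · have e : y + (x - y) + 1 = x + 1 := by omega
        rw [e]; exact h1.symm
  set p := Nat.find hper with hpdef
  have hppos : 0 < p := (Nat.find_spec hper).1
  have hfp : ∀ n, f (n + p) = f n := (Nat.find_spec hper).2
  have hmin : ∀ d, 0 < d → d < p → ¬ ∀ n, f (n + d) = f n := by
    intro d hd hdp h
    exact Nat.find_min hper hdp ⟨hd, h⟩
  have hmul : ∀ k n, f (n + k * p) = f n := by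
    intro k
    induction k with
    | zero => simp
    | succ k ih =>
        intro n
        have e : n + (k+1) * p = (n + k * p) + p := by ring
        rw [e, hfp, ih]
  have hmod : ∀ n, f n = f (n % p) := by
    intro n
    conv_lhs => rw [← Nat.mod_add_div' n p]
    exact hmul (n / p) (n % p)
  -- injectivity of f on [0, p)
  have hinj : ∀ i j, i < j → j < p → f i ≠ f j := by
    intro i j hij hjp heq
    set d := j - i with hd
    have hd0 : 0 < d := by omega
    have hdp : d < p := by omega
    set i' := i + p with hi'
    set j' := j + p with hj'
    have hj'd : j' = i' + d := by omega
    have hij' : f i' = f j' := by rw [hfp i, hfp j]; exact heq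
    have hnbr : f (i' + 1) = f (j' - 1) ∨ f (i' + 1) = f (j' + 1) := by
      have hA : G.Adj (f ((j' - 1) + 1)) (f (i' + 1)) := by
        have e : (j' - 1) + 1 = j' := by omega
        rw [e, ← hij']
        exact hadj i'
      have := huniq (j' - 1) (f (i' + 1)) hA
      have e : (j' - 1) + 2 = j' + 1 := by omega
      rw [e] at this
      exact this
    rcases hnbr with hrev | hfor
    · -- reversal case
      have Q : ∀ k, k + 1 ≤ d → f (i' + k + 1) = f (j' - (k + 1)) ∧ f (i' + k) = f (j' - k) := by
        intro k
        induction k with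
        | zero =>
            intro _
            exact ⟨by simpa using hrev, by simpa using hij'⟩
        | succ k ih =>
            intro hk
            have ihh := ih (by omega)
            refine ⟨?_, by
              have e : i' + (k+1) = i' + k + 1 := by omega
              rw [e]; exact ihh.1⟩
            set m := j' - (k + 2) with hm
            have em1 : m + 1 = j' - (k + 1) := by omega
            have em2 : m + 2 = j' - k := by omega
            have key : f (i' + (k + 1) + 1) = otherNbr G (f (m + 1)) (f (m + 2)) := by
              have e : i' + (k + 1) + 1 = i' + k + 2 := by omega
              have hr : f (i' + k + 2) = otherNbr G (f (i' + k + 1)) (f (i' + k)) :=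
                cf_rec G b a (i' + k)
              rw [e, hr, ihh.1, ihh.2, ← em1, ← em2]
            rw [key, hback m]
      rcases Nat.even_or_odd d with ⟨t, ht⟩ | ⟨t, ht⟩
      · have ht1 : 1 ≤ t := by omega
        have hQ := (Q t (by omega)).1
        have e : j' - (t + 1) = (i' + t - 1) := by omega
        rw [e] at hQ
        have e2 : i' + t + 1 = (i' + t - 1) + 2 := by omega
        rw [e2] at hQ
        exact hne2 (i' + t - 1) hQ
      · have hQ := (Q t (by omega)).1
        have e : j' - (t + 1) = i' + t := by omega
        rw [e] at hQ
        exact (hadj (i' + t)).ne hQ.symm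
    · -- forward case: period d < p
      have := hprop i' d (by rw [← hj'd]; exact hij') (by
        have e : i' + d + 1 = j' + 1 := by omega
        rw [e]; exact hfor)
      exact hmin d hd0 hdp this
  -- every vertex is hit by f
  have hreach : ∀ v, ∃ k, f k = v := by
    intro v
    obtain ⟨q⟩ := hconn.preconnected b v
    have main : ∀ (u w : V) (q : G.Walk u w), (∃ k, f k = u) → ∃ k, f k = w := by
      intro u w q
      induction q with
      | nil => exact id
      | @cons x y z h q ih =>
          rintro ⟨k, hk⟩
          apply ih
          have hk' : f (k + p) = x := by rw [hfp]; exact hk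
          have e : (k + p - 1) + 1 = k + p := by omega
          have hAdj : G.Adj (f ((k + p - 1) + 1)) y := by rw [e, hk']; exact h
          rcases huniq (k + p - 1) y hAdj with h' | h'
          · exact ⟨k + p - 1, h'.symm⟩
          · exact ⟨k + p - 1 + 2, h'.symm⟩
    exact main b v q ⟨0, hf0⟩
  have himg : (Finset.range p).image f = Finset.univ := by
    apply Finset.eq_univ_of_forall
    intro v
    obtain ⟨k, hk⟩ := hreach v
    refine Finset.mem_image.2 ⟨k % p, Finset.mem_range.2 (Nat.mod_lt _ hppos), ?_⟩
    rw [← hmod]; exact hk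
  have hinjOn : Set.InjOn f (Finset.range p) := by
    intro i hi j hj hij
    simp only [Finset.coe_range, Set.mem_Iio] at hi hj
    rcases lt_trichotomy i j with h | h | h
    · exact absurd hij (hinj i j h hj)
    · exact h
    · exact absurd hij.symm (hinj j i h hi)
  have hcardp : p = Fintype.card V := by
    rw [← Finset.card_univ, ← himg, Finset.card_image_of_injOn hinjOn, Finset.card_range]
  have hp3 : 3 ≤ p := hcardp ▸ hcard3
  have hEcard : G.edgeFinset.card = p := by
    have h2 := SimpleGraph.sum_degrees_eq_twice_card_edges G
    simp only [hdeg, Finset.sum_const, Finset.card_univ, smul_eq_mul] at h2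
    omega
  -- edge enumeration
  set E : ℕ → Sym2 V := fun k => s(f k, f (k+1)) with hEdef
  have hEmem : ∀ k, E k ∈ G.edgeFinset := fun k => SimpleGraph.mem_edgeFinset.2 (hadj k)
  have hfpz : f p = b := by
    have := hfp 0
    simpa [hf0] using this
  have hE0 : E 0 = s(a, b) := by
    show s(f 0, f 1) = s(a, b)
    rw [hf0, hf1]
    exact Sym2.eq_swap
  have hEinjlt : ∀ i j, i < j → j < p → E i ≠ E j := by
    intro i j hij hjp heq
    rcases Sym2.eq_iff.1 heq with ⟨h1, _⟩ | ⟨h1, h2⟩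
    · exact hinj i j hij hjp h1
    · rcases Nat.lt_or_ge (j+1) p with hj1 | hj1
      · exact hinj i (j+1) (by omega) hj1 h1
      · have hjp1 : j + 1 = p := by omega
        have hfj1 : f (j + 1) = b := by rw [hjp1, hfpz]
        have hi0 : i = 0 := by
          by_contra hi0
          exact hinj 0 i (by omega) (by omega) (by rw [hf0, ← hfj1]; exact h1.symm)
        have hj1' : j = 1 := by
          by_contra hj1'
          rcases Nat.lt_or_ge 1 j with h | h
          · exact hinj 1 j h hjp (by rw [← h2, hi0])
          · omega
        omega
  have hEinj : ∀ i j, i < p → j < p → E i = E j → i = j := by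
    intro i j hi hj heq
    rcases lt_trichotomy i j with h | h | h
    · exact absurd heq (hEinjlt i j h hj)
    · exact h
    · exact absurd heq.symm (hEinjlt j i h hi)
  have hEimg : (Finset.range p).image E = G.edgeFinset := by
    apply Finset.eq_of_subset_of_card_le
    · intro g hg
      obtain ⟨k, _, rfl⟩ := Finset.mem_image.1 hg
      exact hEmem k
    · rw [hEcard, Finset.card_image_of_injOn, Finset.card_range]
      intro i hi j hj
      simp only [Finset.coe_range, Set.mem_Iio] at hi hj
      exact hEinj i j hi hj
  have hEsurj : ∀ g ∈ G.edgeSet, ∃ k, k < p ∧ E k = g := by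
    intro g hg
    have : g ∈ (Finset.range p).image E := by
      rw [hEimg]; exact SimpleGraph.mem_edgeFinset.2 hg
    obtain ⟨k, hk, hEk⟩ := Finset.mem_image.1 this
    exact ⟨k, Finset.mem_range.1 hk, hEk⟩
  -- the good walk
  have hfp0 : f (1 + (p - 1)) = b := by
    have e : 1 + (p - 1) = p := by omega
    rw [e, hfpz]
  set P : G.Walk a b := (cwalk G b a hadj (p - 1) 1).copy hf1 hfp0 with hPdef
  have hPedges : P.edges = (List.range (p-1)).map (fun i => E (1 + i)) := by
    rw [hPdef, SimpleGraph.Walk.edges_copy, cwalk_edges]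
  have hsum1 : walkCost c P = ∑ i ∈ Finset.range (p-1), c (E (1 + i)) := by
    show (P.edges.map c).sum = _
    rw [hPedges, List.map_map]
    rfl
  have himg2 : (Finset.range (p-1)).image (fun i => E (1 + i)) = G.edgeFinset.erase s(a,b) := by
    apply Finset.eq_of_subset_of_card_le
    · intro g hg
      obtain ⟨k, hk, rfl⟩ := Finset.mem_image.1 hg
      have hk' : k < p - 1 := Finset.mem_range.1 hk
      refine Finset.mem_erase.2 ⟨?_, hEmem _⟩
      rw [← hE0]
      intro h
      have := hEinj (1 + k) 0 (by omega) (by omega) h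
      omega
    · rw [Finset.card_erase_of_mem (SimpleGraph.mem_edgeFinset.2 hab), hEcard,
        Finset.card_image_of_injOn, Finset.card_range]
      intro i hi j hj hij
      simp only [Finset.coe_range, Set.mem_Iio] at hi hj
      have := hEinj (1 + i) (1 + j) (by omega) (by omega) hij
      omega
  have hsum2 : ∑ i ∈ Finset.range (p-1), c (E (1 + i)) = ∑ g ∈ G.edgeFinset.erase s(a,b), c g := by
    rw [← himg2, Finset.sum_image]
    intro i hi j hj hij
    have hi' := Finset.mem_range.1 hi
    have hj' := Finset.mem_range.1 hj
    have := hEinj (1 + i) (1 + j) (by omega) (by omega) hij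
    omega
  have hCsum : ∑ g ∈ G.edgeFinset.erase s(a,b), c g = C - c s(a,b) := by
    have h := Finset.sum_erase_add G.edgeFinset c (SimpleGraph.mem_edgeFinset.2 hab)
    rw [← hC] at h
    linarith
  have hPcost : walkCost c P = C - c s(a, b) := by rw [hsum1, hsum2, hCsum]
  -- nonnegativity of edge costs along walks
  have hnn : ∀ (q : G.Walk a b), ∀ x ∈ q.edges.map c, (0:ℝ) ≤ x := by
    intro q x hx
    obtain ⟨g, hg, rfl⟩ := List.mem_map.1 hx
    exact (hc g (q.edges_subset_edgeSet hg)).le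
  -- heavy-edge walks cost at least c e
  have hheavywalk : ∀ q : G.Walk a b, s(a,b) ∈ q.edges → c s(a,b) ≤ walkCost c q := by
    intro q hmem
    exact List.single_le_sum (hnn q) _ (List.mem_map_of_mem (f := c) hmem)
  -- lower bound for all walks
  have hlb : ∀ q : G.Walk a b, C - c s(a,b) ≤ walkCost c q := by
    intro q
    by_cases he : s(a,b) ∈ q.edges
    · have := hheavywalk q he
      linarith
    · have hcut : ∀ k, 1 ≤ k → k < p → E k ∈ q.edges := by
        intro k hk1 hkp
        set S : Set V := {v | ∃ j, 1 ≤ j ∧ j ≤ k ∧ f j = v} with hS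
        have haS : a ∈ S := ⟨1, le_refl 1, hk1, hf1⟩
        have hbS : b ∉ S := by
          rintro ⟨j, hj1, hjk, hjb⟩
          exact hinj 0 j (by omega) (by omega) (by rw [hf0, hjb])
        obtain ⟨x, y, hx, hy, hxy⟩ := cross_lemma G q haS hbS
        have hgE : s(x,y) ∈ G.edgeSet := q.edges_subset_edgeSet hxy
        obtain ⟨m, hmp, hmE⟩ := hEsurj _ hgE
        obtain ⟨j, hj1, hjk, rfl⟩ := hx
        rcases Sym2.eq_iff.1 hmE with ⟨h1, h2⟩ | ⟨h1, h2⟩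
        · -- f m = f j, f (m+1) = y
          have hmj : m = j := by
            rcases lt_trichotomy m j with h | h | h
            · exact absurd h1 (hinj m j h (by omega))
            · exact h
            · exact absurd h1.symm (hinj j m h hmp)
          have hjko : j = k := by
            by_contra hjk'
            exact hy ⟨j + 1, by omega, by omega, by rw [← h2, hmj]⟩
          have : E m = E k := by rw [hmj, hjko]
          rw [← this, hmE]
          exact hxy
        · -- f m = y, f (m+1) = f j
          exfalso
          rcases Nat.lt_or_ge (m+1) p with hm1 | hm1
          · have hmj : m + 1 = j := by
              rcases lt_trichotomy (m+1) j with h | h | h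
              · exact absurd h2 (hinj (m+1) j h (by omega))
              · exact h
              · exact absurd h2.symm (hinj j (m+1) h hm1)
            have hm0 : m = 0 := by
              by_contra hm0
              exact hy ⟨m, by omega, by omega, h1⟩
            have : E m = s(a, b) := by rw [hm0, hE0]
            rw [this] at hmE
            rw [hmE] at he
            exact he hxy
          · have hmp1 : m + 1 = p := by omega
            have : f (m + 1) = f 0 := by rw [hmp1, hfpz, hf0]
            have hj0 : f 0 = f j := by rw [← this, h2]
            exact hinj 0 j (by omega) (by omega) hj0
      have hsub : G.edgeFinset.erase s(a,b) ⊆ q.edges.toFinset := by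
        intro g hg
        obtain ⟨hne', hmem⟩ := Finset.mem_erase.1 hg
        obtain ⟨m, hmp, rfl⟩ := hEsurj g (SimpleGraph.mem_edgeFinset.1 hmem)
        have hm1 : 1 ≤ m := by
          by_contra hm1
          have hm0 : m = 0 := by omega
          rw [hm0, hE0] at hne'
          exact hne' rfl
        exact List.mem_toFinset.2 (hcut m hm1 hmp)
      have hnn' : ∀ g ∈ q.edges, 0 ≤ c g := fun g hg => (hc g (q.edges_subset_edgeSet hg)).le
      calc C - c s(a,b) = ∑ g ∈ G.edgeFinset.erase s(a,b), c g := hCsum.symm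
        _ ≤ ∑ g ∈ q.edges.toFinset, c g := by
            apply Finset.sum_le_sum_of_subset_of_nonneg hsub
            intro g hg _
            exact (hc g (q.edges_subset_edgeSet (List.mem_toFinset.1 hg))).le
        _ ≤ (q.edges.map c).sum := listsum_ge c q.edges hnn'
        _ = walkCost c q := rfl
  constructor
  · apply IsLeast.csInf_eq
    constructor
    · exact ⟨P, hPcost⟩
    · rintro x ⟨q, rfl⟩
      exact hlb q
  · intro q hq hmem
    have h1 := hheavywalk q hmem
    rw [hq] at h1
    linarith
end

section
/- If a closed walk visits every vertex of a cycle graph and does not traverse some edge e of the cycle, then it traverses every other edge of the cycle at least twice, counted with multiplicity. -/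
open SimpleGraph

section Aux

variable {V : Type*} [Fintype V] [DecidableEq V] {G : SimpleGraph V} [DecidableRel G.Adj]

private lemma path_loop_nil {u : V} {p : G.Walk u u} (hp : p.IsPath) : p = Walk.nil := by
  cases p with
  | nil => rfl
  | cons h q =>
    rw [Walk.cons_isPath_iff] at hp
    exact absurd q.end_mem_support hp.2

private lemma cycle_adj_mem_edges_start {v w : V} (hdeg : ∀ x, G.degree x = 2)
    {C : G.Walk v v} (hC : C.IsCycle) (hadj : G.Adj v w) : s(v, w) ∈ C.edges := by
  have h3 := hC.three_le_length
  cases C with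
  | nil => exact absurd hC Walk.IsCycle.not_of_nil
  | @cons _ x _ h q =>
    rw [Walk.cons_isCycle_iff] at hC
    obtain ⟨y, h', r, hqr⟩ :=
      Walk.not_nil_iff.mp (Walk.not_nil_of_ne h.ne : ¬ q.reverse.Nil)
    have hyq : s(v, y) ∈ q.edges := by
      have : s(v, y) ∈ q.reverse.edges := by rw [hqr]; simp
      rwa [Walk.edges_reverse, List.mem_reverse] at this
    have hxy : x ≠ y := by
      rintro rfl
      have hqp : q.reverse.IsPath := hC.1.reverse
      rw [hqr, Walk.cons_isPath_iff] at hqp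
      have hr : r = Walk.nil := path_loop_nil hqp.1
      have hl : q.reverse.length = 1 := by rw [hqr, hr]; simp
      rw [Walk.length_reverse] at hl
      simp only [Walk.length_cons, hl] at h3
      omega
    have hsub : ({x, y} : Finset V) ⊆ G.neighborFinset v := by
      intro z hz
      rcases Finset.mem_insert.mp hz with rfl | hz
      · simpa using h
      · rw [Finset.mem_singleton] at hz; subst hz; simpa using h'
    have heq : ({x, y} : Finset V) = G.neighborFinset v :=
      Finset.eq_of_subset_of_card_le hsub
        (by rw [Finset.card_pair hxy, SimpleGraph.card_neighborFinset_eq_degree, hdeg v])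
    have hw : w ∈ ({x, y} : Finset V) := by rw [heq]; simpa using hadj
    rcases Finset.mem_insert.mp hw with rfl | hw
    · simp
    · rw [Finset.mem_singleton] at hw; subst hw
      rw [Walk.edges_cons, List.mem_cons]
      exact Or.inr hyq

private lemma cycle_adj_mem_edges {x v w : V} (hdeg : ∀ u, G.degree u = 2)
    {C : G.Walk x x} (hC : C.IsCycle) (hv : v ∈ C.support) (hadj : G.Adj v w) :
    s(v, w) ∈ C.edges := by
  have h1 := cycle_adj_mem_edges_start hdeg (hC.rotate hv) hadj
  have h2 : s(v, w) ∈ (C.rotate v hv).toSubgraph.edgeSet :=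
    (Walk.mem_edges_toSubgraph _).mpr h1
  rw [Walk.toSubgraph_rotate] at h2
  exact (Walk.mem_edges_toSubgraph _).mp h2

private lemma cycle_mem_edges {x : V} (hconn : G.Connected) (hdeg : ∀ v, G.degree v = 2)
    {C : G.Walk x x} (hC : C.IsCycle) {g : Sym2 V} (hg : g ∈ G.edgeSet) : g ∈ C.edges := by
  have key : ∀ {a b : V} (p : G.Walk a b), a ∈ C.support → b ∈ C.support := by
    intro a b p
    induction p with
    | nil => exact id
    | cons h q ih =>
      intro ha
      exact ih (Walk.snd_mem_support_of_mem_edges C (cycle_adj_mem_edges hdeg hC ha h))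
  have hsup : ∀ v, v ∈ C.support := by
    intro v
    obtain ⟨p⟩ := hconn x v
    exact key p C.start_mem_support
  induction g using Sym2.ind with
  | _ a b =>
    rw [mem_edgeSet] at hg
    exact cycle_adj_mem_edges hdeg hC (hsup a) hg

private lemma not_reachable_delete {f1 f2 : V} (hconn : G.Connected)
    (hdeg : ∀ v, G.degree v = 2) (hf : G.Adj f1 f2) {e : Sym2 V} (he : e ∈ G.edgeSet)
    (hef : s(f1, f2) ≠ e) : ¬ (G.deleteEdges {e, s(f1, f2)}).Reachable f2 f1 := by
  rintro ⟨p⟩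
  have hsubG : ∀ g ∈ p.edges, g ∈ G.edgeSet := fun g hg =>
    SimpleGraph.edgeSet_mono (G.deleteEdges_le _) (p.edges_subset_edgeSet hg)
  have hsubH : ∀ g ∈ p.edges, g ∈ (G.deleteEdges {e, s(f1, f2)}).edgeSet :=
    fun g hg => p.edges_subset_edgeSet hg
  set p' := p.transfer G hsubG with hp'
  have hq : ((p'.toPath : G.Walk f2 f1)).IsPath := (p'.toPath).2
  set qw := (p'.toPath : G.Walk f2 f1) with hqw
  have hqe : ∀ g ∈ qw.edges, g ∈ (G.deleteEdges {e, s(f1, f2)}).edgeSet := by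
    intro g hg
    have : g ∈ p'.edges := Walk.edges_toPath_subset p' hg
    rw [hp', Walk.edges_transfer] at this
    exact hsubH g this
  have hnf : s(f1, f2) ∉ qw.edges := by
    intro hg
    have := hqe _ hg
    rw [edgeSet_deleteEdges] at this
    exact this.2 (by simp)
  have hne : e ∉ qw.edges := by
    intro hg
    have := hqe _ hg
    rw [edgeSet_deleteEdges] at this
    exact this.2 (by simp)
  have hcyc : (Walk.cons hf qw).IsCycle := (Walk.cons_isCycle_iff qw hf).mpr ⟨hq, hnf⟩
  have hmem : e ∈ (Walk.cons hf qw).edges := cycle_mem_edges hconn hdeg hcyc he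
  rw [Walk.edges_cons, List.mem_cons] at hmem
  rcases hmem with hmem | hmem
  · exact hef hmem.symm
  · exact hne hmem

private lemma parity_count {e : Sym2 V} {f1 f2 : V}
    (hH : ¬ (G.deleteEdges {e, s(f1, f2)}).Reachable f1 f2) :
    ∀ {u v : V} (p : G.Walk u v), e ∉ p.edges →
      (Even (p.edges.count s(f1, f2)) ↔
        ((G.deleteEdges {e, s(f1, f2)}).Reachable f1 u ↔
          (G.deleteEdges {e, s(f1, f2)}).Reachable f1 v)) := by
  intro u v p
  induction p with
  | nil => simp
  | @cons a b c h q ih =>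
    intro hne
    rw [Walk.edges_cons, List.mem_cons, not_or] at hne
    obtain ⟨h1, h2⟩ := hne
    have hIH := ih h2
    by_cases hf : s(a, b) = s(f1, f2)
    · have hod : ¬ ((G.deleteEdges {e, s(f1, f2)}).Reachable f1 a ↔
          (G.deleteEdges {e, s(f1, f2)}).Reachable f1 b) := by
        rw [Sym2.eq_iff] at hf
        rcases hf with ⟨rfl, rfl⟩ | ⟨rfl, rfl⟩
        · exact fun hiff => hH (hiff.mp (SimpleGraph.Reachable.refl _))
        · exact fun hiff => hH (hiff.mpr (SimpleGraph.Reachable.refl _))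
      rw [Walk.edges_cons, hf, List.count_cons_self, Nat.even_add_one, hIH]
      tauto
    · have hg : (G.deleteEdges {e, s(f1, f2)}).Adj a b := by
        rw [deleteEdges_adj]
        refine ⟨h, ?_⟩
        simp only [Set.mem_insert_iff, Set.mem_singleton_iff]
        rintro (rfl | hfa)
        · exact h1 rfl
        · exact hf hfa
      have hR : (G.deleteEdges {e, s(f1, f2)}).Reachable f1 a ↔
          (G.deleteEdges {e, s(f1, f2)}).Reachable f1 b :=
        ⟨fun hr => hr.trans hg.reachable, fun hr => hr.trans hg.symm.reachable⟩
      rw [Walk.edges_cons, List.count_cons_of_ne hf, hIH, hR]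

end Aux

/-- If a closed walk visits every vertex of a cycle graph and does not traverse
some edge `e`, then it traverses every other edge of the cycle at least twice,
counted with multiplicity. -/
theorem stmt_7 {V : Type*} [Fintype V] [DecidableEq V] (G : SimpleGraph V)
    [DecidableRel G.Adj] (hcyc : IsCycleGraph G)
    (s : V) (w : G.Walk s s) (hspan : ∀ v : V, v ∈ w.support)
    (e : Sym2 V) (he : e ∈ G.edgeSet) (hnot : e ∉ w.edges) :
    ∀ f ∈ G.edgeSet, f ≠ e → 2 ≤ w.edges.count f := by
  obtain ⟨hconn, hcard, hdeg⟩ := hcyc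
  intro f hf hfe
  induction f using Sym2.ind with
  | _ f1 f2 =>
    rw [SimpleGraph.mem_edgeSet] at hf
    have hD : ¬ (G.deleteEdges {e, s(f1, f2)}).Reachable f2 f1 :=
      not_reachable_delete hconn hdeg hf he hfe
    have hD' : ¬ (G.deleteEdges {e, s(f1, f2)}).Reachable f1 f2 := fun h => hD h.symm
    have heven : Even (w.edges.count s(f1, f2)) := (parity_count hD' w hnot).mpr Iff.rfl
    have hpos : w.edges.count s(f1, f2) ≠ 0 := by
      intro h0
      have hfnot : s(f1, f2) ∉ w.edges := List.count_eq_zero.mp h0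
      have hsubH : ∀ g ∈ w.edges, g ∈ (G.deleteEdges {e, s(f1, f2)}).edgeSet := by
        intro g hg
        rw [SimpleGraph.edgeSet_deleteEdges]
        refine ⟨w.edges_subset_edgeSet hg, ?_⟩
        simp only [Set.mem_insert_iff, Set.mem_singleton_iff]
        rintro (rfl | rfl)
        exacts [hnot hg, hfnot hg]
      have hreach : ∀ v ∈ w.support, (G.deleteEdges {e, s(f1, f2)}).Reachable s v := by
        intro v hv
        rw [← SimpleGraph.Walk.support_transfer _ hsubH] at hv
        exact ⟨(w.transfer _ hsubH).takeUntil v hv⟩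
      exact hD' ((hreach f1 (hspan f1)).symm.trans (hreach f2 (hspan f2)))
    obtain ⟨k, hk⟩ := heven
    omega
end

section
/- In a cycle graph with positive edge weights, total edge weight C, and maximum edge weight c_max, every closed walk that starts and ends at the same vertex and visits every vertex has cost at least min(C, 2(C − c_max)). -/
open SimpleGraph

/-- A cycle from `v` has two distinct edges incident to `v`. -/
lemma cycle_start_two_edges {V : Type*} {G : SimpleGraph V} {v : V}
    (d : G.Walk v v) (hd : d.IsCycle) :
    ∃ e₁ e₂ : Sym2 V, e₁ ≠ e₂ ∧ e₁ ∈ d.edges ∧ e₂ ∈ d.edges ∧ v ∈ e₁ ∧ v ∈ e₂ := by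
  cases d with
  | nil => exact absurd hd Walk.IsCycle.not_of_nil
  | @cons _ b _ h p =>
    rw [Walk.cons_isCycle_iff] at hd
    obtain ⟨y, h2, q, hq⟩ := Walk.exists_eq_cons_of_ne h.ne p.reverse
    have he2 : s(v, y) ∈ p.edges := by
      have h3 : s(v, y) ∈ p.reverse.edges := by rw [hq]; simp
      simpa using h3
    refine ⟨s(v, b), s(v, y), fun hEq => hd.2 (hEq ▸ he2), by simp, by simp [he2], by simp, by simp⟩

/-- In a 2-regular graph, every edge of `G` incident to a vertex on a cycle is a cycle edge. -/
lemma cycle_edges_saturated {V : Type*} [Fintype V] [DecidableEq V] {G : SimpleGraph V}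
    [DecidableRel G.Adj] (hdeg : ∀ v : V, G.degree v = 2) {a : V}
    (cw : G.Walk a a) (hcw : cw.IsCycle) {v u : V} (hv : v ∈ cw.support) (hadj : G.Adj v u) :
    s(v, u) ∈ cw.edges := by
  have hc' := hcw.rotate hv
  obtain ⟨e₁, e₂, hne, h1, h2, hv1, hv2⟩ := cycle_start_two_edges (cw.rotate v hv) hc'
  have hmem : ∀ e ∈ (cw.rotate v hv).edges, e ∈ cw.edges := fun e he =>
    (Walk.rotate_edges cw v hv).mem_iff.mp he
  have hsub : ({e₁, e₂} : Finset (Sym2 V)) ⊆ G.incidenceFinset v := by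
    intro e he
    rw [G.mem_incidenceFinset]
    rcases Finset.mem_insert.mp he with rfl | he
    · exact ⟨(cw.rotate v hv).edges_subset_edgeSet h1, hv1⟩
    · rw [Finset.mem_singleton] at he
      subst he
      exact ⟨(cw.rotate v hv).edges_subset_edgeSet h2, hv2⟩
  have hcard : (G.incidenceFinset v).card = 2 := by
    rw [card_incidenceFinset_eq_degree]; exact hdeg v
  have heq : ({e₁, e₂} : Finset (Sym2 V)) = G.incidenceFinset v := by
    apply Finset.eq_of_subset_of_card_le hsub
    rw [hcard, Finset.card_insert_of_notMem (by simpa using hne), Finset.card_singleton]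
  have : s(v, u) ∈ ({e₁, e₂} : Finset (Sym2 V)) := by
    rw [heq, G.mem_incidenceFinset]
    exact ⟨hadj, by simp⟩
  rcases Finset.mem_insert.mp this with rfl | h
  · exact hmem _ h1
  · rw [Finset.mem_singleton] at h
    exact h ▸ hmem _ h2

/-- In a connected 2-regular graph, a cycle passes through every vertex. -/
lemma cycle_support_all {V : Type*} [Fintype V] [DecidableEq V] {G : SimpleGraph V}
    [DecidableRel G.Adj] (hconn : G.Preconnected) (hdeg : ∀ v : V, G.degree v = 2) {a : V}
    (cw : G.Walk a a) (hcw : cw.IsCycle) : ∀ z : V, z ∈ cw.support := by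
  have key : ∀ {x y : V} (p : G.Walk x y), x ∈ cw.support → y ∈ cw.support := by
    intro x y p
    induction p with
    | nil => exact id
    | cons h q ih =>
      intro hx
      exact ih (cw.snd_mem_support_of_mem_edges (cycle_edges_saturated hdeg cw hcw hx h))
  intro z
  obtain ⟨p⟩ := hconn a z
  exact key p cw.start_mem_support

/-- Removing an edge `s(a,b)` and another edge from a connected 2-regular graph
disconnects `a` from `b`. -/
lemma not_reachable_delete_s8 {V : Type*} [Fintype V] [DecidableEq V] {G : SimpleGraph V}
    [DecidableRel G.Adj] (hconn : G.Connected) (hdeg : ∀ v : V, G.degree v = 2)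
    {a b : V} (hadj : G.Adj a b) {e₀ : Sym2 V} (he₀ : e₀ ∈ G.edgeSet)
    (hne : e₀ ≠ s(a, b)) :
    ¬ (G.deleteEdges {s(a, b), e₀}).Reachable a b := by
  intro hr
  set H := G.deleteEdges {s(a, b), e₀} with hH
  obtain ⟨q0⟩ := hr.symm
  let q : H.Walk b a := q0.toPath
  have hqpath : q.IsPath := q0.toPath.2
  have hqedges : ∀ e ∈ q.edges, e ∈ H.edgeSet := q.edges_subset_edgeSet
  have hHsub : ∀ e ∈ q.edges, e ∈ G.edgeSet := by
    intro e he
    have := hqedges e he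
    rw [hH, edgeSet_deleteEdges] at this
    exact this.1
  have hnotin : ∀ e ∈ q.edges, e ≠ s(a, b) ∧ e ≠ e₀ := by
    intro e he
    have := hqedges e he
    rw [hH, edgeSet_deleteEdges] at this
    constructor
    · intro h; exact this.2 (by simp [h])
    · intro h; exact this.2 (by simp [h])
  let p : G.Walk b a := q.transfer G hHsub
  have hpedges : p.edges = q.edges := q.edges_transfer hHsub
  have hppath : p.IsPath := hqpath.transfer hHsub
  let cw : G.Walk a a := Walk.cons hadj p
  have hcyc : cw.IsCycle := by
    rw [Walk.cons_isCycle_iff]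
    refine ⟨hppath, fun h => ?_⟩
    exact (hnotin _ (hpedges ▸ h)).1 rfl
  have he₀c : e₀ ∉ cw.edges := by
    simp only [cw, Walk.edges_cons, List.mem_cons]
    rintro (h | h)
    · exact hne h
    · exact (hnotin _ (hpedges ▸ h)).2 rfl
  induction e₀ with
  | _ x y =>
    have hxy : G.Adj x y := he₀
    have hx : x ∈ cw.support := cycle_support_all hconn.preconnected hdeg cw hcyc x
    exact he₀c (cycle_edges_saturated hdeg cw hcyc hx hxy)

/-- Number of darts of a walk crossing a `Bool`-valued cut. -/
def crossCount {V : Type*} {G : SimpleGraph V} (f : V → Bool) {u v : V} (p : G.Walk u v) : ℕ :=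
  p.darts.countP fun d => f d.toProd.1 != f d.toProd.2

lemma crossCount_cons {V : Type*} {G : SimpleGraph V} (f : V → Bool) {x y z : V}
    (h : G.Adj x y) (q : G.Walk y z) :
    crossCount f (Walk.cons h q) = crossCount f q + (if f x = f y then 0 else 1) := by
  simp only [crossCount, Walk.darts_cons, List.countP_cons]
  by_cases hxy : f x = f y <;> simp [hxy]

lemma crossCount_parity {V : Type*} {G : SimpleGraph V} (f : V → Bool) {u v : V}
    (p : G.Walk u v) : crossCount f p % 2 = if f u = f v then 0 else 1 := by
  induction p with
  | nil => simp [crossCount]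
  | @cons x y z h q ih =>
    rw [crossCount_cons, Nat.add_mod, ih]
    cases hx : f x <;> cases hy : f y <;> cases hz : f z <;> simp [hx, hy, hz]

lemma crossCount_zero {V : Type*} {G : SimpleGraph V} (f : V → Bool) {u v : V}
    (p : G.Walk u v) (h : crossCount f p = 0) : ∀ z ∈ p.support, f z = f u := by
  induction p with
  | nil =>
    intro z hz
    rw [Walk.support_nil, List.mem_singleton] at hz
    subst hz; rfl
  | @cons x y z h' q ih =>
    rw [crossCount_cons] at h
    have hxy : f x = f y := by
      by_cases hb : f x = f y
      · exact hb
      · simp [hb] at h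
    have hq : crossCount f q = 0 := by
      rw [if_pos hxy] at h
      omega
    intro t ht
    rw [Walk.support_cons, List.mem_cons] at ht
    rcases ht with rfl | ht
    · rfl
    · rw [ih hq t ht, hxy]

lemma crossCount_eq_count {V : Type*} {G : SimpleGraph V} [DecidableEq V] (f : V → Bool)
    {u v : V} (p : G.Walk u v) (e : Sym2 V)
    (hpt : ∀ d ∈ p.darts, (f d.toProd.1 != f d.toProd.2) = (d.edge == e)) :
    crossCount f p = p.edges.count e := by
  have : p.edges = p.darts.map SimpleGraph.Dart.edge := rfl
  rw [this, List.count, List.countP_map]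
  exact List.countP_congr (fun d hd => by rw [hpt d hd]; rfl)

lemma count_ge_two {V : Type*} [Fintype V] [DecidableEq V] {G : SimpleGraph V}
    [DecidableRel G.Adj] (hconn : G.Connected) (hdeg : ∀ v : V, G.degree v = 2)
    {s a b : V} (hadj : G.Adj a b) {e₀ : Sym2 V} (he₀ : e₀ ∈ G.edgeSet)
    (hne : e₀ ≠ s(a, b)) (w : G.Walk s s) (hspan : ∀ v : V, v ∈ w.support)
    (hw0 : e₀ ∉ w.edges) : 2 ≤ w.edges.count s(a, b) := by
  classical
  set H := G.deleteEdges {s(a, b), e₀} with hH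
  let f : V → Bool := fun v => decide (H.Reachable a v)
  have hfa : f a = true := by simp only [f, decide_eq_true_eq]; exact Reachable.refl a
  have hfb : f b = false := by
    simp only [f, decide_eq_false_iff_not]
    exact not_reachable_delete_s8 hconn hdeg hadj he₀ hne
  have key : ∀ d ∈ w.darts, (f d.toProd.1 != f d.toProd.2) = (d.edge == s(a, b)) := by
    intro d hd
    have hdmem : d.edge ∈ w.edges := List.mem_map_of_mem hd
    by_cases hde : d.edge = s(a, b)
    · rw [hde]
      simp only [beq_self_eq_true]
      have : s(d.toProd.1, d.toProd.2) = s(a, b) := hde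
      rw [Sym2.eq_iff] at this
      rcases this with ⟨h1, h2⟩ | ⟨h1, h2⟩ <;> rw [h1, h2] <;> simp [hfa, hfb]
    · have hbeq : (d.edge == s(a, b)) = false := by simpa using hde
      rw [hbeq]
      have hdG : d.edge ∈ G.edgeSet := w.edges_subset_edgeSet hdmem
      have hde0 : d.edge ≠ e₀ := fun h => hw0 (h ▸ hdmem)
      have hdH : d.edge ∈ H.edgeSet := by
        rw [hH, edgeSet_deleteEdges]
        refine ⟨hdG, ?_⟩
        simp only [Set.mem_insert_iff, Set.mem_singleton_iff]
        push_neg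
        exact ⟨hde, hde0⟩
      have hadjH : H.Adj d.toProd.1 d.toProd.2 := hdH
      have : H.Reachable a d.toProd.1 ↔ H.Reachable a d.toProd.2 :=
        ⟨fun h => h.trans hadjH.reachable, fun h => h.trans hadjH.symm.reachable⟩
      simp only [f, bne_eq_false_iff_eq, decide_eq_decide]
      exact this
  have hcc : crossCount f w = w.edges.count s(a, b) := crossCount_eq_count f w _ key
  have heven : crossCount f w % 2 = 0 := by rw [crossCount_parity]; simp
  have hne0 : crossCount f w ≠ 0 := by
    intro h0
    have hall := crossCount_zero f w h0
    have h1 := hall a (hspan a)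
    have h2 := hall b (hspan b)
    rw [hfa] at h1
    rw [hfb] at h2
    rw [← h1] at h2
    exact absurd h2 (by simp)
  omega

/-- In a cycle graph with positive edge weights, total edge weight `C` and
maximum edge weight `cmax`, every closed spanning walk has cost at least
`min C (2 * (C - cmax))`. -/
theorem stmt_8 {V : Type*} [Fintype V] [DecidableEq V] (G : SimpleGraph V)
    [DecidableRel G.Adj] (hcyc : IsCycleGraph G)
    (c : Sym2 V → ℝ) (hc : ∀ e ∈ G.edgeSet, 0 < c e)
    (C : ℝ) (hC : C = ∑ e ∈ G.edgeFinset, c e)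
    (cmax : ℝ) (hcmax : IsGreatest (c '' G.edgeSet) cmax)
    (s : V) (w : G.Walk s s) (hspan : ∀ v : V, v ∈ w.support) :
    min C (2 * (C - cmax)) ≤ walkCost c w := by
  classical
  obtain ⟨hconn, hcard, hdeg⟩ := hcyc
  have hsub : w.edges.toFinset ⊆ G.edgeFinset := by
    intro e he
    rw [List.mem_toFinset] at he
    exact mem_edgeFinset.mpr (w.edges_subset_edgeSet he)
  have hcost : walkCost c w = ∑ e ∈ G.edgeFinset, (w.edges.count e : ℝ) * c e := by
    rw [walkCost, Finset.sum_list_map_count]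
    rw [Finset.sum_subset hsub (fun e _ he => by
      rw [List.count_eq_zero_of_not_mem (fun h => he (List.mem_toFinset.mpr h))]
      simp)]
    exact Finset.sum_congr rfl fun e _ => by rw [nsmul_eq_mul]
  by_cases hall : ∀ e ∈ G.edgeFinset, e ∈ w.edges
  · refine le_trans (min_le_left _ _) ?_
    rw [hC, hcost]
    apply Finset.sum_le_sum
    intro e he
    have h1 : 1 ≤ w.edges.count e := List.count_pos_iff.mpr (hall e he)
    have hce := (hc e (mem_edgeFinset.mp he)).le
    calc c e = 1 * c e := (one_mul _).symm
    _ ≤ (w.edges.count e : ℝ) * c e :=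
      mul_le_mul_of_nonneg_right (by exact_mod_cast h1) hce
  · push_neg at hall
    obtain ⟨e₀, he₀F, hw0⟩ := hall
    have he₀ : e₀ ∈ G.edgeSet := mem_edgeFinset.mp he₀F
    refine le_trans (min_le_right _ _) ?_
    have hcm : c e₀ ≤ cmax := hcmax.2 ⟨e₀, he₀, rfl⟩
    have hkey : ∀ e ∈ G.edgeFinset.erase e₀, 2 * c e ≤ (w.edges.count e : ℝ) * c e := by
      intro e heF
      obtain ⟨hne, heF'⟩ := Finset.mem_erase.mp heF
      have heS : e ∈ G.edgeSet := mem_edgeFinset.mp heF'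
      have h2 : 2 ≤ w.edges.count e := by
        revert hne heS
        induction e using Sym2.ind with
        | _ a b =>
          intro hne heS
          exact count_ge_two hconn hdeg heS he₀ hne.symm w hspan hw0
      have hce := (hc e heS).le
      exact mul_le_mul_of_nonneg_right (by exact_mod_cast h2) hce
    have hsum : 2 * (C - c e₀) ≤ walkCost c w := by
      rw [hcost]
      have h0 : (w.edges.count e₀ : ℝ) * c e₀ = 0 := by
        rw [List.count_eq_zero_of_not_mem hw0]; simp
      rw [← Finset.add_sum_erase _ _ he₀F, h0, zero_add]
      calc 2 * (C - c e₀) = ∑ e ∈ G.edgeFinset.erase e₀, 2 * c e := by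
            rw [← Finset.mul_sum]
            have h1 := Finset.add_sum_erase G.edgeFinset c he₀F
            rw [hC]
            rw [← h1]
            ring
      _ ≤ _ := Finset.sum_le_sum hkey
    have : 2 * (C - cmax) ≤ 2 * (C - c e₀) := by linarith
    linarith
end

section
/- In a tadpole graph with positive edge weights, let S denote the total weight of the stem edges, C_cyc the total weight of the cycle edges, and c_max the maximum weight among the cycle edges. Then every closed walk that starts and ends at the same vertex and visits every vertex has cost at least 2S + min(C_cyc, 2(C_cyc − c_max)). -/
/-- A tadpole graph: a finite connected simple graph with exactly one vertex of
degree 1, exactly one vertex of degree 3, and all other vertices of degree 2. -/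
def IsTadpole {V : Type*} [Fintype V] (G : SimpleGraph V) [DecidableRel G.Adj] : Prop :=
  G.Connected ∧ ∃ x y : V, x ≠ y ∧ G.degree x = 1 ∧ G.degree y = 3 ∧
    ∀ v : V, v ≠ x → v ≠ y → G.degree v = 2

namespace TadpoleAux

open SimpleGraph Finset

variable {V : Type*}

lemma count_edge_parity [DecidableEq V] {G : SimpleGraph V} {a b : V}
    (hbr : ¬ (G \ fromEdgeSet {s(a,b)}).Reachable a b)
    {u v : V} (p : G.Walk u v) :
    (((G \ fromEdgeSet {s(a,b)}).Reachable a u ↔ (G \ fromEdgeSet {s(a,b)}).Reachable a v)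
      ↔ Even (p.edges.count s(a,b))) := by
  set G' := G \ fromEdgeSet {s(a,b)} with hG'
  induction p with
  | nil => simp
  | @cons u u' v h q ih =>
    rw [SimpleGraph.Walk.edges_cons, List.count_cons]
    by_cases he : s(u, u') = s(a, b)
    · have hnr : ¬ (G'.Reachable a u ↔ G'.Reachable a u') := by
        rw [Sym2.eq_iff] at he
        rcases he with ⟨rfl, rfl⟩ | ⟨rfl, rfl⟩
        · simp only [iff_iff_implies_and_implies]
          rintro ⟨h1, -⟩
          exact hbr (h1 (Reachable.refl _))
        · simp only [iff_iff_implies_and_implies]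
          rintro ⟨-, h2⟩
          exact hbr (h2 (Reachable.refl _))
      simp only [he, beq_self_eq_true, if_true, Nat.even_add_one, ← ih]
      tauto
    · have hadj : G'.Adj u u' := by
        rw [hG']
        simp only [sdiff_adj, fromEdgeSet_adj]
        exact ⟨h, fun hh => he hh.1⟩
      have hiff : G'.Reachable a u ↔ G'.Reachable a u' :=
        ⟨fun hr => hr.trans hadj.reachable, fun hr => hr.trans hadj.symm.reachable⟩
      have hff : ((s(u,u') == s(a,b)) = true) = False := by simpa using he
      simp only [hff, if_false, add_zero, ← ih]
      tauto

lemma walk_avoid_reachable [DecidableEq V] {G : SimpleGraph V} {e : Sym2 V}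
    {u v : V} (p : G.Walk u v) (hne : e ∉ p.edges) {x : V} (hx : x ∈ p.support) :
    (G \ fromEdgeSet {e}).Reachable u x := by
  have hsub : ∀ f ∈ p.edges, f ∈ (G \ fromEdgeSet {e}).edgeSet := by
    intro f hf
    simp only [edgeSet_sdiff, edgeSet_fromEdgeSet, edgeSet_sdiff_sdiff_isDiag, Set.mem_diff,
      Set.mem_singleton_iff]
    exact ⟨p.edges_subset_edgeSet hf, fun h => hne (h ▸ hf)⟩
  have hx' : x ∈ (p.transfer _ hsub).support := by
    rw [SimpleGraph.Walk.support_transfer]; exact hx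
  exact ⟨(p.transfer _ hsub).takeUntil x hx'⟩

lemma reachable_delete_of_walk {G : SimpleGraph V} {e : Sym2 V}
    (hr : ∀ x y : V, s(x,y) = e → (G \ fromEdgeSet {e}).Reachable x y)
    {u v : V} (p : G.Walk u v) : (G \ fromEdgeSet {e}).Reachable u v := by
  induction p with
  | nil => exact Reachable.refl _
  | @cons u u' v h q ih =>
    refine Reachable.trans ?_ ih
    by_cases he : s(u, u') = e
    · exact hr u u' he
    · exact Adj.reachable (by simp only [sdiff_adj, fromEdgeSet_adj]; exact ⟨h, fun hh => he hh.1⟩)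

lemma connected_delete_nonbridge {G : SimpleGraph V} (hconn : G.Connected) {e : Sym2 V}
    (he : e ∈ G.edgeSet) (hnb : ¬ G.IsBridge e) : (G \ fromEdgeSet {e}).Connected := by
  induction e using Sym2.ind with
  | _ a b =>
    rw [SimpleGraph.isBridge_iff, not_not] at hnb
    have hre : (G \ fromEdgeSet {s(a,b)}).Reachable a b := hnb
    rw [connected_iff]
    refine ⟨fun u v => ?_, hconn.nonempty⟩
    obtain ⟨p⟩ := hconn.preconnected u v
    refine reachable_delete_of_walk (fun x y hxy => ?_) p
    rw [Sym2.eq_iff] at hxy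
    rcases hxy with ⟨rfl, rfl⟩ | ⟨rfl, rfl⟩
    · exact hre
    · exact hre.symm

lemma connected_card_vert_le [Fintype V] :
    ∀ (k : ℕ) (G : SimpleGraph V), G.edgeSet.ncard = k → G.Connected →
      Fintype.card V ≤ k + 1 := by
  intro k
  induction k using Nat.strong_induction_on with
  | _ k ih =>
    intro G hk hconn
    classical
    by_cases hacyc : G.IsAcyclic
    · letI : Fintype G.edgeSet := (Set.toFinite _).fintype
      have htree : G.IsTree := ⟨hconn, hacyc⟩
      have hcard := htree.card_edgeFinset
      have : G.edgeFinset.card = k := by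
        rw [← hk, Set.ncard_eq_toFinset_card']
        congr 1
      omega
    · rw [SimpleGraph.isAcyclic_iff_forall_edge_isBridge] at hacyc
      push_neg at hacyc
      obtain ⟨e, heG, hnb⟩ := hacyc
      have hconn' : (G \ fromEdgeSet {e}).Connected :=
        connected_delete_nonbridge hconn heG hnb
      have hes : (G \ fromEdgeSet {e}).edgeSet = G.edgeSet \ {e} := by
        rw [edgeSet_sdiff, edgeSet_fromEdgeSet, edgeSet_sdiff_sdiff_isDiag]
      have hcard' : (G \ fromEdgeSet {e}).edgeSet.ncard = k - 1 := by
        rw [hes, Set.ncard_diff_singleton_of_mem heG, hk]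
      have hkpos : 0 < k := by
        rw [← hk]
        exact Set.ncard_pos (Set.toFinite _) |>.mpr ⟨e, heG⟩
      have := ih (k - 1) (by omega) _ hcard' hconn'
      omega

lemma acyclic_of_card [Fintype V] (G : SimpleGraph V) (hconn : G.Connected)
    (hcard : G.edgeSet.ncard + 1 = Fintype.card V) : G.IsAcyclic := by
  by_contra hacyc
  rw [SimpleGraph.isAcyclic_iff_forall_edge_isBridge] at hacyc
  push_neg at hacyc
  obtain ⟨e, heG, hnb⟩ := hacyc
  have hconn' : (G \ fromEdgeSet {e}).Connected := connected_delete_nonbridge hconn heG hnb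
  have hes : (G \ fromEdgeSet {e}).edgeSet = G.edgeSet \ {e} := by
    rw [edgeSet_sdiff, edgeSet_fromEdgeSet, edgeSet_sdiff_sdiff_isDiag]
  have hcard' : (G \ fromEdgeSet {e}).edgeSet.ncard = G.edgeSet.ncard - 1 := by
    rw [hes, Set.ncard_diff_singleton_of_mem heG]
  have hkpos : 0 < G.edgeSet.ncard :=
    Set.ncard_pos (Set.toFinite _) |>.mpr ⟨e, heG⟩
  have := connected_card_vert_le _ _ hcard' hconn'
  omega

lemma bridge_count_two [DecidableEq V] {G : SimpleGraph V} {s : V} (w : G.Walk s s)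
    (hspan : ∀ v : V, v ∈ w.support) {e : Sym2 V} (hbr : G.IsBridge e) :
    2 ≤ w.edges.count e := by
  induction e using Sym2.ind with
  | _ a b =>
    rw [SimpleGraph.isBridge_iff] at hbr
    have hnr := hbr
    have heven : Even (w.edges.count s(a,b)) := (count_edge_parity hnr w).mp Iff.rfl
    have hmem : s(a,b) ∈ w.edges := by
      by_contra hnot
      exact hnr (((walk_avoid_reachable w hnot (hspan a)).symm).trans
        (walk_avoid_reachable w hnot (hspan b)))
    have hpos : 0 < w.edges.count s(a,b) := List.count_pos_iff.mpr hmem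
    obtain ⟨m, hm⟩ := heven
    omega

lemma tadpole_card_edges [Fintype V] [DecidableEq V] (G : SimpleGraph V) [DecidableRel G.Adj]
    (x y : V) (hxy : x ≠ y) (hx : G.degree x = 1) (hy : G.degree y = 3)
    (hother : ∀ v : V, v ≠ x → v ≠ y → G.degree v = 2) :
    G.edgeFinset.card = Fintype.card V := by
  have hsum := G.sum_degrees_eq_twice_card_edges
  have hsplit : (univ : Finset V) = (univ \ {x, y}) ∪ {x, y} := by
    rw [Finset.sdiff_union_of_subset (Finset.subset_univ _)]
  have hdisj : Disjoint ((univ : Finset V) \ {x, y}) {x, y} := Finset.sdiff_disjoint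
  have hn2 : 2 ≤ Fintype.card V := by
    have := Finset.card_le_card (Finset.subset_univ ({x, y} : Finset V))
    rwa [Finset.card_pair hxy] at this
  have hsum2 : ∑ v, G.degree v = 2 * (Fintype.card V - 2) + 4 := by
    rw [hsplit, Finset.sum_union hdisj, Finset.sum_pair hxy, hx, hy]
    have : ∑ v ∈ (univ \ {x, y} : Finset V), G.degree v
        = ∑ _v ∈ (univ \ {x, y} : Finset V), 2 := by
      refine Finset.sum_congr rfl fun v hv => ?_
      simp only [Finset.mem_sdiff, Finset.mem_insert, Finset.mem_singleton] at hv
      exact hother v (fun h => hv.2 (Or.inl h)) (fun h => hv.2 (Or.inr h))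
    rw [this, Finset.sum_const, smul_eq_mul]
    have hcard : (univ \ {x, y} : Finset V).card = Fintype.card V - 2 := by
      rw [Finset.card_sdiff_of_subset (Finset.subset_univ _), Finset.card_pair hxy, Finset.card_univ]
    rw [hcard]
    ring
  rw [hsum2] at hsum
  omega

end TadpoleAux

open SimpleGraph Finset TadpoleAux in
/-- In a tadpole graph with positive edge weights, with `S` the total weight of
the stem edges (bridges), `Ccyc` the total weight of the cycle edges
(non-bridges), and `cmax` the maximum weight among the cycle edges, every
closed spanning walk has cost at least `2 * S + min Ccyc (2 * (Ccyc - cmax))`. -/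
theorem stmt_11 {V : Type*} [Fintype V] [DecidableEq V] (G : SimpleGraph V)
    [DecidableRel G.Adj] [DecidablePred G.IsBridge] (htad : IsTadpole G)
    (c : Sym2 V → ℝ) (hc : ∀ e ∈ G.edgeSet, 0 < c e)
    (S : ℝ) (hS : S = ∑ e ∈ G.edgeFinset.filter (fun e => G.IsBridge e), c e)
    (Ccyc : ℝ) (hCcyc : Ccyc = ∑ e ∈ G.edgeFinset.filter (fun e => ¬ G.IsBridge e), c e)
    (cmax : ℝ) (hcmax : IsGreatest (c '' {e ∈ G.edgeSet | ¬ G.IsBridge e}) cmax)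
    (s : V) (w : G.Walk s s) (hspan : ∀ v : V, v ∈ w.support) :
    2 * S + min Ccyc (2 * (Ccyc - cmax)) ≤ walkCost c w := by
  obtain ⟨hconn, x, y, hxy, hx, hy, hother⟩ := htad
  set cnt : Sym2 V → ℕ := fun e => w.edges.count e with hcnt
  -- rewrite the cost as a sum over all edges of the graph
  have hcost : walkCost c w = ∑ e ∈ G.edgeFinset, (cnt e : ℝ) * c e := by
    rw [walkCost, Finset.sum_list_map_count]
    simp_rw [nsmul_eq_mul]
    refine Finset.sum_subset ?_ ?_
    · intro e he
      rw [List.mem_toFinset] at he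
      exact mem_edgeFinset.mpr (w.edges_subset_edgeSet he)
    · intro e _ he
      rw [List.mem_toFinset] at he
      simp [hcnt, List.count_eq_zero.mpr he]
  have hsplitsum : walkCost c w
      = (∑ e ∈ G.edgeFinset.filter (fun e => G.IsBridge e), (cnt e : ℝ) * c e)
        + ∑ e ∈ G.edgeFinset.filter (fun e => ¬ G.IsBridge e), (cnt e : ℝ) * c e := by
    rw [hcost, Finset.sum_filter_add_sum_filter_not]
  -- bridge edges are each traversed at least twice
  have hA : 2 * S ≤ ∑ e ∈ G.edgeFinset.filter (fun e => G.IsBridge e), (cnt e : ℝ) * c e := by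
    rw [hS, Finset.mul_sum]
    refine Finset.sum_le_sum fun e he => ?_
    rw [Finset.mem_filter, mem_edgeFinset] at he
    have h2 : 2 ≤ cnt e := bridge_count_two w hspan he.2
    have hcpos := hc e he.1
    have h2' : (2 : ℝ) ≤ (cnt e : ℝ) := by exact_mod_cast h2
    nlinarith
  -- the non-bridge part
  have hB : min Ccyc (2 * (Ccyc - cmax))
      ≤ ∑ e ∈ G.edgeFinset.filter (fun e => ¬ G.IsBridge e), (cnt e : ℝ) * c e := by
    by_cases hall : ∀ f ∈ G.edgeFinset.filter (fun e => ¬ G.IsBridge e), f ∈ w.edges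
    · refine le_trans (min_le_left _ _) ?_
      rw [hCcyc]
      refine Finset.sum_le_sum fun e he => ?_
      have h1 : 1 ≤ cnt e := List.count_pos_iff.mpr (hall e he)
      have hcpos := hc e (mem_edgeFinset.mp (Finset.mem_filter.mp he).1)
      have h1' : (1 : ℝ) ≤ (cnt e : ℝ) := by exact_mod_cast h1
      nlinarith
    · push_neg at hall
      obtain ⟨e0, he0f, he0w⟩ := hall
      have he0f' := he0f
      rw [Finset.mem_filter] at he0f'
      obtain ⟨he0E, he0nb⟩ := he0f'
      have he0set : e0 ∈ G.edgeSet := mem_edgeFinset.mp he0E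
      set G' := G \ fromEdgeSet {e0} with hG'def
      have hconn' : G'.Connected := connected_delete_nonbridge hconn he0set he0nb
      have hes : G'.edgeSet = G.edgeSet \ {e0} := by
        rw [hG'def, edgeSet_sdiff, edgeSet_fromEdgeSet, edgeSet_sdiff_sdiff_isDiag]
      have hEcard : G.edgeSet.ncard = Fintype.card V := by
        rw [Set.ncard_eq_toFinset_card']
        exact tadpole_card_edges G x y hxy hx hy hother
      have hcard' : G'.edgeSet.ncard + 1 = Fintype.card V := by
        rw [hes, Set.ncard_diff_singleton_of_mem he0set, hEcard]
        have : 0 < Fintype.card V := Fintype.card_pos_iff.mpr hconn.nonempty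
        omega
      have hacyc : G'.IsAcyclic := acyclic_of_card _ hconn' hcard'
      have hsub : ∀ f ∈ w.edges, f ∈ G'.edgeSet := by
        intro f hf
        rw [hes]
        exact ⟨w.edges_subset_edgeSet hf, fun h => he0w (h ▸ hf)⟩
      have hsupp : ∀ v : V, v ∈ (w.transfer G' hsub).support := by
        intro v
        rw [SimpleGraph.Walk.support_transfer]
        exact hspan v
      have hkey : ∀ f ∈ (G.edgeFinset.filter (fun e => ¬ G.IsBridge e)).erase e0,
          2 ≤ cnt f := by
        intro f hf
        rw [Finset.mem_erase, Finset.mem_filter] at hf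
        obtain ⟨hfne, hfE, -⟩ := hf
        have hf' : f ∈ G'.edgeSet := by
          rw [hes]
          exact ⟨mem_edgeFinset.mp hfE, hfne⟩
        have hbr' : G'.IsBridge f :=
          (SimpleGraph.isAcyclic_iff_forall_edge_isBridge).mp hacyc hf'
        have h2 := bridge_count_two (w.transfer G' hsub) hsupp hbr'
        rwa [SimpleGraph.Walk.edges_transfer] at h2
      have hnonneg : ∀ i ∈ G.edgeFinset.filter (fun e => ¬ G.IsBridge e),
          0 ≤ (cnt i : ℝ) * c i := by
        intro i hi
        have := hc i (mem_edgeFinset.mp (Finset.mem_filter.mp hi).1)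
        positivity
      have hsum_sub : ∑ f ∈ (G.edgeFinset.filter (fun e => ¬ G.IsBridge e)).erase e0,
            (cnt f : ℝ) * c f
          ≤ ∑ f ∈ G.edgeFinset.filter (fun e => ¬ G.IsBridge e), (cnt f : ℝ) * c f :=
        Finset.sum_le_sum_of_subset_of_nonneg (Finset.erase_subset _ _)
          (fun i hi _ => hnonneg i hi)
      have herase : ∑ f ∈ (G.edgeFinset.filter (fun e => ¬ G.IsBridge e)).erase e0, c f
          = Ccyc - c e0 := by
        have := Finset.add_sum_erase _ c he0f
        rw [hCcyc]
        linarith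
      have h2sum : 2 * (Ccyc - c e0)
          ≤ ∑ f ∈ (G.edgeFinset.filter (fun e => ¬ G.IsBridge e)).erase e0,
              (cnt f : ℝ) * c f := by
        have hle : ∑ f ∈ (G.edgeFinset.filter (fun e => ¬ G.IsBridge e)).erase e0, 2 * c f
            ≤ ∑ f ∈ (G.edgeFinset.filter (fun e => ¬ G.IsBridge e)).erase e0,
                (cnt f : ℝ) * c f := by
          refine Finset.sum_le_sum fun f hf => ?_
          have h2 : 2 ≤ cnt f := hkey f hf
          have hcpos := hc f
            (mem_edgeFinset.mp (Finset.mem_filter.mp (Finset.mem_erase.mp hf).2).1)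
          have h2' : (2 : ℝ) ≤ (cnt f : ℝ) := by exact_mod_cast h2
          nlinarith
        calc 2 * (Ccyc - c e0)
            = ∑ f ∈ (G.edgeFinset.filter (fun e => ¬ G.IsBridge e)).erase e0, 2 * c f := by
              rw [← Finset.mul_sum, herase]
          _ ≤ _ := hle
      have hce0 : c e0 ≤ cmax := hcmax.2 ⟨e0, ⟨he0set, he0nb⟩, rfl⟩
      calc min Ccyc (2 * (Ccyc - cmax)) ≤ 2 * (Ccyc - cmax) := min_le_right _ _
        _ ≤ 2 * (Ccyc - c e0) := by linarith
        _ ≤ _ := le_trans h2sum hsum_sub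
  linarith [hA, hB, hsplitsum.ge, hsplitsum.le]
end

section
/- In a tadpole graph with positive edge weights, let S denote the total weight of the stem edges and C_cyc the total weight of the cycle edges. For every start vertex s: (a) there exists a closed walk from s to s visiting every vertex whose cost equals 2S + C_cyc (traversing each stem edge exactly twice and each cycle edge exactly once); and (b) for every cycle edge e there exists a closed walk from s to s visiting every vertex whose cost equals 2S + 2(C_cyc − c(e)) (traversing each stem edge and each cycle edge other than e exactly twice and never traversing e). -/
open SimpleGraph List

namespace TadAux

variable {V : Type*} [Fintype V] [DecidableEq V] {G : SimpleGraph V} [DecidableRel G.Adj]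
set_option linter.unusedSectionVars false

lemma exists_first {u v : V} (p : G.Walk u v) (h : ¬ p.Nil) :
    ∃ w, s(u, w) ∈ p.edges ∧ w ∈ p.support := by
  cases p with
  | nil => simp at h
  | @cons u b v hadj q => exact ⟨b, by simp, by simp [q.start_mem_support]⟩

lemma exists_last {u v : V} (p : G.Walk u v) (h : ¬ p.Nil) :
    ∃ w, s(v, w) ∈ p.edges ∧ w ∈ p.support := by
  obtain ⟨w, hw1, hw2⟩ := exists_first p.reverse (by
    simp only [SimpleGraph.Walk.nil_iff_length_eq, SimpleGraph.Walk.length_reverse] at *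
    exact h)
  refine ⟨w, ?_, ?_⟩
  · simpa [SimpleGraph.Walk.edges_reverse] using hw1
  · simpa [SimpleGraph.Walk.support_reverse] using hw2

lemma end_mem_tail {u v : V} (p : G.Walk u v) (h : ¬ p.Nil) : v ∈ p.support.tail := by
  cases p with
  | nil => simp at h
  | cons h q => simpa using q.end_mem_support

lemma mem_support_of_mem_edges {u v w : V} {p : G.Walk u v} {e : Sym2 V}
    (he : e ∈ p.edges) (hw : w ∈ e) : w ∈ p.support := by
  induction e with
  | _ a b =>
    rcases Sym2.mem_iff.mp hw with rfl | rfl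
    · exact p.fst_mem_support_of_mem_edges he
    · exact p.snd_mem_support_of_mem_edges he

lemma walk_closed {P : V → Prop} (hcl : ∀ ⦃a b : V⦄, G.Adj a b → P a → P b) :
    ∀ {u v : V} (p : G.Walk u v), P u → P v := by
  intro u v p
  induction p with
  | nil => exact id
  | cons h q ih => exact fun hu => ih (hcl h hu)

lemma cross {A : V → Prop} {f : Sym2 V}
    (hU : ∀ ⦃a b : V⦄, G.Adj a b → A a → ¬ A b → s(a, b) = f) :
    ∀ {u v : V} (p : G.Walk u v), A u → ¬ A v → f ∈ p.edges := by
  intro u v p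
  induction p with
  | nil => exact fun h h' => absurd h h'
  | @cons u w v h q ih =>
    intro hu hv
    by_cases hw : A w
    · simp [ih hw hv]
    · simp [← hU h hu hw]

lemma incidence_sub {v : V} {F : Finset (Sym2 V)} (hF : F ⊆ G.incidenceFinset v)
    (hcard : G.degree v ≤ F.card) {e : Sym2 V} (he : e ∈ G.edgeSet) (hv : v ∈ e) : e ∈ F := by
  have : G.incidenceFinset v = F := by
    refine (Finset.eq_of_subset_of_card_le hF ?_).symm
    rwa [G.card_incidenceFinset_eq_degree]
  rw [← this, SimpleGraph.mem_incidenceFinset]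
  exact ⟨he, hv⟩

lemma two_edges_of_closed {w : V} (C : G.Walk w w) (hC : C.edges.Nodup) (h2 : 2 ≤ C.length) :
    ∃ e₁ e₂ : Sym2 V, e₁ ∈ C.edges ∧ e₂ ∈ C.edges ∧ e₁ ≠ e₂ ∧ w ∈ e₁ ∧ w ∈ e₂ := by
  cases C with
  | nil => simp at h2
  | @cons _ b _ h q =>
    have hq : ¬ q.Nil := by
      rw [SimpleGraph.Walk.nil_iff_length_eq]
      simp only [SimpleGraph.Walk.length_cons] at h2
      omega
    obtain ⟨z, hz1, _⟩ := exists_last q hq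
    refine ⟨s(w, b), s(w, z), by simp, by simp [hz1], ?_, by simp, by simp⟩
    simp only [SimpleGraph.Walk.edges_cons, List.nodup_cons] at hC
    intro hEq
    exact hC.1 (hEq ▸ hz1)

lemma cycle_two_edges {y v : V} {K : G.Walk y y} (hK : K.IsCycle) (hv : v ∈ K.support) :
    ∃ e₁ e₂ : Sym2 V, e₁ ∈ K.edges ∧ e₂ ∈ K.edges ∧ e₁ ≠ e₂ ∧ v ∈ e₁ ∧ v ∈ e₂ := by
  have hrot : (K.rotate _ hv).IsCycle := hK.rotate hv
  have hperm : (K.rotate _ hv).edges ~ K.edges := (K.rotate_edges _ hv).perm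
  obtain ⟨e₁, e₂, h1, h2, h3, h4, h5⟩ :=
    two_edges_of_closed (K.rotate _ hv) hrot.edges_nodup (by have := hrot.three_le_length; omega)
  exact ⟨e₁, e₂, hperm.mem_iff.mp h1, hperm.mem_iff.mp h2, h3, h4, h5⟩

lemma path_interior_two_edges {x y v : V} {Q : G.Walk x y} (hQ : Q.IsPath)
    (hv : v ∈ Q.support) (hvx : v ≠ x) (hvy : v ≠ y) :
    ∃ e₁ e₂ : Sym2 V, e₁ ∈ Q.edges ∧ e₂ ∈ Q.edges ∧ e₁ ≠ e₂ ∧ v ∈ e₁ ∧ v ∈ e₂ := by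
  have hsplit := Q.take_spec hv
  have hT : ¬ (Q.takeUntil v hv).Nil := SimpleGraph.Walk.not_nil_of_ne (Ne.symm hvx)
  have hD : ¬ (Q.dropUntil v hv).Nil := SimpleGraph.Walk.not_nil_of_ne hvy
  obtain ⟨z₁, hz1, _⟩ := exists_last _ hT
  obtain ⟨z₂, hz2, _⟩ := exists_first _ hD
  have hE : Q.edges = (Q.takeUntil v hv).edges ++ (Q.dropUntil v hv).edges := by
    conv_lhs => rw [← hsplit]
    rw [SimpleGraph.Walk.edges_append]
  have hnd : Q.edges.Nodup := hQ.isTrail.edges_nodup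
  rw [hE] at hnd
  refine ⟨s(v, z₁), s(v, z₂), ?_, ?_, ?_, by simp, by simp⟩
  · rw [hE]; exact List.mem_append_left _ hz1
  · rw [hE]; exact List.mem_append_right _ hz2
  · intro hEq
    exact (List.disjoint_of_nodup_append hnd) hz1 (hEq ▸ hz2)

lemma mem_support_rotate {v u : V} (c : G.Walk v v) (h : u ∈ c.support) (w : V) :
    w ∈ (c.rotate _ h).support ↔ w ∈ c.support := by
  rw [SimpleGraph.Walk.rotate, SimpleGraph.Walk.mem_support_append_iff]
  conv_rhs => rw [← c.take_spec h]
  rw [SimpleGraph.Walk.mem_support_append_iff]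
  exact or_comm

lemma walk_edge_split {u v : V} {p : G.Walk u v} {f : Sym2 V} (hf : f ∈ p.edges) :
    ∃ (a b : V) (p₁ : G.Walk u a) (h : G.Adj a b) (p₂ : G.Walk b v),
      f = s(a, b) ∧ p = p₁.append (SimpleGraph.Walk.cons h p₂) := by
  induction p with
  | nil => simp at hf
  | @cons u w v h q ih =>
    rw [SimpleGraph.Walk.edges_cons, List.mem_cons] at hf
    rcases hf with rfl | hf
    · exact ⟨u, w, SimpleGraph.Walk.nil, h, q, rfl, rfl⟩
    · obtain ⟨a, b, p₁, h', p₂, rfl, rfl⟩ := ih hf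
      exact ⟨a, b, SimpleGraph.Walk.cons h p₁, h', p₂, rfl, rfl⟩


lemma cycle_erase {y : V} {K : G.Walk y y} (hK : K.IsCycle) {e : Sym2 V} (he : e ∈ K.edges) :
    ∃ (b a : V) (R : G.Walk b a), K.edges ~ (e :: R.edges) ∧
      ∀ v ∈ K.support, v ∈ R.support := by
  induction e with
  | _ a b =>
  have ha : a ∈ K.support := K.fst_mem_support_of_mem_edges he
  set C := K.rotate _ ha with hCdef
  have hCc : C.IsCycle := hK.rotate ha
  have hperm : C.edges ~ K.edges := (K.rotate_edges _ ha).perm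
  have heC : s(a, b) ∈ C.edges := hperm.mem_iff.mpr he
  obtain ⟨a', b', p₁, hadj, p₂, hfe, hsplit⟩ := walk_edge_split heC
  have hsupC : C.support.tail = p₁.support.tail ++ p₂.support := by
    have h1 : C.support = p₁.support ++ p₂.support := by
      rw [hsplit, SimpleGraph.Walk.support_append, SimpleGraph.Walk.support_cons, List.tail_cons]
    have h2 : C.support = a :: C.support.tail := C.support_eq_cons
    have h3 : p₁.support = a :: p₁.support.tail := p₁.support_eq_cons
    rw [h2, h3] at h1
    exact (List.cons.inj h1).2
  have hnd : (p₁.support.tail ++ p₂.support).Nodup := hsupC ▸ hCc.support_nodup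
  rcases Sym2.eq_iff.mp hfe with ⟨rfl, rfl⟩ | ⟨rfl, rfl⟩
  · -- e traversed as (a, b) : p₁ : Walk a a must be nil
    have hp1 : p₁.Nil := by
      by_contra hn
      have h1 : a ∈ p₁.support.tail := end_mem_tail p₁ hn
      have h2 : a ∈ p₂.support := p₂.end_mem_support
      exact (List.disjoint_of_nodup_append hnd) h1 h2
    rw [SimpleGraph.Walk.nil_iff_eq_nil] at hp1
    subst hp1
    rw [SimpleGraph.Walk.nil_append] at hsplit
    refine ⟨b, a, p₂, ?_, ?_⟩
    · have : C.edges = s(a, b) :: p₂.edges := by rw [hsplit, SimpleGraph.Walk.edges_cons]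
      rw [← this]; exact hperm.symm
    · intro v hv
      rw [← mem_support_rotate K ha v, ← hCdef, hsplit, SimpleGraph.Walk.support_cons,
        List.mem_cons] at hv
      rcases hv with rfl | hv
      · exact p₂.end_mem_support
      · exact hv
  · -- e traversed as (b, a) : p₂ : Walk a a must be nil
    have hp2 : p₂.Nil := by
      by_contra hn
      have h1 : a ∈ p₂.support.tail := end_mem_tail p₂ hn
      have h2 : p₂.support.Nodup := (List.nodup_append.mp hnd).2.1
      rw [p₂.support_eq_cons, List.nodup_cons] at h2
      exact h2.1 h1
    rw [SimpleGraph.Walk.nil_iff_eq_nil] at hp2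
    subst hp2
    refine ⟨b, a, p₁.reverse, ?_, ?_⟩
    · have h1 : C.edges = p₁.edges ++ [s(b, a)] := by
        rw [hsplit, SimpleGraph.Walk.edges_append, SimpleGraph.Walk.edges_cons,
          SimpleGraph.Walk.edges_nil]
      calc K.edges ~ C.edges := hperm.symm
        _ = p₁.edges ++ [s(b, a)] := h1
        _ ~ s(b, a) :: p₁.edges := List.perm_append_singleton _ _
        _ ~ s(a, b) :: p₁.reverse.edges := by
            rw [Sym2.eq_swap, SimpleGraph.Walk.edges_reverse]
            exact (List.reverse_perm p₁.edges).symm.cons _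
    · intro v hv
      rw [← mem_support_rotate K ha v, ← hCdef, hsplit,
        SimpleGraph.Walk.mem_support_append_iff] at hv
      rw [SimpleGraph.Walk.support_reverse, List.mem_reverse]
      rcases hv with hv | hv
      · exact hv
      · have : v = b ∨ v = a := by simpa using hv
        rcases this with rfl | rfl
        · exact p₁.end_mem_support
        · exact p₁.start_mem_support

lemma first_hit {T : V → Prop} :
    ∀ {u w : V} (p : G.Walk u w), p.IsPath → T w →
      ∃ (t : V) (q : G.Walk u t), q.IsPath ∧ T t ∧ (∀ v ∈ q.support, T v → v = t) ∧
        q.support ⊆ p.support := by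
  intro u w p
  induction p with
  | nil =>
    intro _ hT
    exact ⟨_, SimpleGraph.Walk.nil, by simp, hT, by simp +contextual, fun _ h => h⟩
  | @cons u b w h q ih =>
    intro hp hT
    by_cases hu : T u
    · exact ⟨_, SimpleGraph.Walk.nil, by simp, hu, by simp +contextual, by simp⟩
    · obtain ⟨t, q', hq', hTt, hfh, hsub⟩ := ih hp.of_cons hT
      refine ⟨t, SimpleGraph.Walk.cons h q', ?_, hTt, ?_, ?_⟩
      · rw [SimpleGraph.Walk.cons_isPath_iff]
        exact ⟨hq', fun hmem => ((SimpleGraph.Walk.cons_isPath_iff _ _).mp hp).2 (hsub hmem)⟩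
      · intro v hv hTv
        rw [SimpleGraph.Walk.support_cons, List.mem_cons] at hv
        rcases hv with rfl | hv
        · exact absurd hTv hu
        · exact hfh v hv hTv
      · rw [SimpleGraph.Walk.support_cons, SimpleGraph.Walk.support_cons]
        exact List.cons_subset_cons _ hsub

lemma card_edges {x y : V} (hxy : x ≠ y) (hdx : G.degree x = 1) (hdy : G.degree y = 3)
    (hdeg : ∀ v : V, v ≠ x → v ≠ y → G.degree v = 2) :
    2 * G.edgeFinset.card = 2 * Fintype.card V := by
  have hsum := G.sum_degrees_eq_twice_card_edges
  have hx : x ∈ (Finset.univ : Finset V) := Finset.mem_univ x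
  have hy : y ∈ Finset.univ.erase x := Finset.mem_erase.mpr ⟨hxy.symm, Finset.mem_univ y⟩
  rw [← Finset.add_sum_erase _ _ hx, ← Finset.add_sum_erase _ _ hy] at hsum
  have h2 : ∀ v ∈ (Finset.univ.erase x).erase y, G.degree v = 2 := by
    intro v hv
    rw [Finset.mem_erase, Finset.mem_erase] at hv
    exact hdeg v hv.2.1 hv.1
  rw [Finset.sum_congr rfl h2, Finset.sum_const, smul_eq_mul,
    Finset.card_erase_of_mem hy, Finset.card_erase_of_mem hx, Finset.card_univ] at hsum
  have hcard : 2 ≤ Fintype.card V := Fintype.one_lt_card_iff_nontrivial.mpr ⟨⟨x, y, hxy⟩⟩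
  rw [hdx, hdy] at hsum
  omega


lemma tadpole_struct (hconn : G.Connected) {x y : V} (hxy : x ≠ y)
    (hdx : G.degree x = 1) (hdy : G.degree y = 3)
    (hdeg : ∀ v : V, v ≠ x → v ≠ y → G.degree v = 2)
    (hcard2 : 2 * G.edgeFinset.card = 2 * Fintype.card V) :
    ∃ (Q : G.Walk x y) (K : G.Walk y y), Q.IsPath ∧ K.IsCycle ∧
      (∀ v ∈ Q.support, v ∈ K.support → v = y) ∧
      (∀ v : V, v ∈ Q.support ∨ v ∈ K.support) ∧
      (∀ f ∈ G.edgeSet, f ∈ Q.edges ∨ f ∈ K.edges) ∧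
      (∀ f ∈ Q.edges, G.IsBridge f) ∧ (∀ f ∈ K.edges, ¬ G.IsBridge f) := by
  classical
  -- the graph is not acyclic
  have hnac : ¬ G.IsAcyclic := by
    intro hac
    have ht : G.IsTree := ⟨hconn, hac⟩
    have h1 := ht.card_edgeFinset
    have hpos : 0 < Fintype.card V := Fintype.card_pos_iff.mpr ⟨x⟩
    omega
  rw [SimpleGraph.IsAcyclic] at hnac
  push_neg at hnac
  obtain ⟨v₀, C, hC⟩ := hnac
  -- x is in no cycle
  have hxC : ∀ {v : V} (D : G.Walk v v), D.IsCycle → x ∉ D.support := by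
    intro v D hD hx
    obtain ⟨e₁, e₂, h1, h2, h12, hx1, hx2⟩ := cycle_two_edges hD hx
    have hsub : ({e₁, e₂} : Finset (Sym2 V)) ⊆ G.incidenceFinset x := by
      intro e hee
      rw [SimpleGraph.mem_incidenceFinset]
      rcases Finset.mem_insert.mp hee with rfl | hee
      · exact ⟨D.edges_subset_edgeSet h1, hx1⟩
      · rw [Finset.mem_singleton] at hee; subst hee
        exact ⟨D.edges_subset_edgeSet h2, hx2⟩
    have hle := Finset.card_le_card hsub
    rw [SimpleGraph.card_incidenceFinset_eq_degree, hdx, Finset.card_pair h12] at hle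
    omega
  -- y is on the cycle C
  have hyC : y ∈ C.support := by
    by_contra hy
    have hclosed : ∀ ⦃a b : V⦄, G.Adj a b → a ∈ C.support → b ∈ C.support := by
      intro a b hab ha
      have hax : a ≠ x := fun h => hxC C hC (h ▸ ha)
      have hay : a ≠ y := fun h => hy (h ▸ ha)
      obtain ⟨e₁, e₂, h1, h2, h12, ha1, ha2⟩ := cycle_two_edges hC ha
      have hsub : ({e₁, e₂} : Finset (Sym2 V)) ⊆ G.incidenceFinset a := by
        intro e hee
        rw [SimpleGraph.mem_incidenceFinset]
        rcases Finset.mem_insert.mp hee with rfl | hee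
        · exact ⟨C.edges_subset_edgeSet h1, ha1⟩
        · rw [Finset.mem_singleton] at hee; subst hee
          exact ⟨C.edges_subset_edgeSet h2, ha2⟩
      have hmem : s(a, b) ∈ ({e₁, e₂} : Finset (Sym2 V)) :=
        incidence_sub hsub (by rw [hdeg a hax hay, Finset.card_pair h12])
          (G.mem_edgeSet.mpr hab) (Sym2.mem_mk_left a b)
      have : s(a, b) ∈ C.edges := by
        rcases Finset.mem_insert.mp hmem with h | h
        · exact h ▸ h1
        · rw [Finset.mem_singleton] at h; exact h ▸ h2
      exact mem_support_of_mem_edges this (Sym2.mem_mk_right a b)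
    obtain ⟨p⟩ := hconn.preconnected v₀ y
    exact hy (walk_closed hclosed p C.start_mem_support)
  -- rotate the cycle to be based at y
  set K := C.rotate _ hyC with hKdef
  have hK : K.IsCycle := hC.rotate hyC
  have hKsup : ∀ w, w ∈ K.support ↔ w ∈ C.support := fun w => mem_support_rotate C hyC w
  have hxK : x ∉ K.support := hxC K hK
  have hyK : y ∈ K.support := K.start_mem_support
  -- find the stem path from x to the cycle
  obtain ⟨p0⟩ := hconn.preconnected x y
  obtain ⟨t, q, hq, hTt, hfh, _⟩ :=
    first_hit (T := fun v => v ∈ K.support) p0.bypass p0.bypass_isPath hyK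
  have hxt : x ≠ t := fun h => hxK (h ▸ hTt)
  have hqnil : ¬ q.Nil := SimpleGraph.Walk.not_nil_of_ne hxt
  obtain ⟨w₀, hw1, hw2⟩ := exists_last q hqnil
  have hadjtw : G.Adj t w₀ := G.mem_edgeSet.mp (q.edges_subset_edgeSet hw1)
  have hw0t : w₀ ≠ t := fun h => G.irrefl (h ▸ hadjtw)
  have hw0K : w₀ ∉ K.support := fun h => hw0t (hfh w₀ hw2 h)
  have hty : t = y := by
    by_contra hty
    obtain ⟨e₁, e₂, h1, h2, h12, ht1, ht2⟩ := cycle_two_edges hK hTt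
    have hsub : ({e₁, e₂} : Finset (Sym2 V)) ⊆ G.incidenceFinset t := by
      intro e hee
      rw [SimpleGraph.mem_incidenceFinset]
      rcases Finset.mem_insert.mp hee with rfl | hee
      · exact ⟨K.edges_subset_edgeSet h1, ht1⟩
      · rw [Finset.mem_singleton] at hee; subst hee
        exact ⟨K.edges_subset_edgeSet h2, ht2⟩
    have hmem : s(t, w₀) ∈ ({e₁, e₂} : Finset (Sym2 V)) :=
      incidence_sub hsub
        (by rw [hdeg t (Ne.symm hxt) hty, Finset.card_pair h12])
        (G.mem_edgeSet.mpr hadjtw) (Sym2.mem_mk_left t w₀)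
    have : s(t, w₀) ∈ K.edges := by
      rcases Finset.mem_insert.mp hmem with h | h
      · exact h ▸ h1
      · rw [Finset.mem_singleton] at h; exact h ▸ h2
    exact hw0K (mem_support_of_mem_edges this (Sym2.mem_mk_right t w₀))
  subst hty
  -- Q is the stem path
  have hQK : ∀ v ∈ q.support, v ∈ K.support → v = t := hfh
  have hqnil' : ¬ q.Nil := hqnil
  -- local edge analysis
  have hlocal : ∀ u : V, u ∈ q.support ∨ u ∈ K.support →
      ∀ f ∈ G.edgeSet, u ∈ f → f ∈ q.edges ∨ f ∈ K.edges := by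
    intro u hu f hf huf
    by_cases hux : u = x
    · subst hux
      obtain ⟨w₁, hew, _⟩ := exists_first q hqnil'
      have hmem : f ∈ ({s(u, w₁)} : Finset (Sym2 V)) := by
        refine incidence_sub ?_ ?_ hf huf
        · intro e hee
          rw [Finset.mem_singleton] at hee; subst hee
          rw [SimpleGraph.mem_incidenceFinset]
          exact ⟨q.edges_subset_edgeSet hew, Sym2.mem_mk_left _ _⟩
        · rw [hdx, Finset.card_singleton]
      rw [Finset.mem_singleton] at hmem
      exact Or.inl (hmem ▸ hew)
    · by_cases huy : u = t
      · subst huy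
        obtain ⟨e₁, e₂, h1, h2, h12, hy1, hy2⟩ := cycle_two_edges hK hyK
        obtain ⟨w₂, hew, hw2s⟩ := exists_last q hqnil'
        have hadj2 : G.Adj u w₂ := G.mem_edgeSet.mp (q.edges_subset_edgeSet hew)
        have hw2u : w₂ ≠ u := fun h => G.irrefl (h ▸ hadj2)
        have hw2K : w₂ ∉ K.support := fun h => hw2u (hQK w₂ hw2s h)
        have he3K : s(u, w₂) ∉ K.edges := fun h =>
          hw2K (mem_support_of_mem_edges h (Sym2.mem_mk_right u w₂))
        have h31 : s(u, w₂) ≠ e₁ := fun h => he3K (h ▸ h1)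
        have h32 : s(u, w₂) ≠ e₂ := fun h => he3K (h ▸ h2)
        have hmem : f ∈ ({e₁, e₂, s(u, w₂)} : Finset (Sym2 V)) := by
          refine incidence_sub ?_ ?_ hf huf
          · intro e hee
            rw [SimpleGraph.mem_incidenceFinset]
            rcases Finset.mem_insert.mp hee with rfl | hee
            · exact ⟨K.edges_subset_edgeSet h1, hy1⟩
            rcases Finset.mem_insert.mp hee with rfl | hee
            · exact ⟨K.edges_subset_edgeSet h2, hy2⟩
            rw [Finset.mem_singleton] at hee; subst hee
            exact ⟨q.edges_subset_edgeSet hew, Sym2.mem_mk_left _ _⟩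
          · rw [hdy]
            rw [Finset.card_insert_of_notMem (by simp [h12, Ne.symm h31]),
              Finset.card_insert_of_notMem (by simp [Ne.symm h32]), Finset.card_singleton]
        rcases Finset.mem_insert.mp hmem with rfl | hmem
        · exact Or.inr h1
        rcases Finset.mem_insert.mp hmem with rfl | hmem
        · exact Or.inr h2
        rw [Finset.mem_singleton] at hmem
        exact Or.inl (hmem ▸ hew)
      · by_cases huK : u ∈ K.support
        · obtain ⟨e₁, e₂, h1, h2, h12, ha1, ha2⟩ := cycle_two_edges hK huK
          have hmem : f ∈ ({e₁, e₂} : Finset (Sym2 V)) := by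
            refine incidence_sub ?_ ?_ hf huf
            · intro e hee
              rw [SimpleGraph.mem_incidenceFinset]
              rcases Finset.mem_insert.mp hee with rfl | hee
              · exact ⟨K.edges_subset_edgeSet h1, ha1⟩
              · rw [Finset.mem_singleton] at hee; subst hee
                exact ⟨K.edges_subset_edgeSet h2, ha2⟩
            · rw [hdeg u hux huy, Finset.card_pair h12]
          rcases Finset.mem_insert.mp hmem with rfl | hmem
          · exact Or.inr h1
          · rw [Finset.mem_singleton] at hmem; exact Or.inr (hmem ▸ h2)
        · have huq : u ∈ q.support := hu.resolve_right huK
          obtain ⟨e₁, e₂, h1, h2, h12, ha1, ha2⟩ := path_interior_two_edges hq huq hux huy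
          have hmem : f ∈ ({e₁, e₂} : Finset (Sym2 V)) := by
            refine incidence_sub ?_ ?_ hf huf
            · intro e hee
              rw [SimpleGraph.mem_incidenceFinset]
              rcases Finset.mem_insert.mp hee with rfl | hee
              · exact ⟨q.edges_subset_edgeSet h1, ha1⟩
              · rw [Finset.mem_singleton] at hee; subst hee
                exact ⟨q.edges_subset_edgeSet h2, ha2⟩
            · rw [hdeg u hux huy, Finset.card_pair h12]
          rcases Finset.mem_insert.mp hmem with rfl | hmem
          · exact Or.inl h1
          · rw [Finset.mem_singleton] at hmem; exact Or.inl (hmem ▸ h2)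
  -- closure and cover
  have hcl : ∀ ⦃a b : V⦄, G.Adj a b → (a ∈ q.support ∨ a ∈ K.support) →
      (b ∈ q.support ∨ b ∈ K.support) := by
    intro a b hab ha
    rcases hlocal a ha s(a, b) (G.mem_edgeSet.mpr hab) (Sym2.mem_mk_left a b) with
      h | h
    · exact Or.inl (mem_support_of_mem_edges h (Sym2.mem_mk_right a b))
    · exact Or.inr (mem_support_of_mem_edges h (Sym2.mem_mk_right a b))
  have hcover : ∀ v : V, v ∈ q.support ∨ v ∈ K.support := by
    intro v
    obtain ⟨p⟩ := hconn.preconnected x v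
    exact walk_closed hcl p (Or.inl q.start_mem_support)
  have hedge : ∀ f ∈ G.edgeSet, f ∈ q.edges ∨ f ∈ K.edges := by
    intro f hf
    induction f with
    | _ a b => exact hlocal a (hcover a) _ hf (Sym2.mem_mk_left a b)
  -- K edges are not bridges
  have hKnb : ∀ f ∈ K.edges, ¬ G.IsBridge f := by
    intro f hf hbr
    rw [SimpleGraph.isBridge_iff_forall_cycle_notMem (K.edges_subset_edgeSet hf)] at hbr
    exact hbr K hK hf
  -- q edges are bridges
  have hQbr : ∀ f ∈ q.edges, G.IsBridge f := by
    intro f hf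
    obtain ⟨a, b, Q₁, hadj, Q₂, rfl, hsplit⟩ := walk_edge_split hf
    have hsupq : q.support = Q₁.support ++ Q₂.support := by
      rw [hsplit, SimpleGraph.Walk.support_append, SimpleGraph.Walk.support_cons, List.tail_cons]
    have hnd : (Q₁.support ++ Q₂.support).Nodup := hsupq ▸ hq.support_nodup
    have hdisj := List.disjoint_of_nodup_append hnd
    have haQ₁ : a ∈ Q₁.support := Q₁.end_mem_support
    have hbQ₁ : b ∉ Q₁.support := fun h => hdisj h Q₂.start_mem_support
    have htQ₁ : t ∉ Q₁.support := fun h => hdisj h Q₂.end_mem_support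
    have hedgesq : q.edges = Q₁.edges ++ s(a, b) :: Q₂.edges := by
      rw [hsplit, SimpleGraph.Walk.edges_append, SimpleGraph.Walk.edges_cons]
    have hU : ∀ ⦃u' v' : V⦄, G.Adj u' v' → u' ∈ Q₁.support → v' ∉ Q₁.support →
        s(u', v') = s(a, b) := by
      intro u' v' huv hu' hv'
      rcases hedge s(u', v') (G.mem_edgeSet.mpr huv) with hQe | hKe
      · rw [hedgesq, List.mem_append, List.mem_cons] at hQe
        rcases hQe with hQe | hQe | hQe
        · exact absurd (mem_support_of_mem_edges hQe (Sym2.mem_mk_right u' v')) hv'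
        · exact hQe
        · exact (hdisj hu' (mem_support_of_mem_edges hQe (Sym2.mem_mk_left u' v'))).elim
      · have : u' ∈ K.support := mem_support_of_mem_edges hKe (Sym2.mem_mk_left u' v')
        have : u' = t := hQK u' (by rw [hsupq]; exact List.mem_append_left _ hu') this
        exact absurd (this ▸ hu') htQ₁
    rw [SimpleGraph.isBridge_iff_adj_and_forall_walk_mem_edges]
    exact fun p => cross hU p haQ₁ hbQ₁
  exact ⟨q, K, hq, hK, hQK, hcover, hedge, hQbr, hKnb⟩


end TadAux

set_option maxHeartbeats 1000000 in
/-- In a tadpole graph with positive edge weights, with `S` the total stem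
(bridge) weight and `Ccyc` the total cycle (non-bridge) weight, for every start
vertex `s`: (a) there is a closed spanning walk of cost `2 * S + Ccyc`
traversing each stem edge exactly twice and each cycle edge exactly once; and
(b) for every cycle edge `e` there is a closed spanning walk of cost
`2 * S + 2 * (Ccyc - c e)` traversing each edge other than `e` exactly twice
and never traversing `e`. -/
theorem stmt_12 {V : Type*} [Fintype V] [DecidableEq V] (G : SimpleGraph V)
    [DecidableRel G.Adj] [DecidablePred G.IsBridge] (htad : IsTadpole G)
    (c : Sym2 V → ℝ) (hc : ∀ e ∈ G.edgeSet, 0 < c e)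
    (S : ℝ) (hS : S = ∑ e ∈ G.edgeFinset.filter (fun e => G.IsBridge e), c e)
    (Ccyc : ℝ) (hCcyc : Ccyc = ∑ e ∈ G.edgeFinset.filter (fun e => ¬ G.IsBridge e), c e)
    (s : V) :
    (∃ w : G.Walk s s, (∀ v : V, v ∈ w.support) ∧
      (∀ e ∈ G.edgeSet, G.IsBridge e → w.edges.count e = 2) ∧
      (∀ e ∈ G.edgeSet, ¬ G.IsBridge e → w.edges.count e = 1) ∧
      walkCost c w = 2 * S + Ccyc) ∧
    (∀ e ∈ G.edgeSet, ¬ G.IsBridge e →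
      ∃ w : G.Walk s s, (∀ v : V, v ∈ w.support) ∧ e ∉ w.edges ∧
        (∀ f ∈ G.edgeSet, f ≠ e → w.edges.count f = 2) ∧
        walkCost c w = 2 * S + 2 * (Ccyc - c e)) := by
  classical
  obtain ⟨hconn, x, y, hxy, hdx, hdy, hdeg⟩ := htad
  obtain ⟨Q, K, hQ, hK, hQK, hcover, hedge, hQbr, hKnb⟩ :=
    TadAux.tadpole_struct hconn hxy hdx hdy hdeg (TadAux.card_edges hxy hdx hdy hdeg)
  have hQnd : Q.edges.Nodup := hQ.isTrail.edges_nodup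
  have hKnd : K.edges.Nodup := hK.isTrail.edges_nodup
  -- identify the bridge / non-bridge edge finsets
  have hfQ : G.edgeFinset.filter (fun e => G.IsBridge e) = Q.edges.toFinset := by
    ext f
    simp only [Finset.mem_filter, SimpleGraph.mem_edgeFinset, List.mem_toFinset]
    constructor
    · rintro ⟨hf, hbr⟩
      exact (hedge f hf).resolve_right (fun h => hKnb f h hbr)
    · intro h
      exact ⟨Q.edges_subset_edgeSet h, hQbr f h⟩
  have hfK : G.edgeFinset.filter (fun e => ¬ G.IsBridge e) = K.edges.toFinset := by
    ext f
    simp only [Finset.mem_filter, SimpleGraph.mem_edgeFinset, List.mem_toFinset]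
    constructor
    · rintro ⟨hf, hbr⟩
      exact (hedge f hf).resolve_left (fun h => hbr (hQbr f h))
    · intro h
      exact ⟨K.edges_subset_edgeSet h, hKnb f h⟩
  have hSQ : S = (Q.edges.map c).sum := by
    rw [hS, hfQ, List.sum_toFinset _ hQnd]
  have hCK : Ccyc = (K.edges.map c).sum := by
    rw [hCcyc, hfK, List.sum_toFinset _ hKnd]
  -- count facts
  have hcntQ1 : ∀ f ∈ G.edgeSet, G.IsBridge f → Q.edges.count f = 1 ∧ K.edges.count f = 0 := by
    intro f hf hbr
    have h1 : f ∈ Q.edges := (hedge f hf).resolve_right (fun h => hKnb f h hbr)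
    exact ⟨List.count_eq_one_of_mem hQnd h1,
      List.count_eq_zero.mpr (fun h => hKnb f h hbr)⟩
  have hcntK1 : ∀ f ∈ G.edgeSet, ¬ G.IsBridge f → Q.edges.count f = 0 ∧ K.edges.count f = 1 := by
    intro f hf hbr
    have h1 : f ∈ K.edges := (hedge f hf).resolve_left (fun h => hbr (hQbr f h))
    exact ⟨List.count_eq_zero.mpr (fun h => hbr (hQbr f h)),
      List.count_eq_one_of_mem hKnd h1⟩
  constructor
  · -- part (a)
    by_cases hsQ : s ∈ Q.support
    · set Q₁ := Q.takeUntil s hsQ with hQ₁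
      set Q₂ := Q.dropUntil s hsQ with hQ₂
      have hQe : Q.edges = Q₁.edges ++ Q₂.edges := by
        have h := SimpleGraph.Walk.edges_append Q₁ Q₂
        rw [Q.take_spec hsQ] at h
        exact h
      refine ⟨Q₁.reverse.append (Q₁.append (Q₂.append (K.append Q₂.reverse))), ?_, ?_, ?_, ?_⟩
      · intro v
        simp only [SimpleGraph.Walk.mem_support_append_iff, SimpleGraph.Walk.support_reverse,
          List.mem_reverse]
        rcases hcover v with hv | hv
        · rw [← Q.take_spec hsQ, SimpleGraph.Walk.mem_support_append_iff] at hv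
          tauto
        · tauto
      · intro f hf hbr
        obtain ⟨h1, h2⟩ := hcntQ1 f hf hbr
        have hQc : Q₁.edges.count f + Q₂.edges.count f = 1 := by
          rw [← List.count_append, ← hQe]; exact h1
        simp only [SimpleGraph.Walk.edges_append, SimpleGraph.Walk.edges_reverse,
          List.count_append, List.count_reverse]
        omega
      · intro f hf hbr
        obtain ⟨h1, h2⟩ := hcntK1 f hf hbr
        have hQc : Q₁.edges.count f + Q₂.edges.count f = 0 := by
          rw [← List.count_append, ← hQe]; exact h1
        simp only [SimpleGraph.Walk.edges_append, SimpleGraph.Walk.edges_reverse,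
          List.count_append, List.count_reverse]
        omega
      · have hQs : (Q₁.edges.map c).sum + (Q₂.edges.map c).sum = (Q.edges.map c).sum := by
          rw [hQe, List.map_append, List.sum_append]
        simp only [walkCost, SimpleGraph.Walk.edges_append, SimpleGraph.Walk.edges_reverse,
          List.map_append, List.sum_append, List.map_reverse, List.sum_reverse]
        rw [hSQ, hCK]
        linarith
    · have hsK : s ∈ K.support := (hcover s).resolve_left hsQ
      set Ks := K.rotate _ hsK with hKs
      have hKse : Ks.edges ~ K.edges := (K.rotate_edges _ hsK).perm
      have hyKs : y ∈ Ks.support := (TadAux.mem_support_rotate K hsK y).mpr K.start_mem_support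
      set L₁ := Ks.takeUntil y hyKs with hL₁
      set L₂ := Ks.dropUntil y hyKs with hL₂
      have hKe : Ks.edges = L₁.edges ++ L₂.edges := by
        have h := SimpleGraph.Walk.edges_append L₁ L₂
        rw [Ks.take_spec hyKs] at h
        exact h
      refine ⟨L₁.append (Q.reverse.append (Q.append L₂)), ?_, ?_, ?_, ?_⟩
      · intro v
        simp only [SimpleGraph.Walk.mem_support_append_iff, SimpleGraph.Walk.support_reverse,
          List.mem_reverse]
        rcases hcover v with hv | hv
        · tauto
        · have : v ∈ Ks.support := (TadAux.mem_support_rotate K hsK v).mpr hv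
          rw [← Ks.take_spec hyKs, SimpleGraph.Walk.mem_support_append_iff] at this
          tauto
      · intro f hf hbr
        obtain ⟨h1, h2⟩ := hcntQ1 f hf hbr
        have hKc : L₁.edges.count f + L₂.edges.count f = 0 := by
          rw [← List.count_append, ← hKe, hKse.count_eq]; exact h2
        simp only [SimpleGraph.Walk.edges_append, SimpleGraph.Walk.edges_reverse,
          List.count_append, List.count_reverse]
        omega
      · intro f hf hbr
        obtain ⟨h1, h2⟩ := hcntK1 f hf hbr
        have hKc : L₁.edges.count f + L₂.edges.count f = 1 := by
          rw [← List.count_append, ← hKe, hKse.count_eq]; exact h2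
        simp only [SimpleGraph.Walk.edges_append, SimpleGraph.Walk.edges_reverse,
          List.count_append, List.count_reverse]
        omega
      · have hKsum : (L₁.edges.map c).sum + (L₂.edges.map c).sum = (K.edges.map c).sum := by
          rw [← List.sum_append, ← List.map_append, ← hKe]
          exact (hKse.map c).sum_eq
        simp only [walkCost, SimpleGraph.Walk.edges_append, SimpleGraph.Walk.edges_reverse,
          List.map_append, List.sum_append, List.map_reverse, List.sum_reverse]
        rw [hSQ, hCK]
        linarith
  · -- part (b)
    intro e he hnbr
    have heK : e ∈ K.edges := (hedge e he).resolve_left (fun h => hnbr (hQbr e h))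
    obtain ⟨b, a, R, hperm, hsupR⟩ := TadAux.cycle_erase hK heK
    have hconsnd : (e :: R.edges).Nodup := hperm.nodup_iff.mp hKnd
    rw [List.nodup_cons] at hconsnd
    obtain ⟨heR, hRnd⟩ := hconsnd
    have hcntR : ∀ f, f ≠ e → K.edges.count f = R.edges.count f := by
      intro f hfe
      rw [hperm.count_eq, List.count_cons_of_ne hfe.symm]
    have hcntRe : R.edges.count e = 0 := List.count_eq_zero.mpr heR
    have hQcnt0 : Q.edges.count e = 0 :=
      List.count_eq_zero.mpr (fun h => hnbr (hQbr e h))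
    have hsumR : (K.edges.map c).sum = c e + (R.edges.map c).sum := by
      rw [(hperm.map c).sum_eq]
      simp
    have hRbr : ∀ f ∈ G.edgeSet, G.IsBridge f → R.edges.count f = 0 := by
      intro f hf hbr
      refine List.count_eq_zero.mpr (fun h => hKnb f ?_ hbr)
      exact hperm.mem_iff.mpr (List.mem_cons_of_mem _ h)
    by_cases hsQ : s ∈ Q.support
    · set Q₁ := Q.takeUntil s hsQ with hQ₁
      set Q₂ := Q.dropUntil s hsQ with hQ₂
      have hQe : Q.edges = Q₁.edges ++ Q₂.edges := by
        have h := SimpleGraph.Walk.edges_append Q₁ Q₂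
        rw [Q.take_spec hsQ] at h; exact h
      have hyR : y ∈ R.support := hsupR y K.start_mem_support
      set R₁ := R.takeUntil y hyR with hR₁
      set R₂ := R.dropUntil y hyR with hR₂
      have hRe : R.edges = R₁.edges ++ R₂.edges := by
        have h := SimpleGraph.Walk.edges_append R₁ R₂
        rw [R.take_spec hyR] at h; exact h
      refine ⟨Q₁.reverse.append (Q₁.append (Q₂.append ((R₂.append (R₂.reverse.append
        (R₁.reverse.append R₁))).append Q₂.reverse))), ?_, ?_, ?_, ?_⟩
      · intro v
        simp only [SimpleGraph.Walk.mem_support_append_iff, SimpleGraph.Walk.support_reverse,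
          List.mem_reverse]
        rcases hcover v with hv | hv
        · rw [← Q.take_spec hsQ, SimpleGraph.Walk.mem_support_append_iff] at hv; tauto
        · have hv' := hsupR v hv
          rw [← R.take_spec hyR, SimpleGraph.Walk.mem_support_append_iff] at hv'; tauto
      · rw [← List.count_eq_zero]
        have hQc : Q₁.edges.count e + Q₂.edges.count e = 0 := by
          rw [← List.count_append, ← hQe]; exact hQcnt0
        have hRc : R₁.edges.count e + R₂.edges.count e = 0 := by
          rw [← List.count_append, ← hRe]; exact hcntRe
        simp only [SimpleGraph.Walk.edges_append, SimpleGraph.Walk.edges_reverse,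
          List.count_append, List.count_reverse]
        omega
      · intro f hf hfe
        have hQR : Q.edges.count f + R.edges.count f = 1 := by
          by_cases hbr : G.IsBridge f
          · obtain ⟨h1, h2⟩ := hcntQ1 f hf hbr
            rw [h1, hRbr f hf hbr]
          · obtain ⟨h1, h2⟩ := hcntK1 f hf hbr
            rw [h1, ← hcntR f hfe, h2]
        have hQc : Q₁.edges.count f + Q₂.edges.count f = Q.edges.count f := by
          rw [← List.count_append, ← hQe]
        have hRc : R₁.edges.count f + R₂.edges.count f = R.edges.count f := by
          rw [← List.count_append, ← hRe]
        simp only [SimpleGraph.Walk.edges_append, SimpleGraph.Walk.edges_reverse,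
          List.count_append, List.count_reverse]
        omega
      · have hQs : (Q₁.edges.map c).sum + (Q₂.edges.map c).sum = (Q.edges.map c).sum := by
          rw [hQe, List.map_append, List.sum_append]
        have hRs : (R₁.edges.map c).sum + (R₂.edges.map c).sum = (R.edges.map c).sum := by
          rw [hRe, List.map_append, List.sum_append]
        simp only [walkCost, SimpleGraph.Walk.edges_append, SimpleGraph.Walk.edges_reverse,
          List.map_append, List.sum_append, List.map_reverse, List.sum_reverse]
        rw [hSQ, hCK]
        linarith [hsumR]
    · have hsK : s ∈ K.support := (hcover s).resolve_left hsQ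
      have hsR : s ∈ R.support := hsupR s hsK
      set A := R.takeUntil s hsR with hA
      set B := R.dropUntil s hsR with hB
      have hRe : R.edges = A.edges ++ B.edges := by
        have h := SimpleGraph.Walk.edges_append A B
        rw [R.take_spec hsR] at h; exact h
      have hyR : y ∈ R.support := hsupR y K.start_mem_support
      have hyAB : y ∈ A.support ∨ y ∈ B.support := by
        rw [← R.take_spec hsR, SimpleGraph.Walk.mem_support_append_iff] at hyR; exact hyR
      have hRcov : ∀ v, v ∈ R.support → v ∈ A.support ∨ v ∈ B.support := by
        intro v hv
        rw [← R.take_spec hsR, SimpleGraph.Walk.mem_support_append_iff] at hv; exact hv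
      rcases hyAB with hyA | hyB
      · set A₁ := A.takeUntil y hyA with hA₁
        set A₂ := A.dropUntil y hyA with hA₂
        have hAe : A.edges = A₁.edges ++ A₂.edges := by
          have h := SimpleGraph.Walk.edges_append A₁ A₂
          rw [A.take_spec hyA] at h; exact h
        refine ⟨A₂.reverse.append ((Q.reverse.append Q).append (A₁.reverse.append
          (A₁.append (A₂.append (B.append B.reverse))))), ?_, ?_, ?_, ?_⟩
        · intro v
          simp only [SimpleGraph.Walk.mem_support_append_iff, SimpleGraph.Walk.support_reverse,
            List.mem_reverse]
          rcases hcover v with hv | hv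
          · tauto
          · have hv' := hRcov v (hsupR v hv)
            rcases hv' with hv' | hv'
            · rw [← A.take_spec hyA, SimpleGraph.Walk.mem_support_append_iff] at hv'; tauto
            · tauto
        · rw [← List.count_eq_zero]
          have hAc : A₁.edges.count e + A₂.edges.count e + B.edges.count e = 0 := by
            have h : (A₁.edges.count e + A₂.edges.count e) + B.edges.count e
                = R.edges.count e := by
              rw [← List.count_append, ← hAe, ← List.count_append, ← hRe]
            rw [h, hcntRe]
          simp only [SimpleGraph.Walk.edges_append, SimpleGraph.Walk.edges_reverse,
            List.count_append, List.count_reverse]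
          omega
        · intro f hf hfe
          have hQR : Q.edges.count f + R.edges.count f = 1 := by
            by_cases hbr : G.IsBridge f
            · obtain ⟨h1, h2⟩ := hcntQ1 f hf hbr
              rw [h1, hRbr f hf hbr]
            · obtain ⟨h1, h2⟩ := hcntK1 f hf hbr
              rw [h1, ← hcntR f hfe, h2]
          have hRc : A₁.edges.count f + A₂.edges.count f + B.edges.count f
              = R.edges.count f := by
            rw [← List.count_append, ← hAe, ← List.count_append, ← hRe]
          simp only [SimpleGraph.Walk.edges_append, SimpleGraph.Walk.edges_reverse,
            List.count_append, List.count_reverse]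
          omega
        · have hRs : (A₁.edges.map c).sum + (A₂.edges.map c).sum + (B.edges.map c).sum
              = (R.edges.map c).sum := by
            rw [hRe, hAe]
            simp [List.map_append, List.sum_append]
            ring
          simp only [walkCost, SimpleGraph.Walk.edges_append, SimpleGraph.Walk.edges_reverse,
            List.map_append, List.sum_append, List.map_reverse, List.sum_reverse]
          rw [hSQ, hCK]
          linarith [hsumR]
      · set B₁ := B.takeUntil y hyB with hB₁
        set B₂ := B.dropUntil y hyB with hB₂
        have hBe : B.edges = B₁.edges ++ B₂.edges := by
          have h := SimpleGraph.Walk.edges_append B₁ B₂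
          rw [B.take_spec hyB] at h; exact h
        refine ⟨A.reverse.append (A.append (B₁.append ((Q.reverse.append Q).append
          (B₂.append (B₂.reverse.append B₁.reverse))))), ?_, ?_, ?_, ?_⟩
        · intro v
          simp only [SimpleGraph.Walk.mem_support_append_iff, SimpleGraph.Walk.support_reverse,
            List.mem_reverse]
          rcases hcover v with hv | hv
          · tauto
          · have hv' := hRcov v (hsupR v hv)
            rcases hv' with hv' | hv'
            · tauto
            · rw [← B.take_spec hyB, SimpleGraph.Walk.mem_support_append_iff] at hv'; tauto
        · rw [← List.count_eq_zero]
          have hAc : A.edges.count e + (B₁.edges.count e + B₂.edges.count e) = 0 := by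
            have h : A.edges.count e + (B₁.edges.count e + B₂.edges.count e)
                = R.edges.count e := by
              rw [← List.count_append, ← hBe, ← List.count_append, ← hRe]
            rw [h, hcntRe]
          simp only [SimpleGraph.Walk.edges_append, SimpleGraph.Walk.edges_reverse,
            List.count_append, List.count_reverse]
          omega
        · intro f hf hfe
          have hQR : Q.edges.count f + R.edges.count f = 1 := by
            by_cases hbr : G.IsBridge f
            · obtain ⟨h1, h2⟩ := hcntQ1 f hf hbr
              rw [h1, hRbr f hf hbr]
            · obtain ⟨h1, h2⟩ := hcntK1 f hf hbr
              rw [h1, ← hcntR f hfe, h2]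
          have hRc : A.edges.count f + (B₁.edges.count f + B₂.edges.count f)
              = R.edges.count f := by
            rw [← List.count_append, ← hBe, ← List.count_append, ← hRe]
          simp only [SimpleGraph.Walk.edges_append, SimpleGraph.Walk.edges_reverse,
            List.count_append, List.count_reverse]
          omega
        · have hRs : (A.edges.map c).sum + ((B₁.edges.map c).sum + (B₂.edges.map c).sum)
              = (R.edges.map c).sum := by
            rw [hRe, hBe]
            simp [List.map_append, List.sum_append]
          simp only [walkCost, SimpleGraph.Walk.edges_append, SimpleGraph.Walk.edges_reverse,
            List.map_append, List.sum_append, List.map_reverse, List.sum_reverse]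
          rw [hSQ, hCK]
          linarith [hsumR]
end

section
/- In a tadpole graph with positive edge weights, let S denote the total weight of the stem edges, C_cyc the total weight of the cycle edges, and c_max the maximum weight among the cycle edges. Then for every start vertex s, the minimum cost of a closed walk from s to s visiting every vertex equals 2S + min(C_cyc, 2(C_cyc − c_max)). -/
open SimpleGraph Walk

namespace TadpoleAux

variable {V : Type*} [Fintype V] [DecidableEq V]

/-- Edges of the connected component of `a`. -/
def CE (H : SimpleGraph V) (a : V) : Set (Sym2 V) :=
  {e | e ∈ H.edgeSet ∧ ∃ x ∈ e, H.Reachable a x}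

lemma del_adj (H : SimpleGraph V) (e : Sym2 V) {a b : V} :
    (H \ SimpleGraph.fromEdgeSet {e}).Adj a b ↔ H.Adj a b ∧ s(a, b) ≠ e := by
  constructor
  · rintro ⟨h1, h2⟩
    refine ⟨h1, fun hbad => h2 ?_⟩
    exact ⟨by simp [hbad], h1.ne⟩
  · rintro ⟨h1, h2⟩
    exact ⟨h1, by simp [fromEdgeSet_adj, h2]⟩

lemma del_le (H : SimpleGraph V) (e : Sym2 V) : H \ SimpleGraph.fromEdgeSet {e} ≤ H :=
  sdiff_le

lemma del_edgeSet (H : SimpleGraph V) (e : Sym2 V) :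
    (H \ SimpleGraph.fromEdgeSet {e}).edgeSet = H.edgeSet \ {e} := by
  ext f
  induction f with
  | _ a b =>
    simp only [SimpleGraph.mem_edgeSet, del_adj, Set.mem_diff, Set.mem_singleton_iff]

lemma reach_transfer {H K : SimpleGraph V}
    (hadj : ∀ a b : V, K.Adj a b → H.Reachable a b) {u v : V}
    (h : K.Reachable u v) : H.Reachable u v := by
  obtain ⟨p⟩ := h
  induction p with
  | nil => exact Reachable.refl _
  | cons h' p ih => exact (hadj _ _ h').trans ih

lemma reachable_of_mem_support {H : SimpleGraph V} {a b v : V} (p : H.Walk a b)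
    (h : v ∈ p.support) : H.Reachable a v :=
  ⟨p.takeUntil v h⟩

lemma edges_mem_CE {H : SimpleGraph V} {a b : V} (p : H.Walk a b) :
    ∀ e ∈ p.edges, e ∈ CE H a := by
  intro e he
  induction e with
  | _ x y =>
    exact ⟨p.edges_subset_edgeSet he, x, Sym2.mem_mk_left x y,
      reachable_of_mem_support p (p.fst_mem_support_of_mem_edges he)⟩

lemma CE_sub {H' H : SimpleGraph V} {a z : V} (hle : H' ≤ H) (hr : H.Reachable a z) :
    CE H' z ⊆ CE H a := by
  rintro f ⟨hf, x, hx, hrx⟩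
  exact ⟨edgeSet_mono hle hf, x, hx, hr.trans (hrx.mono hle)⟩

/-- Splitting reachability at a deleted edge. -/
lemma reach_split {H : SimpleGraph V} {a z : V} (h : H.Adj a z) {u : V}
    (hr : H.Reachable a u) :
    (H \ SimpleGraph.fromEdgeSet {s(a, z)}).Reachable a u ∨
      (H \ SimpleGraph.fromEdgeSet {s(a, z)}).Reachable z u := by
  set H' := H \ SimpleGraph.fromEdgeSet {s(a, z)} with hH'
  have key : ∀ {x u : V} (_ : H.Walk x u),
      (H'.Reachable a x ∨ H'.Reachable z x) → (H'.Reachable a u ∨ H'.Reachable z u) := by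
    intro x u p
    induction p with
    | nil => exact id
    | @cons x y u hadj q ih =>
      intro hx
      by_cases hxy : s(x, y) = s(a, z)
      · rw [Sym2.eq_iff] at hxy
        rcases hxy with ⟨rfl, rfl⟩ | ⟨rfl, rfl⟩
        · exact ih (Or.inr (Reachable.refl _))
        · exact ih (Or.inl (Reachable.refl _))
      · have hadj' : H'.Adj x y := (del_adj H _).2 ⟨hadj, hxy⟩
        rcases hx with hx | hx
        · exact ih (Or.inl (hx.trans hadj'.reachable))
        · exact ih (Or.inr (hx.trans hadj'.reachable))
  obtain ⟨p⟩ := hr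
  exact key p (Or.inl (Reachable.refl _))

/-- In an acyclic graph, after deleting an edge, the two sides are not connected. -/
lemma CE_excl {H : SimpleGraph V} (hac : H.IsAcyclic) {a z : V} (h : H.Adj a z)
    {f : Sym2 V} (hfa : f ∈ CE (H \ SimpleGraph.fromEdgeSet {s(a, z)}) a)
    (hfz : f ∈ CE (H \ SimpleGraph.fromEdgeSet {s(a, z)}) z) : False := by
  set H' := H \ SimpleGraph.fromEdgeSet {s(a, z)} with hH'
  have hbr : H.IsBridge s(a, z) := isAcyclic_iff_forall_adj_isBridge.mp hac h
  have hnr : ¬ H'.Reachable a z := isBridge_iff.mp hbr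
  obtain ⟨hf1, x1, hx1, hr1⟩ := hfa
  obtain ⟨_, x2, hx2, hr2⟩ := hfz
  apply hnr
  refine hr1.trans (Reachable.trans ?_ hr2.symm)
  by_cases hx : x1 = x2
  · subst hx; exact Reachable.refl _
  · have : f = s(x1, x2) := by
      induction f with
      | _ p q =>
        rw [Sym2.mem_iff] at hx1 hx2
        rcases hx1 with rfl | rfl <;> rcases hx2 with rfl | rfl <;>
          first | exact absurd rfl hx | rw [Sym2.eq_iff] <;> tauto
    rw [this, SimpleGraph.mem_edgeSet] at hf1
    exact hf1.reachable

end TadpoleAux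

namespace TadpoleAux
variable {V : Type*} [Fintype V] [DecidableEq V]

lemma acyclic_anti {H' H : SimpleGraph V} (hle : H' ≤ H) (hac : H.IsAcyclic) :
    H'.IsAcyclic := fun _ c hc => hac (c.mapLe hle) (hc.mapLe hle)

lemma CE_split {H : SimpleGraph V} {a z : V} (h : H.Adj a z) {f : Sym2 V}
    (hne : f ≠ s(a, z)) (hf : f ∈ CE H a) :
    f ∈ CE (H \ SimpleGraph.fromEdgeSet {s(a, z)}) a ∨
      f ∈ CE (H \ SimpleGraph.fromEdgeSet {s(a, z)}) z := by
  obtain ⟨hfe, x, hx, hr⟩ := hf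
  have hfe' : f ∈ (H \ SimpleGraph.fromEdgeSet {s(a, z)}).edgeSet := by
    rw [del_edgeSet]; exact ⟨hfe, hne⟩
  have hrx : H.Reachable a x := hr
  rcases reach_split h hrx with h1 | h1
  · exact Or.inl ⟨hfe', x, hx, h1⟩
  · exact Or.inr ⟨hfe', x, hx, h1⟩

lemma edge_not_mem_CE_del {H : SimpleGraph V} {a z : V} (x : V) :
    s(a, z) ∉ CE (H \ SimpleGraph.fromEdgeSet {s(a, z)}) x := by
  rintro ⟨hf, -⟩
  rw [del_edgeSet] at hf
  exact hf.2 rfl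

open scoped Classical in
lemma tour (m : ℕ) : ∀ (H : SimpleGraph V), H.IsAcyclic → ∀ (a b : V) (p : H.Walk a b),
    p.IsPath → (CE H a).ncard < m →
    ∃ w : H.Walk a b, (∀ v, H.Reachable a v → v ∈ w.support) ∧
      ∀ e : Sym2 V, w.edges.count e =
        if e ∈ p.edges then 1 else if e ∈ CE H a then 2 else 0 := by
  induction m with
  | zero => intro H _ a b p _ h; omega
  | succ m ih =>
    intro H hac a b p hp hcard
    cases p with
    | nil =>
      rcases Set.eq_empty_or_nonempty (CE H a) with hCE | hCE
      · refine ⟨Walk.nil, ?_, ?_⟩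
        · intro v hv
          obtain ⟨q⟩ := hv
          cases q with
          | nil => simp
          | @cons _ z _ hadj q' =>
            have hmem : s(a, z) ∈ (Walk.cons hadj q').edges := by simp
            exact absurd (edges_mem_CE _ _ hmem) (by simp [hCE])
        · intro e; simp [hCE]
      · have hz : ∃ z, H.Adj a z := by
          obtain ⟨e₁, he₁e, x, hx, hrx⟩ := hCE
          obtain ⟨q⟩ := hrx
          cases q with
          | nil =>
            revert hx he₁e
            induction e₁ with
            | _ pp qq =>
              intro he₁e hx
              rw [Sym2.mem_iff] at hx
              rw [SimpleGraph.mem_edgeSet] at he₁e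
              rcases hx with rfl | rfl
              · exact ⟨qq, he₁e⟩
              · exact ⟨pp, he₁e.symm⟩
          | cons hadj q' => exact ⟨_, hadj⟩
        obtain ⟨z, hadj⟩ := hz
        set e' := s(a, z) with he'def
        set H' := H \ SimpleGraph.fromEdgeSet {e'} with hH'
        have hle : H' ≤ H := del_le H e'
        have hac' : H'.IsAcyclic := acyclic_anti hle hac
        have he'CE : e' ∈ CE H a := ⟨hadj, a, Sym2.mem_mk_left _ _, Reachable.refl _⟩
        have hsub_a : CE H' a ⊆ CE H a := CE_sub hle (Reachable.refl a)
        have hsub_z : CE H' z ⊆ CE H a := CE_sub hle hadj.reachable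
        have hnot_a : e' ∉ CE H' a := edge_not_mem_CE_del a
        have hnot_z : e' ∉ CE H' z := edge_not_mem_CE_del z
        have hfin : (CE H a).Finite := Set.toFinite _
        have hm : (CE H a).ncard ≤ m := Nat.lt_succ_iff.mp hcard
        have hcard_a : (CE H' a).ncard < m :=
          lt_of_lt_of_le (Set.ncard_lt_ncard
            (Set.ssubset_def.mpr ⟨hsub_a, fun h => hnot_a (h he'CE)⟩) hfin) hm
        have hcard_z : (CE H' z).ncard < m :=
          lt_of_lt_of_le (Set.ncard_lt_ncard
            (Set.ssubset_def.mpr ⟨hsub_z, fun h => hnot_z (h he'CE)⟩) hfin) hm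
        obtain ⟨wa, hwa_s, hwa_c⟩ := ih H' hac' a a Walk.nil Walk.IsPath.nil hcard_a
        obtain ⟨wz, hwz_s, hwz_c⟩ := ih H' hac' z z Walk.nil Walk.IsPath.nil hcard_z
        have hsub : ∀ {x y : V} (q : H'.Walk x y), ∀ e ∈ q.edges, e ∈ H.edgeSet :=
          fun q e he => edgeSet_mono hle (q.edges_subset_edgeSet he)
        refine ⟨Walk.cons hadj ((wz.transfer H (hsub wz)).append
          (Walk.cons hadj.symm (wa.transfer H (hsub wa)))), ?_, ?_⟩
        · intro v hv
          rcases reach_split hadj hv with h | h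
          · have hv' := hwa_s v h
            simp only [Walk.support_cons, List.mem_cons, Walk.mem_support_append_iff,
              Walk.support_transfer]
            tauto
          · have hv' := hwz_s v h
            simp only [Walk.support_cons, List.mem_cons, Walk.mem_support_append_iff,
              Walk.support_transfer]
            tauto
        · intro e
          have hza : s(z, a) = e' := Sym2.eq_swap
          have hca := hwa_c e
          have hcz := hwz_c e
          simp only [Walk.edges_nil, List.not_mem_nil, if_false] at hca hcz
          simp only [Walk.edges_cons, Walk.edges_append, Walk.edges_transfer, hza,
            List.count_cons, List.count_append, List.not_mem_nil, if_false, hca, hcz,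
            beq_iff_eq, ← he'def]
          by_cases he : e = e'
          · subst he
            simp [hnot_a, hnot_z, he'CE]
          · by_cases hf : e ∈ CE H a
            · rcases CE_split hadj he hf with h1 | h1
              · have h2 : e ∉ CE H' z := fun hc => CE_excl hac hadj h1 hc
                simp [h1, h2, he, Ne.symm he, hf]
                exact h1
              · have h2 : e ∉ CE H' a := fun hc => CE_excl hac hadj hc h1
                simp [h1, h2, he, Ne.symm he, hf]
                exact h1
            · have h1 : e ∉ CE H' a := fun hc => hf (hsub_a hc)
              have h2 : e ∉ CE H' z := fun hc => hf (hsub_z hc)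
              simp [h1, h2, he, Ne.symm he, hf]
    | @cons _ a' _ hadj p' =>
      have hcons := (Walk.cons_isPath_iff hadj p').mp hp
      have hpath' : p'.IsPath := hcons.1
      have hane : a ∉ p'.support := hcons.2
      set e' := s(a, a') with he'def
      have he'np : e' ∉ p'.edges := fun hc => hane (Walk.fst_mem_support_of_mem_edges p' hc)
      set H' := H \ SimpleGraph.fromEdgeSet {e'} with hH'
      have hle : H' ≤ H := del_le H e'
      have hac' : H'.IsAcyclic := acyclic_anti hle hac
      have hp'H' : ∀ e ∈ p'.edges, e ∈ H'.edgeSet := by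
        intro e he
        rw [del_edgeSet]
        exact ⟨p'.edges_subset_edgeSet he, fun hc => he'np (hc ▸ he)⟩
      have he'CE : e' ∈ CE H a := ⟨hadj, a, Sym2.mem_mk_left _ _, Reachable.refl _⟩
      have hsub_a : CE H' a ⊆ CE H a := CE_sub hle (Reachable.refl a)
      have hsub_z : CE H' a' ⊆ CE H a := CE_sub hle hadj.reachable
      have hnot_a : e' ∉ CE H' a := edge_not_mem_CE_del a
      have hnot_z : e' ∉ CE H' a' := edge_not_mem_CE_del a'
      have hfin : (CE H a).Finite := Set.toFinite _
      have hm : (CE H a).ncard ≤ m := Nat.lt_succ_iff.mp hcard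
      have hcard_a : (CE H' a).ncard < m :=
        lt_of_lt_of_le (Set.ncard_lt_ncard
          (Set.ssubset_def.mpr ⟨hsub_a, fun h => hnot_a (h he'CE)⟩) hfin) hm
      have hcard_z : (CE H' a').ncard < m :=
        lt_of_lt_of_le (Set.ncard_lt_ncard
          (Set.ssubset_def.mpr ⟨hsub_z, fun h => hnot_z (h he'CE)⟩) hfin) hm
      obtain ⟨wa, hwa_s, hwa_c⟩ := ih H' hac' a a Walk.nil Walk.IsPath.nil hcard_a
      obtain ⟨wb, hwb_s, hwb_c⟩ := ih H' hac' a' b (p'.transfer H' hp'H')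
        (Walk.IsPath.transfer hp'H' hpath') hcard_z
      have hsub : ∀ {x y : V} (q : H'.Walk x y), ∀ e ∈ q.edges, e ∈ H.edgeSet :=
        fun q e he => edgeSet_mono hle (q.edges_subset_edgeSet he)
      refine ⟨(wa.transfer H (hsub wa)).append (Walk.cons hadj (wb.transfer H (hsub wb))),
        ?_, ?_⟩
      · intro v hv
        rcases reach_split hadj hv with h | h
        · have hv' := hwa_s v h
          simp only [Walk.mem_support_append_iff, Walk.support_transfer, Walk.support_cons,
            List.mem_cons]
          tauto
        · have hv' := hwb_s v h
          simp only [Walk.mem_support_append_iff, Walk.support_transfer, Walk.support_cons,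
            List.mem_cons]
          tauto
      · intro e
        have hca := hwa_c e
        have hcb := hwb_c e
        simp only [Walk.edges_nil, List.not_mem_nil, if_false, Walk.edges_transfer] at hca hcb
        simp only [Walk.edges_append, Walk.edges_cons, Walk.edges_transfer,
          List.count_append, List.count_cons, hca, hcb, beq_iff_eq, ← he'def]
        by_cases he : e = e'
        · subst he
          simp [hnot_a, hnot_z, he'np]
        · by_cases hep : e ∈ p'.edges
          · have h1 : e ∈ CE H' a' := edges_mem_CE (p'.transfer H' hp'H')
              e (by rwa [Walk.edges_transfer])
            have h2 : e ∉ CE H' a := fun hc => CE_excl hac hadj hc h1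
            simp [h2, he, Ne.symm he, hep]
          · by_cases hf : e ∈ CE H a
            · rcases CE_split hadj he hf with h1 | h1
              · have h2 : e ∉ CE H' a' := fun hc => CE_excl hac hadj h1 hc
                simp [h1, h2, he, Ne.symm he, hep, hf]
                exact h1
              · have h2 : e ∉ CE H' a := fun hc => CE_excl hac hadj hc h1
                simp [h1, h2, he, Ne.symm he, hep, hf]
                exact h1
            · have h1 : e ∉ CE H' a := fun hc => hf (hsub_a hc)
              have h2 : e ∉ CE H' a' := fun hc => hf (hsub_z hc)
              have h3 : e ∉ p'.edges := hep
              simp [h1, h2, he, Ne.symm he, hep, hf]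

end TadpoleAux

namespace TadpoleAux
variable {V : Type*} [Fintype V] [DecidableEq V]

lemma nonbridge_del_connected {H : SimpleGraph V} (hconn : H.Connected) {e : Sym2 V}
    (hnb : ¬ H.IsBridge e) (he : e ∈ H.edgeSet) :
    (H \ SimpleGraph.fromEdgeSet {e}).Connected := by
  revert hnb he
  induction e with
  | _ u v =>
    intro hnb he
    rw [SimpleGraph.mem_edgeSet] at he
    rw [isBridge_iff] at hnb
    push_neg at hnb
    have hr : (H \ SimpleGraph.fromEdgeSet {s(u, v)}).Reachable u v := hnb
    rw [connected_iff]
    refine ⟨fun x y => ?_, hconn.nonempty⟩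
    refine reach_transfer ?_ (hconn.preconnected x y)
    intro p q hpq
    by_cases hh : s(p, q) = s(u, v)
    · rw [Sym2.eq_iff] at hh
      rcases hh with ⟨rfl, rfl⟩ | ⟨rfl, rfl⟩
      · exact hr
      · exact hr.symm
    · exact ((del_adj H _).2 ⟨hpq, hh⟩).reachable

lemma del_edgeFinset (H : SimpleGraph V) (e : Sym2 V) [Fintype H.edgeSet]
    [Fintype (H \ SimpleGraph.fromEdgeSet {e}).edgeSet] :
    (H \ SimpleGraph.fromEdgeSet {e}).edgeFinset = H.edgeFinset.erase e := by
  ext f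
  rw [mem_edgeFinset, Finset.mem_erase, mem_edgeFinset, del_edgeSet]
  exact ⟨fun h => ⟨h.2, h.1⟩, fun h => ⟨h.2, h.1⟩⟩

lemma conn_card_le (n : ℕ) : ∀ (H : SimpleGraph V) [Fintype H.edgeSet],
    H.edgeFinset.card = n → H.Connected → Fintype.card V ≤ n + 1 := by
  induction n using Nat.strong_induction_on with
  | _ n ihn =>
    intro H _ hcard hconn
    by_cases hac : H.IsAcyclic
    · have := SimpleGraph.IsTree.card_edgeFinset ⟨hconn, hac⟩
      omega
    · rw [isAcyclic_iff_forall_edge_isBridge] at hac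
      push_neg at hac
      obtain ⟨e, he, hnb⟩ := hac
      haveI : Fintype (H \ SimpleGraph.fromEdgeSet {e}).edgeSet :=
        Set.Finite.fintype (Set.toFinite _)
      have hconn' := nonbridge_del_connected hconn hnb he
      have hn : 1 ≤ n := by
        rw [← hcard]
        exact Finset.card_pos.mpr ⟨e, mem_edgeFinset.mpr he⟩
      have hcard' : (H \ SimpleGraph.fromEdgeSet {e}).edgeFinset.card = n - 1 := by
        rw [del_edgeFinset, Finset.card_erase_of_mem (mem_edgeFinset.mpr he), hcard]
      have := ihn (n - 1) (by omega) _ hcard' hconn'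
      omega

lemma acyclic_of_card_s13 (H : SimpleGraph V) [Fintype H.edgeSet] (hconn : H.Connected)
    (hcard : H.edgeFinset.card + 1 = Fintype.card V) : H.IsAcyclic := by
  by_contra hac
  rw [isAcyclic_iff_forall_edge_isBridge] at hac
  push_neg at hac
  obtain ⟨e, he, hnb⟩ := hac
  haveI : Fintype (H \ SimpleGraph.fromEdgeSet {e}).edgeSet :=
    Set.Finite.fintype (Set.toFinite _)
  have hconn' := nonbridge_del_connected hconn hnb he
  have hn : 1 ≤ H.edgeFinset.card := Finset.card_pos.mpr ⟨e, mem_edgeFinset.mpr he⟩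
  have hcard' : (H \ SimpleGraph.fromEdgeSet {e}).edgeFinset.card = H.edgeFinset.card - 1 := by
    rw [del_edgeFinset, Finset.card_erase_of_mem (mem_edgeFinset.mpr he)]
  have := conn_card_le _ _ hcard' hconn'
  omega

lemma mem_support_rotate {H : SimpleGraph V} {s u v : V} (w : H.Walk s s)
    (hu : u ∈ w.support) (hv : v ∈ w.support) : v ∈ (w.rotate u hu).support := by
  have hspec := w.take_spec hu
  rw [← hspec, Walk.mem_support_append_iff] at hv
  unfold Walk.rotate
  rw [Walk.mem_support_append_iff]
  tauto

lemma bridge_two {H : SimpleGraph V} {s : V} (w : H.Walk s s) (hspan : ∀ v, v ∈ w.support)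
    {e : Sym2 V} (he : H.IsBridge e) : 2 ≤ w.edges.count e := by
  revert he
  induction e with
  | _ u v =>
    intro he
    rw [isBridge_iff_adj_and_forall_walk_mem_edges] at he
    have hall := he
    have hu : u ∈ w.support := hspan u
    have hv : v ∈ (w.rotate u hu).support := mem_support_rotate w hu (hspan v)
    have hcount : w.edges.count s(u, v) = (w.rotate u hu).edges.count s(u, v) :=
      ((w.rotate_edges u hu).perm.count_eq _).symm
    rw [hcount]
    have h1 : s(u, v) ∈ ((w.rotate u hu).takeUntil v hv).edges := hall _
    have h2 : s(u, v) ∈ ((w.rotate u hu).dropUntil v hv).edges := by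
      have := hall ((w.rotate u hu).dropUntil v hv).reverse
      rwa [Walk.edges_reverse, List.mem_reverse] at this
    have hspec := (w.rotate u hu).take_spec hv
    calc (2 : ℕ) = 1 + 1 := rfl
      _ ≤ ((w.rotate u hu).takeUntil v hv).edges.count s(u, v)
          + ((w.rotate u hu).dropUntil v hv).edges.count s(u, v) :=
        Nat.add_le_add (List.count_pos_iff.mpr h1) (List.count_pos_iff.mpr h2)
      _ = (w.rotate u hu).edges.count s(u, v) := by
        rw [← List.count_append, ← Walk.edges_append, hspec]

lemma walkCost_eq {G : SimpleGraph V} [Fintype G.edgeSet] (c : Sym2 V → ℝ) {u v : V}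
    (w : G.Walk u v) :
    walkCost c w = ∑ e ∈ G.edgeFinset, (w.edges.count e : ℝ) * c e := by
  have h1 : ∑ e ∈ w.edges.toFinset, w.edges.count e • c e
      = ∑ e ∈ G.edgeFinset, w.edges.count e • c e :=
    Finset.sum_subset
      (fun e he => mem_edgeFinset.mpr (w.edges_subset_edgeSet (List.mem_toFinset.mp he)))
      (fun e _ he => by
        rw [List.count_eq_zero_of_not_mem (fun hc => he (List.mem_toFinset.mpr hc)), zero_smul])
  rw [walkCost, Finset.sum_list_map_count, h1]
  exact Finset.sum_congr rfl fun e _ => nsmul_eq_mul _ _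

lemma CE_eq_edgeSet {H : SimpleGraph V} (hconn : H.Connected) (a : V) :
    CE H a = H.edgeSet := by
  ext f
  constructor
  · exact fun hf => hf.1
  · intro hf
    refine ⟨hf, ?_⟩
    revert hf
    induction f with
    | _ u v => exact fun _ => ⟨u, Sym2.mem_mk_left _ _, hconn.preconnected a u⟩

lemma notbridge_of_mem_cycle {G : SimpleGraph V} {u : V} {C : G.Walk u u} (hC : C.IsCycle)
    {e : Sym2 V} (he : e ∈ C.edges) : ¬ G.IsBridge e := by
  revert he
  induction e with
  | _ x y =>
    intro he hb
    exact hb.notMem_edges_of_isCycle hC he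

lemma bridge_outside {G : SimpleGraph V} {a b : V} (hadj : G.Adj a b)
    (hTac : (G \ SimpleGraph.fromEdgeSet {s(a, b)}).IsAcyclic)
    (q : (G \ SimpleGraph.fromEdgeSet {s(a, b)}).Walk b a)
    {f : Sym2 V} (hf : f ∈ G.edgeSet) (hfe : f ≠ s(a, b)) (hfq : f ∉ q.edges) :
    G.IsBridge f := by
  have hfT : f ∈ (G \ SimpleGraph.fromEdgeSet {s(a, b)}).edgeSet := by
    rw [del_edgeSet]; exact ⟨hf, hfe⟩
  have hbrT := isAcyclic_iff_forall_edge_isBridge.mp hTac hfT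
  revert hf hfT hbrT hfe hfq
  induction f with
  | _ u v =>
    intro hf hfe hfq hfT hbrT
    rw [isBridge_iff] at hbrT ⊢
    rw [SimpleGraph.mem_edgeSet] at hf
    refine fun hreach => hbrT ?_
    refine reach_transfer ?_ hreach
    intro p p' hpq
    rw [show G.deleteEdges {s(u, v)} = G \ SimpleGraph.fromEdgeSet {s(u, v)} from rfl,
      del_adj] at hpq
    by_cases hab : s(p, p') = s(a, b)
    · have hq' : ∀ e ∈ q.edges,
          e ∈ ((G \ SimpleGraph.fromEdgeSet {s(a, b)}) \
            SimpleGraph.fromEdgeSet {s(u, v)}).edgeSet := by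
        intro e he
        rw [del_edgeSet]
        exact ⟨q.edges_subset_edgeSet he, fun hc => hfq (hc ▸ he)⟩
      have hrba : ((G \ SimpleGraph.fromEdgeSet {s(a, b)}) \
          SimpleGraph.fromEdgeSet {s(u, v)}).Reachable b a := ⟨q.transfer _ hq'⟩
      rw [Sym2.eq_iff] at hab
      rcases hab with ⟨rfl, rfl⟩ | ⟨rfl, rfl⟩
      · exact hrba.symm
      · exact hrba
    · exact ((del_adj _ _).2 ⟨(del_adj _ _).2 ⟨hpq.1, hab⟩, hpq.2⟩).reachable

end TadpoleAux

/-- In a tadpole graph with positive edge weights, with `S` the total stem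
(bridge) weight, `Ccyc` the total cycle (non-bridge) weight, and `cmax` the
maximum cycle-edge weight, the minimum cost of a closed spanning walk from any
start vertex `s` equals `2 * S + min Ccyc (2 * (Ccyc - cmax))`. -/
theorem stmt_13 {V : Type*} [Fintype V] [DecidableEq V] (G : SimpleGraph V)
    [DecidableRel G.Adj] [DecidablePred G.IsBridge] (htad : IsTadpole G)
    (c : Sym2 V → ℝ) (hc : ∀ e ∈ G.edgeSet, 0 < c e)
    (S : ℝ) (hS : S = ∑ e ∈ G.edgeFinset.filter (fun e => G.IsBridge e), c e)
    (Ccyc : ℝ) (hCcyc : Ccyc = ∑ e ∈ G.edgeFinset.filter (fun e => ¬ G.IsBridge e), c e)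
    (cmax : ℝ) (hcmax : IsGreatest (c '' {e ∈ G.edgeSet | ¬ G.IsBridge e}) cmax)
    (s : V) :
    IsLeast {x : ℝ | ∃ w : G.Walk s s, (∀ v : V, v ∈ w.support) ∧ walkCost c w = x}
      (2 * S + min Ccyc (2 * (Ccyc - cmax))) := by
  classical
  obtain ⟨hconn, x, y, hxy, hdx, hdy, hdeg⟩ := htad
  have hn2 : 2 ≤ Fintype.card V := by
    have h := Finset.card_le_univ ({x, y} : Finset V)
    rw [Finset.card_pair hxy] at h
    simpa using h
  have hcardE : G.edgeFinset.card = Fintype.card V := by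
    have hsum := G.sum_degrees_eq_twice_card_edges
    have key := Finset.sum_sdiff (f := fun v => G.degree v)
      (Finset.subset_univ ({x, y} : Finset V))
    have h1 : ∑ v ∈ ({x, y} : Finset V), G.degree v = 4 := by
      rw [Finset.sum_pair hxy, hdx, hdy]
    have h2 : ∑ v ∈ (Finset.univ \ ({x, y} : Finset V)), G.degree v
        = 2 * (Fintype.card V - 2) := by
      have hc2 : (Finset.univ \ ({x, y} : Finset V)).card = Fintype.card V - 2 := by
        rw [Finset.card_sdiff_of_subset (Finset.subset_univ _), Finset.card_pair hxy, Finset.card_univ]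
      rw [Finset.sum_congr rfl (g := fun _ => 2) ?_, Finset.sum_const, hc2, smul_eq_mul,
        mul_comm]
      intro v hv
      rw [Finset.mem_sdiff, Finset.mem_insert, Finset.mem_singleton] at hv
      push_neg at hv
      exact hdeg v hv.2.1 hv.2.2
    rw [h1, h2, hsum] at key
    omega
  have treeOf : ∀ f ∈ G.edgeSet, ¬ G.IsBridge f →
      (G \ SimpleGraph.fromEdgeSet {f}).Connected ∧
        (G \ SimpleGraph.fromEdgeSet {f}).IsAcyclic := by
    intro f hf hnb
    have hconn' := TadpoleAux.nonbridge_del_connected hconn hnb hf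
    haveI : Fintype (G \ SimpleGraph.fromEdgeSet {f}).edgeSet :=
      Set.Finite.fintype (Set.toFinite _)
    have hcard' : (G \ SimpleGraph.fromEdgeSet {f}).edgeFinset.card = Fintype.card V - 1 := by
      rw [TadpoleAux.del_edgeFinset, Finset.card_erase_of_mem (mem_edgeFinset.mpr hf), hcardE]
    exact ⟨hconn', TadpoleAux.acyclic_of_card_s13 _ hconn' (by omega)⟩
  have hnb_exists : ∃ a b : V, G.Adj a b ∧ ¬ G.IsBridge s(a, b) := by
    by_contra h
    push_neg at h
    have hac : G.IsAcyclic := isAcyclic_iff_forall_adj_isBridge.mpr fun v w hvw => h v w hvw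
    have := SimpleGraph.IsTree.card_edgeFinset ⟨hconn, hac⟩
    omega
  have hA : S + Ccyc = ∑ e ∈ G.edgeFinset, c e := by
    rw [hS, hCcyc]; exact Finset.sum_filter_add_sum_filter_not _ _ _
  have hsum1 : ∑ e ∈ G.edgeFinset, (if G.IsBridge e then (2:ℝ) else 1) * c e
      = 2 * S + Ccyc := by
    rw [← Finset.sum_filter_add_sum_filter_not G.edgeFinset (fun e => G.IsBridge e)
      (fun e => (if G.IsBridge e then (2:ℝ) else 1) * c e), hS, hCcyc, Finset.mul_sum]
    congr 1
    · exact Finset.sum_congr rfl fun e he => by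
        rw [if_pos (Finset.mem_filter.mp he).2]
    · exact Finset.sum_congr rfl fun e he => by
        rw [if_neg (Finset.mem_filter.mp he).2, one_mul]
  have hsum2 : ∀ f₀ ∈ G.edgeFinset, ∑ e ∈ G.edgeFinset, (if e = f₀ then (0:ℝ) else 2) * c e
      = 2 * (S + Ccyc) - 2 * c f₀ := by
    intro f₀ hf₀
    have e1 := Finset.sum_erase_add G.edgeFinset
      (fun e => (if e = f₀ then (0:ℝ) else 2) * c e) hf₀
    have e2 := Finset.sum_erase_add G.edgeFinset (fun e => 2 * c e) hf₀
    beta_reduce at e2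
    have e3 : ∑ e ∈ G.edgeFinset.erase f₀, (if e = f₀ then (0:ℝ) else 2) * c e
        = ∑ e ∈ G.edgeFinset.erase f₀, 2 * c e :=
      Finset.sum_congr rfl fun e he => by rw [if_neg (Finset.mem_erase.mp he).1]
    have e4 : ∑ e ∈ G.edgeFinset, 2 * c e = 2 * (S + Ccyc) := by
      rw [hA, Finset.mul_sum]
    simp only [eq_self_iff_true, if_true, zero_mul, add_zero] at e1
    rw [e3] at e1
    linarith
  have hmin1 : min Ccyc (2 * (Ccyc - cmax)) ≤ Ccyc := min_le_left _ _
  have hmin2 : min Ccyc (2 * (Ccyc - cmax)) ≤ 2 * (Ccyc - cmax) := min_le_right _ _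
  constructor
  · -- membership
    rcases le_total Ccyc (2 * (Ccyc - cmax)) with hcase | hcase
    · rw [min_eq_left hcase]
      obtain ⟨a, b, hadj, hnb⟩ := hnb_exists
      obtain ⟨hTconn, hTac⟩ := treeOf s(a, b) hadj hnb
      obtain ⟨q0⟩ := hTconn.preconnected b a
      have hQpath : q0.bypass.IsPath := q0.bypass_isPath
      obtain ⟨M, hMs, hMc⟩ := TadpoleAux.tour
        ((TadpoleAux.CE (G \ SimpleGraph.fromEdgeSet {s(a, b)}) b).ncard + 1) _ hTac b a
        q0.bypass hQpath (Nat.lt_succ_self _)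
      have hMe : ∀ e ∈ M.edges, e ∈ G.edgeSet :=
        fun e he => edgeSet_mono sdiff_le (M.edges_subset_edgeSet he)
      have hWspan : ∀ v, v ∈ (Walk.cons hadj (M.transfer G hMe)).support := by
        intro v
        rw [Walk.support_cons, List.mem_cons, Walk.support_transfer]
        exact Or.inr (hMs v (hTconn.preconnected b v))
      have hCET : TadpoleAux.CE (G \ SimpleGraph.fromEdgeSet {s(a, b)}) b
          = (G \ SimpleGraph.fromEdgeSet {s(a, b)}).edgeSet :=
        TadpoleAux.CE_eq_edgeSet hTconn b
      have hnotT : s(a, b) ∉ (G \ SimpleGraph.fromEdgeSet {s(a, b)}).edgeSet := by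
        rw [TadpoleAux.del_edgeSet]; exact fun hcon => hcon.2 rfl
      have hWcnt : ∀ e ∈ G.edgeFinset,
          (Walk.cons hadj (M.transfer G hMe)).edges.count e
            = if G.IsBridge e then 2 else 1 := by
        intro e he
        have heG : e ∈ G.edgeSet := mem_edgeFinset.mp he
        rw [Walk.edges_cons, Walk.edges_transfer, List.count_cons, hMc, hCET]
        by_cases hee : e = s(a, b)
        · subst hee
          rw [if_neg (fun hcon => hnotT (q0.bypass.edges_subset_edgeSet hcon)),
            if_neg hnotT, if_neg hnb]
          simp
        · have heT : e ∈ (G \ SimpleGraph.fromEdgeSet {s(a, b)}).edgeSet := by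
            rw [TadpoleAux.del_edgeSet]; exact ⟨heG, hee⟩
          by_cases heQ : e ∈ q0.bypass.edges
          · have hQe : ∀ e' ∈ q0.bypass.edges, e' ∈ G.edgeSet :=
              fun e' he' => edgeSet_mono sdiff_le (q0.bypass.edges_subset_edgeSet he')
            have hcyc : (Walk.cons hadj (q0.bypass.transfer G hQe)).IsCycle := by
              rw [Walk.cons_isCycle_iff]
              refine ⟨Walk.IsPath.transfer _ hQpath, ?_⟩
              rw [Walk.edges_transfer]
              intro hcon
              exact hnotT (q0.bypass.edges_subset_edgeSet hcon)
            have hnbe : ¬ G.IsBridge e :=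
              TadpoleAux.notbridge_of_mem_cycle hcyc
                (by rw [Walk.edges_cons, Walk.edges_transfer]
                    exact List.mem_cons_of_mem _ heQ)
            rw [if_pos heQ, if_neg hnbe]
            simp [hee, Ne.symm hee]
          · have hbr : G.IsBridge e :=
              TadpoleAux.bridge_outside hadj hTac q0.bypass heG hee heQ
            rw [if_neg heQ, if_pos heT, if_pos hbr]
            simp [hee, Ne.symm hee]
      have hWcost : walkCost c (Walk.cons hadj (M.transfer G hMe)) = 2 * S + Ccyc := by
        rw [TadpoleAux.walkCost_eq, ← hsum1]
        refine Finset.sum_congr rfl fun e he => ?_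
        rw [hWcnt e he]
        split_ifs <;> norm_num
      have hs : s ∈ (Walk.cons hadj (M.transfer G hMe)).support := hWspan s
      refine ⟨(Walk.cons hadj (M.transfer G hMe)).rotate s hs,
        fun v => TadpoleAux.mem_support_rotate _ hs (hWspan v), ?_⟩
      rw [← hWcost]
      show ((((Walk.cons hadj (M.transfer G hMe)).rotate s hs).edges).map c).sum = _
      exact (((Walk.cons hadj (M.transfer G hMe)).rotate_edges s hs).perm.map c).sum_eq
    · rw [min_eq_right hcase]
      obtain ⟨em, hmemm, hcm⟩ := hcmax.1
      obtain ⟨heme, hemnb⟩ := hmemm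
      obtain ⟨hconn2, hac2⟩ := treeOf em heme hemnb
      obtain ⟨M, hMs, hMc⟩ := TadpoleAux.tour
        ((TadpoleAux.CE (G \ SimpleGraph.fromEdgeSet {em}) s).ncard + 1) _ hac2 s s
        Walk.nil Walk.IsPath.nil (Nat.lt_succ_self _)
      have hMe : ∀ e ∈ M.edges, e ∈ G.edgeSet :=
        fun e he => edgeSet_mono sdiff_le (M.edges_subset_edgeSet he)
      refine ⟨M.transfer G hMe, ?_, ?_⟩
      · intro v
        rw [Walk.support_transfer]
        exact hMs v (hconn2.preconnected s v)
      · rw [TadpoleAux.walkCost_eq]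
        have hCE2 := TadpoleAux.CE_eq_edgeSet hconn2 s
        have hkey : ∑ e ∈ G.edgeFinset, ((M.transfer G hMe).edges.count e : ℝ) * c e
            = ∑ e ∈ G.edgeFinset, (if e = em then (0:ℝ) else 2) * c e := by
          refine Finset.sum_congr rfl fun e he => ?_
          rw [Walk.edges_transfer, hMc, hCE2]
          simp only [Walk.edges_nil, List.not_mem_nil, if_false]
          by_cases hee : e = em
          · subst hee
            rw [if_neg (fun hcon => by
                rw [TadpoleAux.del_edgeSet] at hcon; exact hcon.2 rfl), if_pos rfl]
            norm_num
          · rw [if_pos (by rw [TadpoleAux.del_edgeSet]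
                           exact ⟨mem_edgeFinset.mp he, hee⟩), if_neg hee]
            norm_num
        rw [hkey, hsum2 em (mem_edgeFinset.mpr heme), hcm]
        ring
  · -- lower bound
    rintro r ⟨w, hspan, rfl⟩
    rw [TadpoleAux.walkCost_eq c w]
    by_cases hall : ∀ f ∈ G.edgeFinset, ¬ G.IsBridge f → f ∈ w.edges
    · have hbound : ∑ e ∈ G.edgeFinset, (if G.IsBridge e then (2:ℝ) else 1) * c e
          ≤ ∑ e ∈ G.edgeFinset, (w.edges.count e : ℝ) * c e := by
        refine Finset.sum_le_sum fun e he => ?_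
        have hce : 0 < c e := hc e (mem_edgeFinset.mp he)
        refine mul_le_mul_of_nonneg_right ?_ hce.le
        split_ifs with hb
        · exact_mod_cast TadpoleAux.bridge_two w hspan hb
        · exact_mod_cast List.count_pos_iff.mpr (hall e he hb)
      rw [hsum1] at hbound
      linarith
    · push_neg at hall
      obtain ⟨f₀, hf₀mem, hf₀nb, hf₀notin⟩ := hall
      have hf₀e : f₀ ∈ G.edgeSet := mem_edgeFinset.mp hf₀mem
      obtain ⟨-, hac'⟩ := treeOf f₀ hf₀e hf₀nb
      have hwe : ∀ e ∈ w.edges, e ∈ (G \ SimpleGraph.fromEdgeSet {f₀}).edgeSet := by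
        intro e he
        rw [TadpoleAux.del_edgeSet]
        exact ⟨w.edges_subset_edgeSet he, fun hcEq => hf₀notin (hcEq ▸ he)⟩
      have hcnt2 : ∀ e ∈ G.edgeFinset, e ≠ f₀ → 2 ≤ w.edges.count e := by
        intro e he hne
        have hbr : (G \ SimpleGraph.fromEdgeSet {f₀}).IsBridge e :=
          isAcyclic_iff_forall_edge_isBridge.mp hac'
            (by rw [TadpoleAux.del_edgeSet]; exact ⟨mem_edgeFinset.mp he, hne⟩)
        have h2 := TadpoleAux.bridge_two (w.transfer _ hwe)
          (fun v => by rw [Walk.support_transfer]; exact hspan v) hbr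
        rwa [Walk.edges_transfer] at h2
      have hbound : ∑ e ∈ G.edgeFinset, (if e = f₀ then (0:ℝ) else 2) * c e
          ≤ ∑ e ∈ G.edgeFinset, (w.edges.count e : ℝ) * c e := by
        refine Finset.sum_le_sum fun e he => ?_
        have hce : 0 < c e := hc e (mem_edgeFinset.mp he)
        refine mul_le_mul_of_nonneg_right ?_ hce.le
        split_ifs with hb
        · positivity
        · exact_mod_cast hcnt2 e he hb
      rw [hsum2 f₀ hf₀mem] at hbound
      have hcf₀ : c f₀ ≤ cmax := hcmax.2 ⟨f₀, ⟨hf₀e, hf₀nb⟩, rfl⟩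
      linarith
end

section
/- Let T be a tadpole graph consisting of a cycle on i ≥ 3 vertices together with an attached path on j ≥ 1 further vertices (so T has i cycle edges and j stem edges), where every edge has weight 1. Then for every start vertex s, the minimum number of edge traversals of a closed walk from s to s that visits every vertex of T equals i + 2j. -/
open SimpleGraph Finset
set_option linter.unusedSectionVars false
set_option maxHeartbeats 1000000

namespace Tadpole

variable {V : Type*} [Fintype V] [DecidableEq V]

lemma length_eq_sum_count {H : SimpleGraph V} {u v : V} (w : H.Walk u v)
    {F : Finset (Sym2 V)} (hF : ∀ e ∈ w.edges, e ∈ F) :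
    w.length = ∑ e ∈ F, w.edges.count e := by
  classical
  have h0 := Multiset.toFinset_sum_count_eq (w.edges : Multiset (Sym2 V))
  simp only [List.toFinset_coe, Multiset.coe_count, Multiset.coe_card] at h0
  rw [← w.length_edges, ← h0]
  exact Finset.sum_subset (fun e he => hF e (List.mem_toFinset.mp he))
    (fun e _ he => List.count_eq_zero_of_not_mem (by simpa using he))

lemma reachable_del_of_avoid {H : SimpleGraph V} {e : Sym2 V} {p q : V}
    (t : H.Walk p q) (h : e ∉ t.edges) : (H \ SimpleGraph.fromEdgeSet {e}).Reachable p q := by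
  refine ⟨t.transfer _ fun f hf => ?_⟩
  simp only [edgeSet_sdiff, edgeSet_fromEdgeSet, edgeSet_sdiff_sdiff_isDiag, Set.mem_diff,
    Set.mem_singleton_iff]
  exact ⟨t.edges_subset_edgeSet hf, fun h' => h (h' ▸ hf)⟩

lemma crossing_parity {H : SimpleGraph V} {a b : V} (hb : H.IsBridge s(a, b)) :
    ∀ {u v : V} (w : H.Walk u v),
      (((H \ SimpleGraph.fromEdgeSet {s(a, b)}).Reachable a u ↔
        (H \ SimpleGraph.fromEdgeSet {s(a, b)}).Reachable a v))
        ↔ Even (w.edges.count s(a, b)) := by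
  classical
  intro u v w
  induction w with
  | nil => simp
  | @cons u u' v h w' ih =>
    have hnr : ¬ (H \ SimpleGraph.fromEdgeSet {s(a, b)}).Reachable a b :=
      (SimpleGraph.isBridge_iff.mp hb)
    rw [Walk.edges_cons, List.count_cons]
    by_cases hcase : s(u, u') = s(a, b)
    · have hab : (u = a ∧ u' = b) ∨ (u = b ∧ u' = a) := by
        rwa [Sym2.eq_iff] at hcase
      have hPu : (H \ SimpleGraph.fromEdgeSet {s(a, b)}).Reachable a u ↔
          ¬ (H \ SimpleGraph.fromEdgeSet {s(a, b)}).Reachable a u' := by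
        rcases hab with ⟨rfl, rfl⟩ | ⟨rfl, rfl⟩
        · exact iff_of_true Reachable.rfl hnr
        · exact iff_of_false hnr (not_not_intro Reachable.rfl)
      rw [if_pos (by simp [hcase]), Nat.even_add_one]
      tauto
    · have hadj : (H \ SimpleGraph.fromEdgeSet {s(a, b)}).Adj u u' := by
        simp only [SimpleGraph.sdiff_adj, SimpleGraph.fromEdgeSet_adj, Set.mem_singleton_iff]
        exact ⟨h, fun hx => hcase hx.1⟩
      have hPu : (H \ SimpleGraph.fromEdgeSet {s(a, b)}).Reachable a u ↔
          (H \ SimpleGraph.fromEdgeSet {s(a, b)}).Reachable a u' :=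
        ⟨fun h1 => h1.trans hadj.reachable, fun h1 => h1.trans hadj.symm.reachable⟩
      rw [if_neg (by simpa using hcase), add_zero]
      tauto

lemma bridge_count_two {H : SimpleGraph V} {a b u : V} (hb : H.IsBridge s(a, b))
    (w : H.Walk u u) (ha : a ∈ w.support) (hbs : b ∈ w.support) :
    2 ≤ w.edges.count s(a, b) := by
  classical
  have heven : Even (w.edges.count s(a, b)) := (crossing_parity hb w).mp Iff.rfl
  have hpos : w.edges.count s(a, b) ≠ 0 := by
    intro h0
    have hnot : s(a, b) ∉ w.edges := by
      intro hmem
      exact (List.count_pos_iff.mpr hmem).ne' h0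
    have h1 : (H \ SimpleGraph.fromEdgeSet {s(a, b)}).Reachable u a :=
      reachable_del_of_avoid (w.takeUntil a ha)
        (fun hmem => hnot (w.edges_takeUntil_subset ha hmem))
    have h2 : (H \ SimpleGraph.fromEdgeSet {s(a, b)}).Reachable u b :=
      reachable_del_of_avoid (w.takeUntil b hbs)
        (fun hmem => hnot (w.edges_takeUntil_subset hbs hmem))
    exact (SimpleGraph.isBridge_iff.mp hb) (h1.symm.trans h2)
  obtain ⟨k, hk⟩ := heven
  omega

lemma bridge_count_two' {H : SimpleGraph V} {e : Sym2 V} {u : V} (hb : H.IsBridge e)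
    (w : H.Walk u u) (hall : ∀ v : V, v ∈ w.support) : 2 ≤ w.edges.count e := by
  revert hb
  induction e using Sym2.ind with
  | _ a b => exact fun hb => bridge_count_two hb w (hall a) (hall b)

lemma connected_del_of_not_bridge {H : SimpleGraph V} (hH : H.Connected) {a b : V}
    (hab : H.Adj a b) (hnb : ¬H.IsBridge s(a, b)) :
    (H \ SimpleGraph.fromEdgeSet {s(a, b)}).Connected := by
  classical
  have hr : (H \ SimpleGraph.fromEdgeSet {s(a, b)}).Reachable a b := by
    by_contra hc
    exact hnb (SimpleGraph.isBridge_iff.mpr hc)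
  have key : ∀ {p q : V} (_ : H.Walk p q),
      (H \ SimpleGraph.fromEdgeSet {s(a, b)}).Reachable p q := by
    intro p q t
    induction t with
    | nil => exact Reachable.rfl
    | @cons p p' q h t' ih =>
      refine Reachable.trans ?_ ih
      by_cases hcase : s(p, p') = s(a, b)
      · rw [Sym2.eq_iff] at hcase
        rcases hcase with ⟨rfl, rfl⟩ | ⟨rfl, rfl⟩
        · exact hr
        · exact hr.symm
      · refine SimpleGraph.Adj.reachable ?_
        simp only [SimpleGraph.sdiff_adj, SimpleGraph.fromEdgeSet_adj, Set.mem_singleton_iff]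
        exact ⟨h, fun hx => hcase hx.1⟩
  haveI := hH.nonempty
  exact SimpleGraph.Connected.mk fun p q => key (hH.preconnected p q).some

lemma exists_nonbridge_of_cycle {H : SimpleGraph V} {v0 : V} {c : H.Walk v0 v0}
    (hc : c.IsCycle) : ∃ a b : V, H.Adj a b ∧ ¬H.IsBridge s(a, b) ∧ s(a, b) ∈ c.edges := by
  classical
  have hlen : 0 < c.length := by have := hc.three_le_length; omega
  have hne : c.edges ≠ [] := by
    intro h
    have := c.length_edges
    rw [h] at this
    simp at this
    omega
  obtain ⟨e, he⟩ := List.exists_mem_of_ne_nil _ hne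
  induction e with
  | h a b =>
    refine ⟨a, b, c.adj_of_mem_edges he, fun hbr => ?_, he⟩
    exact hbr.notMem_edges_of_isCycle hc he

lemma ncard_del_edge {H : SimpleGraph V} {a b : V} (hab : H.Adj a b) :
    (H \ SimpleGraph.fromEdgeSet {s(a, b)}).edgeSet.ncard + 1 = H.edgeSet.ncard := by
  classical
  have hE : (H \ SimpleGraph.fromEdgeSet {s(a, b)}).edgeSet = H.edgeSet \ {s(a, b)} := by
    simp [edgeSet_sdiff, edgeSet_fromEdgeSet, edgeSet_sdiff_sdiff_isDiag]
  rw [hE]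
  exact Set.ncard_diff_singleton_add_one (H.mem_edgeSet.mpr hab) (Set.toFinite _)

lemma card_le_ncard_edges : ∀ (m : ℕ) (H : SimpleGraph V), H.edgeSet.ncard ≤ m →
    H.Connected → Fintype.card V ≤ H.edgeSet.ncard + 1 := by
  intro m
  induction m with
  | zero =>
    intro H hm hconn
    by_cases hac : H.IsAcyclic
    · have ht : H.IsTree := ⟨hconn, hac⟩
      classical
      haveI : Fintype H.edgeSet := (Set.toFinite _).fintype
      have := ht.card_edgeFinset
      have hcard : H.edgeSet.ncard = H.edgeFinset.card := by
        rw [Set.ncard_eq_toFinset_card']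
        congr 1
      omega
    · exfalso
      rw [SimpleGraph.isAcyclic_iff_forall_edge_isBridge] at hac
      push_neg at hac
      obtain ⟨e, he, hnb⟩ := hac
      have : 1 ≤ H.edgeSet.ncard := by
        rw [Nat.one_le_iff_ne_zero, Ne, Set.ncard_eq_zero (Set.toFinite _)]
        intro h
        rw [h] at he
        exact he
      omega
  | succ m ih =>
    intro H hm hconn
    by_cases hac : H.IsAcyclic
    · have ht : H.IsTree := ⟨hconn, hac⟩
      classical
      haveI : Fintype H.edgeSet := (Set.toFinite _).fintype
      have := ht.card_edgeFinset
      have hcard : H.edgeSet.ncard = H.edgeFinset.card := by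
        rw [Set.ncard_eq_toFinset_card']
        congr 1
      omega
    · simp only [SimpleGraph.IsAcyclic] at hac
      push_neg at hac
      obtain ⟨v0, c, hc⟩ := hac
      obtain ⟨a, b, hab, hnb, -⟩ := exists_nonbridge_of_cycle hc
      have hconn' := connected_del_of_not_bridge hconn hab hnb
      have hcard' := ncard_del_edge hab
      have h1 := ih (H \ SimpleGraph.fromEdgeSet {s(a, b)}) (by omega) hconn'
      omega

lemma acyclic_of_connected_of_card {H : SimpleGraph V} (hconn : H.Connected)
    (hcard : H.edgeSet.ncard + 1 ≤ Fintype.card V) : H.IsAcyclic := by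
  by_contra hac
  simp only [SimpleGraph.IsAcyclic] at hac
  push_neg at hac
  obtain ⟨v0, c, hc⟩ := hac
  obtain ⟨a, b, hab, hnb, -⟩ := exists_nonbridge_of_cycle hc
  have hconn' := connected_del_of_not_bridge hconn hab hnb
  have hcard' := ncard_del_edge hab
  have h1 := card_le_ncard_edges _ (H \ SimpleGraph.fromEdgeSet {s(a, b)}) le_rfl hconn'
  omega

lemma cycle_two_neighbors {H : SimpleGraph V} {v : V} {c : H.Walk v v} (hc : c.IsCycle) :
    ∃ a b : V, a ≠ b ∧ s(v, a) ∈ c.edges ∧ s(v, b) ∈ c.edges := by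
  classical
  cases c with
  | nil => exact absurd hc (Walk.IsCycle.not_of_nil)
  | @cons _ a _ h q =>
    have hlen : 2 ≤ q.length := by
      have := hc.three_le_length
      simp only [Walk.length_cons] at this
      omega
    have henodup : (Walk.cons h q).edges.Nodup := hc.isTrail.edges_nodup
    rw [Walk.edges_cons, List.nodup_cons] at henodup
    cases hq : q.reverse with
    | nil =>
      exfalso
      have : q.length = 0 := by
        have := congrArg Walk.length hq
        simpa using this
      omega
    | @cons _ b _ h2 r =>
      have hb : s(v, b) ∈ q.edges := by
        have : s(v, b) ∈ q.reverse.edges := by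
          rw [hq, Walk.edges_cons]; exact List.mem_cons_self
        rwa [Walk.edges_reverse, List.mem_reverse] at this
      refine ⟨a, b, ?_, List.mem_cons_self, List.mem_cons_of_mem _ hb⟩
      rintro rfl
      exact henodup.1 hb

/-- Version for any vertex on the cycle, with adjacency and support membership. -/
lemma cycle_two_neighbors' {H : SimpleGraph V} {v0 v : V} {c : H.Walk v0 v0} (hc : c.IsCycle)
    (hv : v ∈ c.support) :
    ∃ a b : V, a ≠ b ∧ H.Adj v a ∧ H.Adj v b ∧ a ∈ c.support ∧ b ∈ c.support := by
  obtain ⟨a, b, hab, ha, hb⟩ := cycle_two_neighbors (hc.rotate hv)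
  have hac : s(v, a) ∈ c.edges := (c.rotate_edges _ hv).mem_iff.mp ha
  have hbc : s(v, b) ∈ c.edges := (c.rotate_edges _ hv).mem_iff.mp hb
  exact ⟨a, b, hab, c.adj_of_mem_edges hac, c.adj_of_mem_edges hbc,
    c.snd_mem_support_of_mem_edges hac, c.snd_mem_support_of_mem_edges hbc⟩

lemma cycle_closure {H : SimpleGraph V} [DecidableRel H.Adj] {v0 v : V} {c : H.Walk v0 v0}
    (hc : c.IsCycle) (hv : v ∈ c.support) (hdeg : H.degree v = 2) :
    ∀ u : V, H.Adj v u → u ∈ c.support := by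
  classical
  obtain ⟨a, b, hab, hadja, hadjb, has, hbs⟩ := cycle_two_neighbors' hc hv
  have hsub : {a, b} ⊆ H.neighborFinset v := by
    intro z hz
    rcases Finset.mem_insert.mp hz with rfl | hz
    · exact (H.mem_neighborFinset v z).mpr hadja
    · rw [Finset.mem_singleton.mp hz]
      exact (H.mem_neighborFinset v b).mpr hadjb
  have heq : H.neighborFinset v = {a, b} := by
    refine (Finset.eq_of_subset_of_card_le hsub ?_).symm
    rw [Finset.card_pair hab]
    exact le_of_eq hdeg
  intro u hu
  have : u ∈ ({a, b} : Finset V) := heq ▸ (H.mem_neighborFinset v u).mpr hu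
  rcases Finset.mem_insert.mp this with rfl | hz
  · exact has
  · rw [Finset.mem_singleton.mp hz]
    exact hbs

lemma path_two_neighbors {H : SimpleGraph V} {p q : V} {w : H.Walk p q} (hw : w.IsPath) :
    ∀ v ∈ w.support, v ≠ p → v ≠ q →
      ∃ a b : V, a ≠ b ∧ H.Adj v a ∧ H.Adj v b ∧ a ∈ w.support ∧ b ∈ w.support := by
  classical
  induction w with
  | nil => intro v hv hvp hvq; simp at hv; exact absurd hv hvp
  | @cons p p' q h w' ih =>
    intro v hv hvp hvq
    rw [Walk.support_cons, List.mem_cons] at hv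
    rcases hv with rfl | hv
    · exact absurd rfl hvp
    by_cases hvp' : v = p'
    · subst hvp'
      cases w' with
      | nil => exact absurd rfl hvq
      | @cons _ z _ h2 w'' =>
        refine ⟨p, z, ?_, h.symm, h2, by simp, by simp⟩
        intro hpz
        have hz : z ∈ (Walk.cons h2 w'').support := by
          rw [Walk.support_cons]
          exact List.mem_cons_of_mem _ (Walk.start_mem_support w'')
        exact ((Walk.cons_isPath_iff _ _).mp hw).2 (hpz ▸ hz)
    · obtain ⟨a, b, hab, ha, hb, has, hbs⟩ :=
        ih ((Walk.cons_isPath_iff _ _).mp hw).1 v hv hvp' hvq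
      exact ⟨a, b, hab, ha, hb, by simp [has], by simp [hbs]⟩

lemma mem_tail_of_closed {H : SimpleGraph V} {u : V} {w : H.Walk u u} (hw : ¬w.Nil) :
    ∀ v ∈ w.support, v ∈ w.support.tail := by
  cases w with
  | nil => simp at hw
  | cons h w' =>
    intro v hv
    rw [Walk.support_cons, List.mem_cons] at hv
    rw [Walk.support_cons, List.tail_cons]
    rcases hv with rfl | hv
    · exact w'.end_mem_support
    · exact hv

lemma length_rotate {H : SimpleGraph V} {u v : V} (w : H.Walk v v) (h : u ∈ w.support) :
    (w.rotate u h).length = w.length := by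
  have := congrArg Walk.length (w.take_spec h)
  rw [Walk.length_append] at this
  rw [Walk.rotate, Walk.length_append]
  omega

lemma closed_univ {H : SimpleGraph V} (hconn : H.Connected) {S : Set V} {u0 : V}
    (h0 : u0 ∈ S) (hcl : ∀ v ∈ S, ∀ u, H.Adj v u → u ∈ S) : ∀ v, v ∈ S := by
  have key : ∀ {p q : V} (_ : H.Walk p q), p ∈ S → q ∈ S := by
    intro p q w
    induction w with
    | nil => exact id
    | cons h w' ih => exact fun hp => ih (hcl _ hp _ h)
  intro v
  exact key (hconn.preconnected u0 v).some h0

lemma stem_path {G : SimpleGraph V} [DecidableRel G.Adj] {x y v0 : V}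
    (hdx : G.degree x = 1) (hdeg : ∀ v : V, v ≠ x → v ≠ y → G.degree v = 2)
    {c : G.Walk v0 v0} (hc : c.IsCycle)
    (hS2 : ∀ e ∈ G.edgeSet, ¬G.IsBridge e → e ∈ c.edges)
    (hxc : x ∉ c.support) (hyc : y ∈ c.support) :
    ∃ r : G.Walk y x, r.IsPath ∧ ∀ u ∈ r.support, u ≠ y → u ∉ c.support := by
  classical
  suffices key : ∀ (k : ℕ) (v : V) (q : G.Walk v x), q.IsPath →
      (∀ u ∈ q.support, u ∉ c.support) → Fintype.card V ≤ q.length + k →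
      ∃ r : G.Walk y x, r.IsPath ∧ ∀ u ∈ r.support, u ≠ y → u ∉ c.support by
    refine key (Fintype.card V) x Walk.nil Walk.IsPath.nil ?_ (by simp)
    intro u hu
    rw [Walk.support_nil, List.mem_singleton] at hu
    exact hu ▸ hxc
  intro k
  induction k with
  | zero =>
    intro v q hq hqc hcard
    exfalso
    have h1 : q.support.length ≤ Fintype.card V := hq.support_nodup.length_le_card
    have h2 : q.support.length = q.length + 1 := q.length_support
    omega
  | succ k ih =>
    intro v q hq hqc hcard
    have hvc : v ∉ c.support := hqc v q.start_mem_support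
    have hvy : v ≠ y := fun h => hvc (h ▸ hyc)
    cases q with
    | nil =>
      obtain ⟨u, humem⟩ : (G.neighborFinset x).Nonempty := by
        rw [← Finset.card_pos]
        have : (G.neighborFinset x).card = 1 := hdx
        omega
      have hu : G.Adj x u := (G.mem_neighborFinset x u).mp humem
      by_cases huc : u ∈ c.support
      · by_cases huy : u = y
        · subst huy
          refine ⟨Walk.cons hu.symm Walk.nil, ?_, ?_⟩
          · rw [Walk.cons_isPath_iff]
            refine ⟨Walk.IsPath.nil, ?_⟩
            rw [Walk.support_nil, List.mem_singleton]
            exact hu.ne'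
          · intro z hz hzy
            rw [Walk.support_cons, Walk.support_nil] at hz
            rcases List.mem_cons.mp hz with rfl | hz
            · exact absurd rfl hzy
            · rw [List.mem_singleton.mp hz]
              exact hxc
        · exfalso
          have hux : u ≠ x := fun h => hxc (h ▸ huc)
          have hdu : G.degree u = 2 := hdeg u hux huy
          exact hxc (cycle_closure hc huc hdu x hu.symm)
      · refine ih u (Walk.cons hu.symm Walk.nil) ?_ ?_ ?_
        · rw [Walk.cons_isPath_iff]
          refine ⟨Walk.IsPath.nil, ?_⟩
          rw [Walk.support_nil, List.mem_singleton]
          exact hu.ne'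
        · intro z hz
          rw [Walk.support_cons, Walk.support_nil] at hz
          rcases List.mem_cons.mp hz with rfl | hz
          · exact huc
          · rw [List.mem_singleton.mp hz]
            exact hxc
        · simp only [Walk.length_cons, Walk.length_nil] at *
          omega
    | @cons _ w _ hw q' =>
      have hpath' := (Walk.cons_isPath_iff _ _).mp hq
      have hvxne : v ≠ x := by
        intro h
        exact hpath'.2 (h ▸ q'.end_mem_support)
      have hdv : G.degree v = 2 := hdeg v hvxne hvy
      have hwmem : w ∈ G.neighborFinset v := (G.mem_neighborFinset v w).mpr hw
      obtain ⟨u, humem, huw⟩ : ∃ u ∈ G.neighborFinset v, u ≠ w := by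
        apply Finset.exists_mem_ne
        have : (G.neighborFinset v).card = 2 := hdv
        omega
      have hadj : G.Adj v u := (G.mem_neighborFinset v u).mp humem
      by_cases huc : u ∈ c.support
      · by_cases huy : u = y
        · subst huy
          refine ⟨Walk.cons hadj.symm (Walk.cons hw q'), ?_, ?_⟩
          · rw [Walk.cons_isPath_iff]
            exact ⟨hq, fun hmem => (hqc _ hmem) hyc⟩
          · intro z hz hzy
            rw [Walk.support_cons, List.mem_cons] at hz
            rcases hz with rfl | hz
            · exact absurd rfl hzy
            · exact hqc z hz
        · exfalso
          have hux : u ≠ x := fun h => hxc (h ▸ huc)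
          have hdu : G.degree u = 2 := hdeg u hux huy
          exact hvc (cycle_closure hc huc hdu v hadj.symm)
      · have husupp : u ∉ (Walk.cons hw q').support := by
          intro hu_in
          have hne_uv : u ≠ v := hadj.ne'
          have ht : ((Walk.cons hw q').takeUntil u hu_in).IsPath := hq.takeUntil hu_in
          have hsuv : s(u, v) ∉ ((Walk.cons hw q').takeUntil u hu_in).edges := by
            intro hmem
            have hmem' : s(u, v) ∈ (Walk.cons hw q').edges :=
              Walk.edges_takeUntil_subset _ hu_in hmem
            rw [Walk.edges_cons] at hmem'
            rcases List.mem_cons.mp hmem' with heq | hmem''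
            · rw [Sym2.eq_iff] at heq
              rcases heq with ⟨h1, h2⟩ | ⟨h1, h2⟩
              · exact hne_uv h1
              · exact huw h1
            · exact hpath'.2 (Walk.snd_mem_support_of_mem_edges q' hmem'')
          have hc2 : (Walk.cons hadj.symm ((Walk.cons hw q').takeUntil u hu_in)).IsCycle := by
            rw [Walk.cons_isCycle_iff]
            exact ⟨ht, hsuv⟩
          have hedge : s(u, v) ∈ (Walk.cons hadj.symm
              ((Walk.cons hw q').takeUntil u hu_in)).edges := by
            rw [Walk.edges_cons]
            exact List.mem_cons_self
          have hnb : ¬ G.IsBridge s(u, v) := fun hbr =>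
            hbr.notMem_edges_of_isCycle hc2 hedge
          have hmc : s(u, v) ∈ c.edges := hS2 _ (G.mem_edgeSet.mpr hadj.symm) hnb
          exact hvc (c.snd_mem_support_of_mem_edges hmc)
        refine ih u (Walk.cons hadj.symm (Walk.cons hw q')) ?_ ?_ ?_
        · rw [Walk.cons_isPath_iff]
          exact ⟨hq, husupp⟩
        · intro z hz
          rw [Walk.support_cons, List.mem_cons] at hz
          rcases hz with rfl | hz
          · exact huc
          · exact hqc z hz
        · simp only [Walk.length_cons] at *
          omega

lemma lower_tree {G : SimpleGraph V} (hconn : G.Connected) {a b s : V} (hab : G.Adj a b)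
    (hnb : ¬G.IsBridge s(a, b)) (hn : G.edgeSet.ncard = Fintype.card V)
    (w : G.Walk s s) (hall : ∀ v : V, v ∈ w.support) (he0 : s(a, b) ∉ w.edges) :
    2 * (Fintype.card V - 1) ≤ w.length := by
  classical
  have hconn' := connected_del_of_not_bridge hconn hab hnb
  have hnc := ncard_del_edge hab
  have hacy : (G \ SimpleGraph.fromEdgeSet {s(a, b)}).IsAcyclic :=
    acyclic_of_connected_of_card hconn' (by omega)
  have hbr : ∀ e ∈ (G \ SimpleGraph.fromEdgeSet {s(a, b)}).edgeSet,
      (G \ SimpleGraph.fromEdgeSet {s(a, b)}).IsBridge e :=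
    fun e he => (isAcyclic_iff_forall_edge_isBridge.mp hacy) he
  have hsub : ∀ e ∈ w.edges, e ∈ (G \ SimpleGraph.fromEdgeSet {s(a, b)}).edgeSet := by
    intro f hf
    simp only [edgeSet_sdiff, edgeSet_fromEdgeSet, edgeSet_sdiff_sdiff_isDiag, Set.mem_diff,
      Set.mem_singleton_iff]
    exact ⟨w.edges_subset_edgeSet hf, fun h' => he0 (h' ▸ hf)⟩
  set w' := w.transfer (G \ SimpleGraph.fromEdgeSet {s(a, b)}) hsub with hw'
  haveI : Fintype (G \ SimpleGraph.fromEdgeSet {s(a, b)}).edgeSet := (Set.toFinite _).fintype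
  have hlen' : w'.length = ∑ e ∈ (G \ SimpleGraph.fromEdgeSet {s(a, b)}).edgeSet.toFinset,
      w'.edges.count e :=
    length_eq_sum_count w' (fun e he => Set.mem_toFinset.mpr (w'.edges_subset_edgeSet he))
  have hcard : (G \ SimpleGraph.fromEdgeSet {s(a, b)}).edgeSet.toFinset.card =
      Fintype.card V - 1 := by
    rw [← Set.ncard_eq_toFinset_card']
    omega
  have hsupp' : ∀ v : V, v ∈ w'.support := by
    intro v
    rw [hw', Walk.support_transfer]
    exact hall v
  have hbound : ∀ e ∈ (G \ SimpleGraph.fromEdgeSet {s(a, b)}).edgeSet.toFinset,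
      2 ≤ w'.edges.count e := by
    intro e he
    exact bridge_count_two' (hbr e (Set.mem_toFinset.mp he)) w' hsupp'
  have hsum := Finset.card_nsmul_le_sum
    (G \ SimpleGraph.fromEdgeSet {s(a, b)}).edgeSet.toFinset
    (fun e => w'.edges.count e) 2 hbound
  rw [smul_eq_mul] at hsum
  have hlt : w'.length = w.length := Walk.length_transfer w hsub
  omega

end Tadpole

/-- For a tadpole graph with `i ≥ 3` cycle edges (the non-bridges) and `j ≥ 1`
stem edges (the bridges), all of unit weight, the minimum number of edge
traversals of a closed spanning walk from any start vertex `s` equals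
`i + 2 * j`. -/
theorem stmt_14 {V : Type*} [Fintype V] [DecidableEq V] (G : SimpleGraph V)
    [DecidableRel G.Adj] (htad : IsTadpole G)
    (i j : ℕ) (hi : 3 ≤ i) (hj : 1 ≤ j)
    (hcyc : {e ∈ G.edgeSet | ¬ G.IsBridge e}.ncard = i)
    (hstem : {e ∈ G.edgeSet | G.IsBridge e}.ncard = j)
    (s : V) :
    IsLeast {n : ℕ | ∃ w : G.Walk s s, (∀ v : V, v ∈ w.support) ∧ w.length = n}
      (i + 2 * j) := by
  obtain ⟨hconn, x, y, hxy, hdx, hdy, hdeg⟩ := htad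
  open Tadpole in
  classical
  -- basic counting
  have hn2 : 2 ≤ Fintype.card V := Fintype.one_lt_card_iff_nontrivial.mpr ⟨x, y, hxy⟩
  have hhs := G.sum_degrees_eq_twice_card_edges
  have hsplit : ∑ v ∈ (univ : Finset V) \ {x, y}, G.degree v
      + ∑ v ∈ ({x, y} : Finset V), G.degree v = ∑ v ∈ univ, G.degree v :=
    Finset.sum_sdiff (Finset.subset_univ _)
  have hpair : ∑ v ∈ ({x, y} : Finset V), G.degree v = 4 := by
    rw [Finset.sum_pair hxy, hdx, hdy]
  have hrest : ∑ v ∈ (univ : Finset V) \ {x, y}, G.degree v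
      = (Fintype.card V - 2) * 2 := by
    rw [Finset.sum_congr rfl (fun v hv => ?_), Finset.sum_const, smul_eq_mul,
      Finset.card_sdiff_of_subset (Finset.subset_univ _), Finset.card_pair hxy, Finset.card_univ]
    have hv' : v ≠ x ∧ v ≠ y := by
      simpa using (Finset.mem_sdiff.mp hv).2
    exact hdeg v hv'.1 hv'.2
  have hEcard : G.edgeFinset.card = Fintype.card V := by omega
  have hEncard : G.edgeSet.ncard = Fintype.card V := by
    rw [Set.ncard_eq_toFinset_card']
    exact hEcard
  -- i + j = n
  have hij : i + j = Fintype.card V := by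
    have hdisj : Disjoint {e ∈ G.edgeSet | ¬ G.IsBridge e} {e ∈ G.edgeSet | G.IsBridge e} := by
      rw [Set.disjoint_left]
      rintro e ⟨-, h1⟩ ⟨-, h2⟩
      exact h1 h2
    have hun : {e ∈ G.edgeSet | ¬ G.IsBridge e} ∪ {e ∈ G.edgeSet | G.IsBridge e}
        = G.edgeSet := by
      ext e
      by_cases hbe : G.IsBridge e <;> simp [hbe]
    have := Set.ncard_union_eq hdisj (Set.toFinite _) (Set.toFinite _)
    rw [hun, hcyc, hstem] at this
    omega
  -- find a cycle
  have hnotac : ¬ G.IsAcyclic := by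
    intro h
    have ht : G.IsTree := ⟨hconn, h⟩
    have := ht.card_edgeFinset
    omega
  obtain ⟨v0, c, hc⟩ : ∃ (v0 : V) (c : G.Walk v0 v0), c.IsCycle := by
    simp only [SimpleGraph.IsAcyclic] at hnotac
    push_neg at hnotac
    exact hnotac
  -- every non-bridge edge lies on c
  have hS2 : ∀ e ∈ G.edgeSet, ¬G.IsBridge e → e ∈ c.edges := by
    intro e he hnb
    by_contra hnot
    revert he hnb hnot
    induction e using Sym2.ind with
    | _ a b =>
      intro he hnb hnot
      have hab : G.Adj a b := G.mem_edgeSet.mp he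
      have hconn' := connected_del_of_not_bridge hconn hab hnb
      have hnc := ncard_del_edge hab
      have hacy : (G \ SimpleGraph.fromEdgeSet {s(a, b)}).IsAcyclic :=
        acyclic_of_connected_of_card hconn' (by omega)
      have hsub : ∀ f ∈ c.edges, f ∈ (G \ SimpleGraph.fromEdgeSet {s(a, b)}).edgeSet := by
        intro f hf
        simp only [edgeSet_sdiff, edgeSet_fromEdgeSet, edgeSet_sdiff_sdiff_isDiag, Set.mem_diff,
          Set.mem_singleton_iff]
        exact ⟨c.edges_subset_edgeSet hf, fun h' => hnot (h' ▸ hf)⟩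
      exact hacy _ (hc.transfer hsub)
  -- x not on c
  have hxc : x ∉ c.support := by
    intro hx
    obtain ⟨a, b, hab, ha, hb, -, -⟩ := cycle_two_neighbors' hc hx
    have hsub : {a, b} ⊆ G.neighborFinset x := by
      intro z hz
      rcases Finset.mem_insert.mp hz with rfl | hz
      · exact (G.mem_neighborFinset x z).mpr ha
      · rw [Finset.mem_singleton.mp hz]
        exact (G.mem_neighborFinset x b).mpr hb
    have h2 : ({a, b} : Finset V).card ≤ G.degree x := by
      rw [← SimpleGraph.card_neighborFinset_eq_degree]
      exact Finset.card_le_card hsub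
    rw [Finset.card_pair hab, hdx] at h2
    omega
  -- y on c
  have hyc : y ∈ c.support := by
    by_contra hyn
    have hcl : ∀ v ∈ {v : V | v ∈ c.support}, ∀ u, G.Adj v u → u ∈ {v : V | v ∈ c.support} := by
      intro v hv u hadj
      have hvx : v ≠ x := fun h => hxc (h ▸ hv)
      have hvy : v ≠ y := fun h => hyn (h ▸ hv)
      exact cycle_closure hc hv (hdeg v hvx hvy) u hadj
    exact hxc (closed_univ hconn (c.start_mem_support : v0 ∈ {v : V | v ∈ c.support}) hcl x)
  -- the length of c is i
  have hceq : {e | e ∈ c.edges} = {e ∈ G.edgeSet | ¬ G.IsBridge e} := by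
    ext e
    constructor
    · intro he
      refine ⟨c.edges_subset_edgeSet he, fun hbr => ?_⟩
      exact hbr.notMem_edges_of_isCycle hc he
    · rintro ⟨he, hnb⟩
      exact hS2 e he hnb
  have hclen : c.length = i := by
    have h1 : {e | e ∈ c.edges} = (↑c.edges.toFinset : Set (Sym2 V)) := by
      ext e; simp
    have h2 : {e | e ∈ c.edges}.ncard = c.edges.toFinset.card := by
      rw [h1, Set.ncard_coe_finset]
    rw [hceq, hcyc] at h2
    have h3 : c.edges.toFinset.card = c.edges.length :=
      List.toFinset_card_of_nodup hc.isTrail.edges_nodup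
    rw [← c.length_edges]
    omega
  -- the stem path
  obtain ⟨r, hr, hrc⟩ := stem_path hdx hdeg hc hS2 hxc hyc
  have hyx : y ≠ x := fun h => hxc (h ▸ hyc)
  have hrnil : ¬ r.Nil := by
    intro h
    exact hyx (Walk.Nil.eq h)
  -- coverage
  have hcover : ∀ v : V, v ∈ c.support ∨ v ∈ r.support := by
    have hcl : ∀ v ∈ {v : V | v ∈ c.support ∨ v ∈ r.support}, ∀ u, G.Adj v u →
        u ∈ {v : V | v ∈ c.support ∨ v ∈ r.support} := by
      intro v hv u hadj
      by_cases hvc : v ∈ c.support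
      · by_cases hvy : v = y
        · rw [hvy] at hadj
          obtain ⟨a, b, hab, ha, hb, has, hbs⟩ := cycle_two_neighbors' hc hyc
          set z := r.getVert 1 with hz
          have hadjz : G.Adj y z := r.adj_snd hrnil
          have hzmem : z ∈ r.support := by
            rw [Walk.mem_support_iff_exists_getVert]
            refine ⟨1, rfl, ?_⟩
            rw [Walk.nil_iff_length_eq] at hrnil
            omega
          have hznc : z ∉ c.support := hrc z hzmem hadjz.ne'
          have hsub : {a, b, z} ⊆ G.neighborFinset y := by
            intro t ht
            rcases Finset.mem_insert.mp ht with rfl | ht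
            · exact (G.mem_neighborFinset y t).mpr ha
            rcases Finset.mem_insert.mp ht with rfl | ht
            · exact (G.mem_neighborFinset y t).mpr hb
            rw [Finset.mem_singleton.mp ht]
            exact (G.mem_neighborFinset y z).mpr hadjz
          have hcard3 : ({a, b, z} : Finset V).card = 3 := by
            rw [Finset.card_insert_of_notMem, Finset.card_insert_of_notMem,
              Finset.card_singleton]
            · simp only [Finset.mem_singleton]
              exact fun h => hznc (h ▸ hbs)
            · simp only [Finset.mem_insert, Finset.mem_singleton]
              rintro (rfl | h)
              · exact hab rfl
              · exact hznc (h ▸ has)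
          have heq : G.neighborFinset y = {a, b, z} := by
            refine (Finset.eq_of_subset_of_card_le hsub ?_).symm
            rw [hcard3, ← hdy, ← SimpleGraph.card_neighborFinset_eq_degree]
          have : u ∈ ({a, b, z} : Finset V) := heq ▸ (G.mem_neighborFinset y u).mpr hadj
          rcases Finset.mem_insert.mp this with rfl | hv2
          · exact Or.inl has
          rcases Finset.mem_insert.mp hv2 with rfl | hv2
          · exact Or.inl hbs
          rw [Finset.mem_singleton.mp hv2]
          exact Or.inr hzmem
        · have hvx : v ≠ x := fun h => hxc (h ▸ hvc)
          exact Or.inl (cycle_closure hc hvc (hdeg v hvx hvy) u hadj)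
      · have hvr : v ∈ r.support := hv.resolve_left hvc
        have hvy : v ≠ y := fun h => hvc (h ▸ hyc)
        by_cases hvx : v = x
        · rw [hvx] at hadj
          set z2 := r.reverse.getVert 1 with hz2
          have hrvnil : ¬ r.reverse.Nil := by
            rw [Walk.nil_iff_length_eq, Walk.length_reverse]
            rw [Walk.nil_iff_length_eq] at hrnil
            exact hrnil
          have hadjz2 : G.Adj x z2 := r.reverse.adj_snd hrvnil
          have hz2mem : z2 ∈ r.support := by
            have : z2 ∈ r.reverse.support := by
              rw [Walk.mem_support_iff_exists_getVert]
              refine ⟨1, rfl, ?_⟩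
              rw [Walk.nil_iff_length_eq] at hrvnil
              omega
            rwa [Walk.support_reverse, List.mem_reverse] at this
          have hsub : {z2} ⊆ G.neighborFinset x := by
            intro t ht
            rw [Finset.mem_singleton.mp ht]
            exact (G.mem_neighborFinset x z2).mpr hadjz2
          have heq : G.neighborFinset x = {z2} := by
            refine (Finset.eq_of_subset_of_card_le hsub ?_).symm
            rw [Finset.card_singleton, ← hdx, ← SimpleGraph.card_neighborFinset_eq_degree]
          have : u ∈ ({z2} : Finset V) := heq ▸ (G.mem_neighborFinset x u).mpr hadj
          rw [Finset.mem_singleton.mp this]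
          exact Or.inr hz2mem
        · obtain ⟨a, b, hab, ha, hb, has, hbs⟩ :=
            path_two_neighbors hr v hvr hvy hvx
          have hsub : {a, b} ⊆ G.neighborFinset v := by
            intro t ht
            rcases Finset.mem_insert.mp ht with rfl | ht
            · exact (G.mem_neighborFinset v t).mpr ha
            rw [Finset.mem_singleton.mp ht]
            exact (G.mem_neighborFinset v b).mpr hb
          have heq : G.neighborFinset v = {a, b} := by
            refine (Finset.eq_of_subset_of_card_le hsub ?_).symm
            rw [Finset.card_pair hab, ← hdeg v hvx hvy,
              ← SimpleGraph.card_neighborFinset_eq_degree]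
          have : u ∈ ({a, b} : Finset V) := heq ▸ (G.mem_neighborFinset v u).mpr hadj
          rcases Finset.mem_insert.mp this with rfl | hv2
          · exact Or.inr has
          rw [Finset.mem_singleton.mp hv2]
          exact Or.inr hbs
    exact closed_univ hconn (Or.inl (c.start_mem_support) :
      v0 ∈ {v : V | v ∈ c.support ∨ v ∈ r.support}) hcl
  -- r has length j
  have hrlen : r.length = j := by
    have hScCard : c.support.toFinset.card = i := by
      have htl : c.support.toFinset = c.support.tail.toFinset := by
        ext z
        simp only [List.mem_toFinset]
        exact ⟨fun h => mem_tail_of_closed hc.not_nil z h, fun h => List.mem_of_mem_tail h⟩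
      rw [htl, List.toFinset_card_of_nodup hc.support_nodup]
      have h1 : c.support.length = c.length + 1 := c.length_support
      have h2 : c.support.tail.length = c.support.length - 1 := by
        rw [List.length_tail]
      omega
    have hSrCard : r.support.toFinset.card = r.length + 1 := by
      rw [List.toFinset_card_of_nodup hr.support_nodup, r.length_support]
    have hint : c.support.toFinset ∩ r.support.toFinset = {y} := by
      ext z
      simp only [Finset.mem_inter, List.mem_toFinset, Finset.mem_singleton]
      constructor
      · rintro ⟨h1, h2⟩
        by_contra hzy
        exact hrc z h2 hzy h1
      · rintro rfl
        exact ⟨hyc, r.start_mem_support⟩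
    have huni : c.support.toFinset ∪ r.support.toFinset = Finset.univ := by
      ext z
      simp only [Finset.mem_union, List.mem_toFinset, Finset.mem_univ, iff_true]
      exact hcover z
    have := Finset.card_union_add_card_inter c.support.toFinset r.support.toFinset
    rw [hint, huni, Finset.card_univ, Finset.card_singleton, hScCard, hSrCard] at this
    omega
  -- the closed spanning walk
  set W : G.Walk y y := (c.rotate _ hyc).append (r.append r.reverse) with hW
  have hWlen : W.length = i + 2 * j := by
    rw [hW, Walk.length_append, Walk.length_append, Walk.length_reverse,
      length_rotate c hyc, hclen, hrlen]
    omega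
  have hWsupp : ∀ v : V, v ∈ W.support := by
    intro v
    rw [hW, Walk.mem_support_append_iff]
    rcases hcover v with hvc | hvr
    · left
      have h1 : v ∈ c.support.tail := mem_tail_of_closed hc.not_nil v hvc
      have h2 : v ∈ (c.rotate _ hyc).support.tail := ((c.support_rotate _ hyc).mem_iff).mpr h1
      exact List.mem_of_mem_tail h2
    · right
      rw [Walk.mem_support_append_iff]
      exact Or.inl hvr
  have hsW : s ∈ W.support := hWsupp s
  have hWnil : ¬ W.Nil := by
    rw [Walk.nil_iff_length_eq, hWlen]
    omega
  have hmem : i + 2 * j ∈ {n : ℕ | ∃ w : G.Walk s s, (∀ v : V, v ∈ w.support) ∧ w.length = n} := by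
    refine ⟨W.rotate _ hsW, ?_, ?_⟩
    · intro v
      have h1 : v ∈ W.support.tail := mem_tail_of_closed hWnil v (hWsupp v)
      have h2 : v ∈ (W.rotate _ hsW).support.tail := ((W.support_rotate _ hsW).mem_iff).mpr h1
      exact List.mem_of_mem_tail h2
    · rw [length_rotate W hsW, hWlen]
  refine ⟨hmem, ?_⟩
  -- lower bound
  rintro m ⟨w, hall, rfl⟩
  by_cases hcaseA : ∀ e ∈ G.edgeFinset, ¬G.IsBridge e → e ∈ w.edges
  · -- all cycle edges used at least once, all bridges at least twice
    have hlen : w.length = ∑ e ∈ G.edgeFinset, w.edges.count e :=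
      length_eq_sum_count w (fun e he => mem_edgeFinset.mpr (w.edges_subset_edgeSet he))
    have hsplit2 := Finset.sum_filter_add_sum_filter_not G.edgeFinset
      (fun e => G.IsBridge e) (fun e => w.edges.count e)
    have hBcard : (G.edgeFinset.filter (fun e => G.IsBridge e)).card = j := by
      rw [← hstem]
      have : ((G.edgeFinset.filter (fun e => G.IsBridge e)) : Set (Sym2 V))
          = {e ∈ G.edgeSet | G.IsBridge e} := by
        ext e
        simp [Set.mem_setOf_eq, mem_edgeFinset]
      rw [← this, Set.ncard_coe_finset]
    have hCcard : (G.edgeFinset.filter (fun e => ¬G.IsBridge e)).card = i := by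
      rw [← hcyc]
      have : ((G.edgeFinset.filter (fun e => ¬G.IsBridge e)) : Set (Sym2 V))
          = {e ∈ G.edgeSet | ¬G.IsBridge e} := by
        ext e
        simp [Set.mem_setOf_eq, mem_edgeFinset]
      rw [← this, Set.ncard_coe_finset]
    have hBsum : 2 * j ≤ ∑ e ∈ G.edgeFinset.filter (fun e => G.IsBridge e),
        w.edges.count e := by
      have h1 := Finset.card_nsmul_le_sum (G.edgeFinset.filter (fun e => G.IsBridge e))
        (fun e => w.edges.count e) 2 (fun e he => by
          have hbr : G.IsBridge e := (Finset.mem_filter.mp he).2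
          exact bridge_count_two' hbr w hall)
      rw [smul_eq_mul, hBcard] at h1
      omega
    have hCsum : i ≤ ∑ e ∈ G.edgeFinset.filter (fun e => ¬G.IsBridge e),
        w.edges.count e := by
      have h1 := Finset.card_nsmul_le_sum (G.edgeFinset.filter (fun e => ¬G.IsBridge e))
        (fun e => w.edges.count e) 1 (fun e he => by
          have hm := Finset.mem_filter.mp he
          have : e ∈ w.edges := hcaseA e hm.1 hm.2
          exact List.count_pos_iff.mpr this)
      rw [smul_eq_mul, hCcard] at h1
      omega
    omega
  · push_neg at hcaseA
    obtain ⟨e0, he0mem, he0nb, he0no⟩ := hcaseA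
    have h2n : 2 * (Fintype.card V - 1) ≤ w.length := by
      revert he0mem he0nb he0no
      induction e0 using Sym2.ind with
      | _ a b =>
        intro he0mem he0nb he0no
        exact lower_tree hconn (G.mem_edgeSet.mp (mem_edgeFinset.mp he0mem)) he0nb
          hEncard w hall he0no
    omega
end
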